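/- arXiv:1204.5448 — 13 statements merged into one kernel-verified Lean document; each statement's English description precedes it below -/
import Mathlib

section
/- Let m and n be coprime positive integers and let Γ_{m,n} = {um + vn : u, v ∈ ℤ≥0} ⊆ ℤ. Then for every integer a, a ∈ Γ_{m,n} if and only if mn − m − n − a ∉ Γ_{m,n}. -/
/-- The numerical semigroup generated by `m` and `n`, viewed as a subset of `ℤ`. -/
def Gamma (m n : ℕ) : Set ℤ := {x : ℤ | ∃ u v : ℕ, x = u * m + v * n}

lemma mem_gamma_iff (m n : ℕ) (a : ℤ) :
    a ∈ Gamma m n ↔ ∃ u v : ℤ, 0 ≤ u ∧ 0 ≤ v ∧ a = u * m + v * n := by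
  constructor
  · rintro ⟨u, v, rfl⟩
    exact ⟨u, v, by positivity, by positivity, by push_cast; ring⟩
  · rintro ⟨u, v, hu, hv, rfl⟩
    exact ⟨u.toNat, v.toNat, by
      rw [Int.toNat_of_nonneg hu, Int.toNat_of_nonneg hv]⟩

/-- Every integer has a representation `u*m + v*n` with `0 ≤ u < n`. -/
lemma exists_rep (m n : ℕ) (hn : 0 < n) (hmn : Nat.Coprime m n) (a : ℤ) :
    ∃ u v : ℤ, 0 ≤ u ∧ u < n ∧ a = u * m + v * n := by
  obtain ⟨x, y, h⟩ : ∃ x y : ℤ, x * m + y * n = 1 := by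
    refine ⟨Nat.gcdA m n, Nat.gcdB m n, ?_⟩
    have := Nat.gcd_eq_gcd_ab m n
    have h1 : Nat.gcd m n = 1 := hmn
    rw [h1] at this
    push_cast at this
    linarith
  have hn' : (0 : ℤ) < n := by exact_mod_cast hn
  refine ⟨(a * x) % n, a * y + ((a * x) / n) * m, Int.emod_nonneg _ (by positivity),
    Int.emod_lt_of_pos _ hn', ?_⟩
  have hdiv : (a * x) % n + n * ((a * x) / n) = a * x := Int.emod_add_mul_ediv _ _
  have : a * (x * m + y * n) = a * 1 := by rw [h]
  nlinarith [this]

/-- With a normalized representation, membership is equivalent to `0 ≤ v`. -/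
lemma mem_iff_rep (m n : ℕ) (hn : 0 < n) (hmn : Nat.Coprime m n)
    (a u v : ℤ) (hu0 : 0 ≤ u) (hun : u < n) (ha : a = u * m + v * n) :
    a ∈ Gamma m n ↔ 0 ≤ v := by
  constructor
  · intro hmem
    obtain ⟨u', v', hu', hv', ha'⟩ := (mem_gamma_iff m n a).mp hmem
    have hn' : (0 : ℤ) < n := by exact_mod_cast hn
    have heq : (u - u') * m = (v' - v) * n := by
      have : u * m + v * n = u' * m + v' * n := by rw [← ha, ← ha']
      ring_nf
      ring_nf at this
      linarith
    have hcop : IsCoprime (n : ℤ) (m : ℤ) :=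
      Int.isCoprime_iff_gcd_eq_one.mpr (by simpa [Nat.gcd_comm] using hmn)
    have hdvd : (n : ℤ) ∣ (u - u') * m := ⟨v' - v, by linarith [heq]⟩
    have hdvd' : (n : ℤ) ∣ (u - u') := hcop.dvd_of_dvd_mul_right hdvd
    obtain ⟨k, hk⟩ := hdvd'
    have hk0 : k ≤ 0 := by nlinarith
    have hv : v' - v = k * m := by
      have hm0 : (0 : ℤ) ≤ m := by positivity
      have : (n * k) * m = (v' - v) * n := by rw [← hk]; exact heq
      have := mul_left_cancel₀ (ne_of_gt hn') (show (n:ℤ) * (k * m) = n * (v' - v) by linarith)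
      linarith
    have hm0 : (0 : ℤ) ≤ m := by positivity
    nlinarith
  · intro hv
    exact (mem_gamma_iff m n a).mpr ⟨u, v, hu0, hv, ha⟩

/-- **Symmetry of the plane curve semigroup.** For coprime positive `m, n` and any
integer `a`, `a ∈ Γ_{m,n}` iff `mn - m - n - a ∉ Γ_{m,n}`. -/
theorem gamma_symmetry (m n : ℕ) (hm : 0 < m) (hn : 0 < n) (hmn : Nat.Coprime m n)
    (a : ℤ) :
    a ∈ Gamma m n ↔ ((m : ℤ) * n - m - n - a) ∉ Gamma m n := by
  obtain ⟨u, v, hu0, hun, ha⟩ := exists_rep m n hn hmn a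
  have h1 : a ∈ Gamma m n ↔ 0 ≤ v := mem_iff_rep m n hn hmn a u v hu0 hun ha
  have h2 : ((m : ℤ) * n - m - n - a) ∈ Gamma m n ↔ 0 ≤ -1 - v := by
    refine mem_iff_rep m n hn hmn _ ((n : ℤ) - 1 - u) (-1 - v) (by omega) (by omega) ?_
    rw [ha]; ring
  rw [h1, h2]
  omega
end

section
/- Let Δ be a 0-normalized Γ_{m,n}-semimodule. Then {φ ∈ ℤ : φ + d ∈ Γ_{m,n} for every d ∈ Δ} = {(mn − m − n) − y : y ∈ ℤ, y ∉ Δ}. -/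
/-- A 0-normalized `Γ_{m,n}`-semimodule: a subset of `ℤ≥0` containing `0` and
closed under adding `m` and `n`. -/
def IsSemimodule (m n : ℕ) (Δ : Set ℤ) : Prop :=
  (∀ x ∈ Δ, 0 ≤ x) ∧ (0 : ℤ) ∈ Δ ∧ (∀ x ∈ Δ, x + m ∈ Δ) ∧ (∀ x ∈ Δ, x + n ∈ Δ)

lemma mem_gamma_iff_s1 (m n : ℕ) (hm : 0 < m) (hn : 0 < n) (hmn : Nat.Coprime m n)
    (a b : ℤ) (ha0 : 0 ≤ a) (ha : a < n) :
    a * m + b * n ∈ Gamma m n ↔ 0 ≤ b := by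
  have hn0 : (0:ℤ) < n := by exact_mod_cast hn
  constructor
  · rintro ⟨u, v, huv⟩
    set q : ℤ := (u : ℤ) / n with hqdef
    set r : ℤ := (u : ℤ) % n with hrdef
    have hq : (u:ℤ) = n * q + r := (Int.mul_ediv_add_emod _ _).symm
    have hr0 : 0 ≤ r := Int.emod_nonneg _ (by positivity)
    have hrn : r < n := Int.emod_lt_of_pos _ hn0
    have hqn : 0 ≤ q := Int.ediv_nonneg (Int.natCast_nonneg u) (by positivity)
    have heq : a * m + b * n = r * m + (q * m + v) * n := by
      rw [huv]; linear_combination (m:ℤ) * hq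
    -- uniqueness of a
    have hcop : IsCoprime (n:ℤ) (m:ℤ) := by
      exact_mod_cast (Nat.isCoprime_iff_coprime.mpr hmn.symm)
    have hdvd : (n:ℤ) ∣ (a - r) * m := ⟨(q * m + v) - b, by linarith [heq, mul_comm a (m:ℤ)]; ⟩
    have hdvd' : (n:ℤ) ∣ (a - r) := hcop.dvd_of_dvd_mul_right hdvd
    have har : a = r := by
      obtain ⟨k, hk⟩ := hdvd'
      have hk0 : k = 0 := by nlinarith
      rw [hk0, mul_zero] at hk
      omega
    have hb : b = q * m + v := by
      have : b * n = (q * m + v) * n := by rw [har] at heq; linarith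
      exact mul_right_cancel₀ (by positivity) this
    have : (0:ℤ) ≤ q * m + v := by positivity
    omega
  · intro hb
    exact ⟨a.toNat, b.toNat, by
      rw [Int.toNat_of_nonneg ha0, Int.toNat_of_nonneg hb]⟩

lemma gamma_symm (m n : ℕ) (hm : 0 < m) (hn : 0 < n) (hmn : Nat.Coprime m n) (x : ℤ) :
    x ∈ Gamma m n ↔ ((m:ℤ) * n - m - n - x) ∉ Gamma m n := by
  have hn0 : (0:ℤ) < n := by exact_mod_cast hn
  have hcop : IsCoprime (m:ℤ) (n:ℤ) := by
    exact_mod_cast (Nat.isCoprime_iff_coprime.mpr hmn)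
  obtain ⟨s, t, hst⟩ := hcop
  set a : ℤ := (x * s) % n with hadef
  set q : ℤ := (x * s) / n with hqdef
  have hq : x * s = n * q + a := (Int.mul_ediv_add_emod _ _).symm
  have ha0 : 0 ≤ a := Int.emod_nonneg _ (by positivity)
  have han : a < n := Int.emod_lt_of_pos _ hn0
  set b : ℤ := q * m + x * t with hbdef
  have hx : x = a * m + b * n := by
    have : x * (s * m + t * n) = x * 1 := by rw [hst]
    linear_combination (m:ℤ) * hq - this
  have h1 : x ∈ Gamma m n ↔ 0 ≤ b := by
    rw [hx]; exact mem_gamma_iff_s1 m n hm hn hmn a b ha0 han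
  have hFx : (m:ℤ) * n - m - n - x = (n - 1 - a) * m + (-1 - b) * n := by
    rw [hx]; ring
  have h2 : ((m:ℤ) * n - m - n - x) ∈ Gamma m n ↔ 0 ≤ -1 - b := by
    rw [hFx]; exact mem_gamma_iff_s1 m n hm hn hmn _ _ (by omega) (by omega)
  rw [h1, h2]; omega

lemma semimodule_closed (m n : ℕ) (Δ : Set ℤ) (hΔ : IsSemimodule m n Δ)
    (d : ℤ) (hd : d ∈ Δ) (u v : ℕ) : d + ((u:ℤ) * m + v * n) ∈ Δ := by
  obtain ⟨-, -, hΔm, hΔn⟩ := hΔ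
  induction u with
  | zero =>
    induction v with
    | zero => simpa using hd
    | succ w ih =>
      have := hΔn _ ih
      convert this using 1
      push_cast; ring
  | succ w ih =>
    have := hΔm _ ih
    convert this using 1
    push_cast; ring

/-- **Characterization of the dual semimodule.** For a 0-normalized `Γ_{m,n}`-semimodule
`Δ`, `{φ : φ + Δ ⊆ Γ} = (mn - m - n) - (ℤ ∖ Δ)`. -/
theorem dual_semimodule_eq (m n : ℕ) (hm : 0 < m) (hn : 0 < n) (hmn : Nat.Coprime m n)
    (Δ : Set ℤ) (hΔ : IsSemimodule m n Δ) :
    {φ : ℤ | ∀ d ∈ Δ, φ + d ∈ Gamma m n} =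
      {z : ℤ | ∃ y : ℤ, y ∉ Δ ∧ z = ((m : ℤ) * n - m - n) - y} := by
  have hF : ((m:ℤ) * n - m - n) ∉ Gamma m n := by
    have h0 : (0:ℤ) ∈ Gamma m n := ⟨0, 0, by simp⟩
    have := (gamma_symm m n hm hn hmn 0).mp h0
    simpa using this
  ext φ
  simp only [Set.mem_setOf_eq]
  constructor
  · intro h
    refine ⟨((m:ℤ) * n - m - n) - φ, ?_, by ring⟩
    intro hmem
    have := h _ hmem
    rw [show φ + (((m:ℤ) * n - m - n) - φ) = (m:ℤ) * n - m - n by ring] at this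
    exact hF this
  · rintro ⟨y, hy, rfl⟩
    intro d hd
    rw [gamma_symm m n hm hn hmn]
    intro hmem
    obtain ⟨u, v, huv⟩ := hmem
    apply hy
    have := semimodule_closed m n Δ hΔ d hd u v
    have hyd : y = d + ((u:ℤ) * m + v * n) := by linarith [huv]
    rwa [← hyd] at this
end

section
/- Let Δ be a 0-normalized Γ_{m,n}-semimodule, M(Δ) = max(ℤ∖Δ), and Δ̂ = {M(Δ) − y : y ∈ ℤ, y ∉ Δ}. Then Δ̂ is again a 0-normalized Γ_{m,n}-semimodule (i.e. Δ̂ ⊆ ℤ≥0, 0 ∈ Δ̂, Δ̂ + m ⊆ Δ̂, Δ̂ + n ⊆ Δ̂), and the operation is an involution: (Δ̂)̂ = Δ. -/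
/-- The dual (hatted) semimodule `Δ̂ = M - (ℤ ∖ Δ)`, where `M = max(ℤ ∖ Δ)`. -/
def hatSet (Δ : Set ℤ) (M : ℤ) : Set ℤ := {z : ℤ | ∃ y : ℤ, y ∉ Δ ∧ z = M - y}

/-- **The hat operation is a well-defined involution.** If `Δ` is a 0-normalized
`Γ_{m,n}`-semimodule and `M = max(ℤ ∖ Δ)`, then `Δ̂ = M - (ℤ ∖ Δ)` is again a
0-normalized `Γ_{m,n}`-semimodule, and applying the operation twice returns `Δ`. -/
theorem hat_involution (m n : ℕ) (hm : 0 < m) (hn : 0 < n) (hmn : Nat.Coprime m n)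
    (Δ : Set ℤ) (hΔ : IsSemimodule m n Δ) (M : ℤ) (hM : IsGreatest Δᶜ M) :
    IsSemimodule m n (hatSet Δ M) ∧
      ∀ M' : ℤ, IsGreatest (hatSet Δ M)ᶜ M' → hatSet (hatSet Δ M) M' = Δ := by
  obtain ⟨hpos, h0, haddm, haddn⟩ := hΔ
  obtain ⟨hMc, hMub⟩ := hM
  have key : ∀ z : ℤ, z ∈ hatSet Δ M ↔ M - z ∉ Δ := by
    intro z
    constructor
    · rintro ⟨y, hy, rfl⟩
      simpa using hy
    · intro h
      exact ⟨M - z, h, by ring⟩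
  constructor
  · refine ⟨?_, ⟨M, hMc, by ring⟩, ?_, ?_⟩
    · rintro x ⟨y, hy, rfl⟩
      have := hMub hy
      linarith
    · rintro x ⟨y, hy, rfl⟩
      refine ⟨y - m, fun hc => hy ?_, by ring⟩
      simpa using haddm _ hc
    · rintro x ⟨y, hy, rfl⟩
      refine ⟨y - n, fun hc => hy ?_, by ring⟩
      simpa using haddn _ hc
  · intro M' hM'
    have hMgr : IsGreatest (hatSet Δ M)ᶜ M := by
      constructor
      · intro h
        exact (key M).mp h (by simpa using h0)
      · intro z hz
        have hz' : M - z ∈ Δ := by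
          by_contra hc
          exact hz ((key z).mpr hc)
        have := hpos _ hz'
        linarith
    have hMM : M' = M := hM'.unique hMgr
    rw [hMM]
    ext x
    constructor
    · rintro ⟨y, hy, rfl⟩
      have : M - y ∈ Δ := by
        by_contra hc
        exact hy ((key y).mpr hc)
      exact this
    · intro hx
      exact ⟨M - x, fun h => (key _).mp h (by simpa using hx), by ring⟩
end

section
/- Let Δ be a 0-normalized Γ_{m,n}-semimodule and let a be an n-generator of Δ (a ∈ Δ and a − n ∉ Δ). Then #([a, a+m) ∖ Δ) equals the number of m-cogenerators of Δ that are greater than a, i.e. #{b ∈ ℤ : b ∉ Δ, b + m ∈ Δ, b > a}. -/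
/-- For an `n`-generator `a` of a 0-normalized `Γ_{m,n}`-semimodule `Δ`, the number of
gaps of `Δ` in `[a, a+m)` equals the number of `m`-cogenerators of `Δ` greater than `a`. -/
theorem gap_count_eq_cogenerators_gt (m n : ℕ) (hm : 0 < m) (hn : 0 < n)
    (hmn : Nat.Coprime m n) (Δ : Set ℤ) (hΔ : IsSemimodule m n Δ)
    (a : ℤ) (ha : a ∈ Δ) (ha' : a - n ∉ Δ) :
    ({y : ℤ | a ≤ y ∧ y < a + m} \ Δ).ncard =
      {b : ℤ | b ∉ Δ ∧ b + m ∈ Δ ∧ a < b}.ncard := by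
  classical
  obtain ⟨hpos, h0, hM, hN⟩ := hΔ
  have hmz : (0:ℤ) < m := by exact_mod_cast hm
  -- closure under adding natural multiples of m
  have hstepM : ∀ (K : ℕ) (x : ℤ), x ∈ Δ → x + K * m ∈ Δ := by
    intro K
    induction K with
    | zero => intro x hx; simpa using hx
    | succ K ih =>
      intro x hx
      have h1 := hM _ (ih x hx)
      have h2 : x + (K:ℤ) * m + m = x + ((K+1 : ℕ) : ℤ) * m := by push_cast; ring
      rwa [h2] at h1
  have hstepN : ∀ (K : ℕ) (x : ℤ), x ∈ Δ → x + K * n ∈ Δ := by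
    intro K
    induction K with
    | zero => intro x hx; simpa using hx
    | succ K ih =>
      intro x hx
      have h1 := hN _ (ih x hx)
      have h2 : x + (K:ℤ) * n + n = x + ((K+1 : ℕ) : ℤ) * n := by push_cast; ring
      rwa [h2] at h1
  have hclose : ∀ x ∈ Δ, ∀ z : ℤ, x ≤ z → (m:ℤ) ∣ z - x → z ∈ Δ := by
    intro x hx z hxz hdvd
    obtain ⟨k, hk⟩ := hdvd
    have hk0 : 0 ≤ k := by nlinarith
    have hz : z = x + (k.toNat : ℤ) * m := by
      rw [Int.toNat_of_nonneg hk0]; linarith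
    rw [hz]; exact hstepM _ _ hx
  set S := {b : ℤ | b ∉ Δ ∧ b + m ∈ Δ ∧ a < b} with hS
  set G := {y : ℤ | a ≤ y ∧ y < a + m} \ Δ with hG
  set g : ℤ → ℤ := fun b => a + (b - a) % m with hg
  have himg : g '' S = G := by
    ext y
    constructor
    · rintro ⟨b, ⟨hbΔ, hbm, hab⟩, rfl⟩
      have hr0 : 0 ≤ (b - a) % m := Int.emod_nonneg _ (ne_of_gt hmz)
      have hrm : (b - a) % m < m := Int.emod_lt_of_pos _ hmz
      have hgb : g b = a + (b - a) % m := rfl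
      refine ⟨⟨by rw [hgb]; linarith, by rw [hgb]; linarith⟩, ?_⟩
      rw [hgb]
      intro hmem
      -- then b ∈ Δ, contradiction
      have hq0 : 0 ≤ (b - a) / m := Int.ediv_nonneg (by linarith) (le_of_lt hmz)
      have hdef : b - (a + (b - a) % m) = m * ((b - a) / m) := by
        have := Int.emod_def (b - a) m
        linarith
      have hle : a + (b - a) % m ≤ b := by nlinarith
      exact hbΔ (hclose _ hmem b hle ⟨_, hdef⟩)
    · rintro ⟨⟨hay, hym⟩, hyΔ⟩
      obtain ⟨u, v, huv⟩ := (Nat.isCoprime_iff_coprime.mpr hmn)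
      set j0 : ℤ := (y - a) * v with hj0
      set j : ℕ := (j0 % m).toNat with hj
      have hji : (j : ℤ) = j0 % m := Int.toNat_of_nonneg (Int.emod_nonneg _ (ne_of_gt hmz))
      have hdvd : a + (j : ℤ) * n - y = m * (-(y - a) * u - (j0 / m) * n) := by
        rw [hji, Int.emod_def, hj0]
        linear_combination (y - a) * huv
      have hzin : a + (j : ℤ) * n ∈ Δ := hstepN j a ha
      set q : ℤ := -(y - a) * u - (j0 / m) * n with hq
      -- a + j*n = y + m*q
      have hzy : a + (j : ℤ) * n = y + m * q := by linarith [hdvd]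
      set L : ℕ := (1 - q).toNat with hL
      have hL1 : 1 - q ≤ (L : ℤ) := Int.self_le_toNat _
      have hzL : y + (q + L) * m ∈ Δ := by
        have := hstepM L _ hzin
        have heq : a + (j:ℤ) * n + (L:ℤ) * m = y + (q + L) * m := by rw [hzy]; ring
        rwa [heq] at this
      have hPex : ∃ k : ℕ, y + ((k:ℤ) + 1) * m ∈ Δ := by
        refine ⟨(q + L - 1).toNat, ?_⟩
        have h1 : (0:ℤ) ≤ q + L - 1 := by linarith
        have h2 : ((q + L - 1).toNat : ℤ) = q + L - 1 := Int.toNat_of_nonneg h1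
        rw [h2]
        have : q + L - 1 + 1 = q + L := by ring
        rw [this]
        exact hzL
      set k0 := Nat.find hPex with hk0
      set b : ℤ := y + (k0 : ℤ) * m with hb
      have hbm : b + m ∈ Δ := by
        have := Nat.find_spec hPex
        have heq : y + ((k0:ℤ) + 1) * m = b + m := by rw [hb]; ring
        rwa [heq] at this
      have hbΔ : b ∉ Δ := by
        rcases Nat.eq_zero_or_pos k0 with h | h
        · rw [hb, h]; simpa using hyΔ
        · obtain ⟨k, hk⟩ := Nat.exists_eq_succ_of_ne_zero (Nat.pos_iff_ne_zero.mp h)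
          have hmin := Nat.find_min hPex (by rw [← hk0, hk]; exact Nat.lt_succ_self k)
          intro hcon
          apply hmin
          have heq : y + ((k:ℤ) + 1) * m = b := by rw [hb, hk]; push_cast; ring
          rwa [heq]
      have hyb : y ≤ b := by
        have : (0:ℤ) ≤ (k0:ℤ) * m := by positivity
        linarith [hb]
      have hab : a < b := by
        rcases lt_or_eq_of_le (le_trans hay hyb) with h | h
        · exact h
        · exact absurd (h ▸ ha) hbΔ
      refine ⟨b, ⟨hbΔ, hbm, hab⟩, ?_⟩
      -- g b = y
      show a + (b - a) % m = y
      have h1 : b - a = (y - a) + m * k0 := by rw [hb]; ring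
      have h2 : (b - a) % m = (y - a) % m := by
        rw [h1, Int.add_mul_emod_self_left]
      rw [h2, Int.emod_eq_of_lt (by linarith) (by linarith)]
      ring
  have hinj : Set.InjOn g S := by
    rintro b ⟨hbΔ, hbm, hab⟩ b' ⟨hbΔ', hbm', hab'⟩ heq
    have hmod : (b - a) % m = (b' - a) % m := by
      have : a + (b - a) % m = a + (b' - a) % m := heq
      linarith
    have hdvd : (m:ℤ) ∣ b' - b := by
      have e1 := Int.emod_def (b - a) m
      have e2 := Int.emod_def (b' - a) m
      refine ⟨(b' - a) / m - (b - a) / m, ?_⟩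
      have : b - a - m * ((b - a)/m) = b' - a - m * ((b' - a)/m) := by
        rw [← e1, ← e2, hmod]
      linarith
    rcases lt_trichotomy b b' with h | h | h
    · exfalso
      have hge : (m:ℤ) ≤ b' - b := Int.le_of_dvd (by linarith) hdvd
      have hd2 : (m:ℤ) ∣ b' - (b + m) := by
        obtain ⟨c, hc⟩ := hdvd; exact ⟨c - 1, by linarith⟩
      exact hbΔ' (hclose _ hbm b' (by linarith) hd2)
    · exact h
    · exfalso
      have hdvd' : (m:ℤ) ∣ b - b' := by
        obtain ⟨c, hc⟩ := hdvd; exact ⟨-c, by linarith⟩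
      have hge : (m:ℤ) ≤ b - b' := Int.le_of_dvd (by linarith) hdvd'
      have hd2 : (m:ℤ) ∣ b - (b' + m) := by
        obtain ⟨c, hc⟩ := hdvd; exact ⟨-c - 1, by linarith⟩
      exact hbΔ (hclose _ hbm' b (by linarith) hd2)
  calc G.ncard = (g '' S).ncard := by rw [himg]
    _ = S.ncard := Set.ncard_image_of_injOn hinj
end

section
/- Let Δ be a 0-normalized Γ_{m,n}-semimodule, M = max(ℤ∖Δ), and Δ̂ = {M − y : y ∈ ℤ, y ∉ Δ}. Then: (i) for every n-generator a of Δ, #([a, a+m) ∖ Δ) = #{b : b is an m-generator of Δ̂ and a + b < M}; and (ii) for every m-generator b of Δ̂, #([b, b+n) ∖ Δ̂) = #{a : a is an n-generator of Δ and a + b < M}. (These two identities express that the Young diagram G_n(Δ), whose columns are the numbers #([a, a+m) ∖ Δ) over n-generators a of Δ, is the transpose of the Young diagram G_m(Δ̂), whose columns are the numbers #([b, b+n) ∖ Δ̂) over m-generators b of Δ̂.) -/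
lemma mem_hat {Δ : Set ℤ} {M b : ℤ} : b ∈ hatSet Δ M ↔ M - b ∉ Δ := by
  constructor
  · rintro ⟨y, hy, rfl⟩
    simpa using hy
  · intro h
    exact ⟨M - b, h, by ring⟩

lemma step_mul {S : Set ℤ} {d : ℤ} (hS : ∀ x ∈ S, x + d ∈ S) (k : ℕ) :
    ∀ x ∈ S, x + d * k ∈ S := by
  induction k with
  | zero => simpa using fun x hx => hx
  | succ k ih =>
      intro x hx
      have h2 := hS _ (ih x hx)
      have e : x + d * (k : ℤ) + d = x + d * ((k : ℕ) + 1 : ℕ) := by push_cast; ring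
      rwa [e] at h2

lemma key {S : Set ℤ} {d : ℤ} (hd : 0 < d) (hS : ∀ x ∈ S, x + d ∈ S)
    {M : ℤ} (hM : IsGreatest Sᶜ M) {a : ℤ} (ha : a ∈ S) :
    ({y : ℤ | a ≤ y ∧ y < a + d} \ S).ncard
      = {t : ℤ | (t ∉ S ∧ t + d ∈ S) ∧ a < t}.ncard := by
  set R := {t : ℤ | (t ∉ S ∧ t + d ∈ S) ∧ a < t} with hR
  set g : ℤ → ℤ := fun t => a + (t - a) % d with hg
  -- helper: two distinct congruent elements of R give a contradiction
  have hsingle : ∀ t ∈ R, ∀ t' ∈ R, t < t' → d ∣ t' - t → False := by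
    rintro t ⟨⟨-, htd⟩, -⟩ t' ⟨⟨ht', -⟩, -⟩ hlt ⟨c, hc⟩
    have hc1 : 1 ≤ c := by nlinarith
    have hnat : ((c - 1).toNat : ℤ) = c - 1 := Int.toNat_of_nonneg (by linarith)
    have hmem := step_mul hS (c - 1).toNat _ htd
    have e : t + d + d * ((c - 1).toNat : ℤ) = t' := by rw [hnat]; linarith
    rw [e] at hmem
    exact ht' hmem
  have hinj : Set.InjOn g R := by
    intro t ht t' ht' hgt
    have hdvd : d ∣ t' - t := by
      have h1 : (t - a) % d = (t' - a) % d := by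
        have := hgt
        simp only [hg] at this
        linarith
      have h2 : t - a ≡ t' - a [ZMOD d] := h1
      have h3 : t ≡ t' [ZMOD d] := by
        have := Int.ModEq.add_right a h2
        simpa using this
      exact h3.dvd
    rcases lt_trichotomy t t' with h | h | h
    · exact absurd (hsingle t ht t' ht' h hdvd) (by simp)
    · exact h
    · exact absurd (hsingle t' ht' t ht h (by
        obtain ⟨c, hc⟩ := hdvd
        exact ⟨-c, by linarith⟩)) (by simp)
  have himg : {y : ℤ | a ≤ y ∧ y < a + d} \ S = g '' R := by
    apply Set.Subset.antisymm
    · -- surjectivity part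
      rintro y ⟨⟨hay, hyd⟩, hyS⟩
      have hay' : a < y := lt_of_le_of_ne hay (fun h => hyS (h ▸ ha))
      obtain ⟨t, ⟨htS, ⟨c, hc⟩, hyt⟩, htmax⟩ :=
        Int.exists_greatest_of_bdd (P := fun x => x ∉ S ∧ d ∣ x - y ∧ y ≤ x)
          ⟨M, fun z hz => hM.2 hz.1⟩ ⟨y, hyS, ⟨0, by ring⟩, le_refl y⟩
      have htd : t + d ∈ S := by
        by_contra h
        have := htmax (t + d) ⟨h, ⟨c + 1, by linarith⟩, by linarith⟩
        linarith
      have htR : t ∈ R := ⟨⟨htS, htd⟩, by linarith⟩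
      refine ⟨t, htR, ?_⟩
      have e1 : t - a = (y - a) + d * c := by linarith
      have e2 : (t - a) % d = (y - a) % d := by
        rw [e1, Int.add_mul_emod_self_left]
      have e3 : (y - a) % d = y - a :=
        Int.emod_eq_of_lt (by linarith) (by linarith)
      simp only [hg, e2, e3]
      ring
    · rintro _ ⟨t, ⟨⟨htS, htd⟩, hat⟩, rfl⟩
      have h0 : 0 ≤ (t - a) % d := Int.emod_nonneg _ (ne_of_gt hd)
      have h1 : (t - a) % d < d := Int.emod_lt_of_pos _ hd
      refine ⟨⟨by simp [hg]; linarith, by simp [hg]; linarith⟩, ?_⟩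
      -- g t ∉ S
      intro hmem
      have hq : d * ((t - a) / d) + (t - a) % d = t - a := Int.mul_ediv_add_emod _ _
      have hq0 : 0 ≤ (t - a) / d := Int.ediv_nonneg (by linarith) hd.le
      have hnat : (((t - a) / d).toNat : ℤ) = (t - a) / d := Int.toNat_of_nonneg hq0
      have hmem2 := step_mul hS ((t - a) / d).toNat _ hmem
      have e : g t + d * (((t - a) / d).toNat : ℤ) = t := by
        rw [hnat]; simp only [hg]; linarith
      rw [e] at hmem2
      exact htS hmem2
  rw [himg, Set.ncard_image_of_injOn hinj]

/-- **`G_n(Δ)` is the transpose of `G_m(Δ̂)`.**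
(i) For every `n`-generator `a` of `Δ`, the number of gaps of `Δ` in `[a, a+m)` equals
the number of `m`-generators `b` of `Δ̂` with `a + b < M`; (ii) for every `m`-generator
`b` of `Δ̂`, the number of gaps of `Δ̂` in `[b, b+n)` equals the number of
`n`-generators `a` of `Δ` with `a + b < M`. -/
theorem Gn_transpose_Gm_hat (m n : ℕ) (hm : 0 < m) (hn : 0 < n)
    (hmn : Nat.Coprime m n) (Δ : Set ℤ) (hΔ : IsSemimodule m n Δ)
    (M : ℤ) (hM : IsGreatest Δᶜ M) :
    (∀ a : ℤ, a ∈ Δ → a - n ∉ Δ →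
      ({y : ℤ | a ≤ y ∧ y < a + m} \ Δ).ncard =
        {b : ℤ | (b ∈ hatSet Δ M ∧ b - m ∉ hatSet Δ M) ∧ a + b < M}.ncard) ∧
    (∀ b : ℤ, b ∈ hatSet Δ M → b - m ∉ hatSet Δ M →
      ({y : ℤ | b ≤ y ∧ y < b + n} \ hatSet Δ M).ncard =
        {a : ℤ | (a ∈ Δ ∧ a - n ∉ Δ) ∧ a + b < M}.ncard) := by
  obtain ⟨hpos, h0, hmc, hnc⟩ := hΔ
  have hmZ : (0 : ℤ) < m := by exact_mod_cast hm
  have hnZ : (0 : ℤ) < n := by exact_mod_cast hn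
  have hsubinj : Function.Injective (fun t : ℤ => M - t) := by
    intro x y h
    simp only at h
    linarith
  -- the hat set is closed under adding n
  have hhat_n : ∀ x ∈ hatSet Δ M, x + (n : ℤ) ∈ hatSet Δ M := by
    intro x hx
    rw [mem_hat] at hx ⊢
    intro hmem
    apply hx
    have := hnc _ hmem
    have e : M - (x + n) + n = M - x := by ring
    rwa [e] at this
  have hMhat : IsGreatest (hatSet Δ M)ᶜ M := by
    constructor
    · intro h
      rw [mem_hat] at h
      exact h (by simpa using h0)
    · intro z hz
      rw [Set.mem_compl_iff, mem_hat, not_not] at hz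
      have := hpos _ hz
      linarith
  constructor
  · intro a haΔ _
    rw [key hmZ hmc hM haΔ]
    have himg : {b : ℤ | (b ∈ hatSet Δ M ∧ b - m ∉ hatSet Δ M) ∧ a + b < M}
        = (fun t : ℤ => M - t) '' {t : ℤ | (t ∉ Δ ∧ t + m ∈ Δ) ∧ a < t} := by
      ext b
      simp only [Set.mem_setOf_eq, Set.mem_image]
      constructor
      · rintro ⟨⟨h1, h2⟩, h3⟩
        rw [mem_hat] at h1
        have h2' : M - b + m ∈ Δ := by
          by_contra hc
          apply h2
          rw [mem_hat]
          intro hc2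
          apply hc
          have e : M - b + m = M - (b - m) := by ring
          rwa [e]
        exact ⟨M - b, ⟨⟨h1, h2'⟩, by linarith⟩, by ring⟩
      · rintro ⟨t, ⟨⟨h1, h2⟩, h3⟩, rfl⟩
        refine ⟨⟨?_, ?_⟩, by linarith⟩
        · rw [mem_hat]
          have e : M - (M - t) = t := by ring
          rwa [e]
        · rw [mem_hat, not_not]
          have e : M - (M - t - m) = t + m := by ring
          rwa [e]
    rw [himg, Set.ncard_image_of_injective _ hsubinj]
  · intro b hb _
    rw [key hnZ hhat_n hMhat hb]
    have himg : {a : ℤ | (a ∈ Δ ∧ a - n ∉ Δ) ∧ a + b < M}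
        = (fun t : ℤ => M - t) ''
            {t : ℤ | (t ∉ hatSet Δ M ∧ t + n ∈ hatSet Δ M) ∧ b < t} := by
      ext a
      simp only [Set.mem_setOf_eq, Set.mem_image]
      constructor
      · rintro ⟨⟨h1, h2⟩, h3⟩
        refine ⟨M - a, ⟨⟨?_, ?_⟩, by linarith⟩, by ring⟩
        · rw [mem_hat, not_not]
          have e : M - (M - a) = a := by ring
          rwa [e]
        · rw [mem_hat]
          intro hc
          apply h2
          have e : M - (M - a + n) = a - n := by ring
          rwa [e] at hc
      · rintro ⟨t, ⟨⟨h1, h2⟩, h3⟩, rfl⟩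
        rw [mem_hat, not_not] at h1
        rw [mem_hat] at h2
        refine ⟨⟨h1, ?_⟩, by linarith⟩
        intro hc
        apply h2
        have e : M - (t + n) = M - t - n := by ring
        rwa [e]
    rw [himg, Set.ncard_image_of_injective _ hsubinj]
end

section
/- Let n be a positive integer, m = n + 1, and let Δ be a 0-normalized Γ_{n,n+1}-semimodule. Then the multiset { #([a, a+n) ∖ Δ) : a an (n+1)-generator of Δ } equals the multiset { #([b, b+n+1) ∖ Δ) : b an n-generator of Δ } together with one additional copy of 0. (Equivalently, the diagrams G_{n+1}(Δ) and G_n(Δ) coincide.) -/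
/-- The number of gaps of `Δ` in the interval `[x, x + d)`. -/
noncomputable def gapCount (d : ℕ) (Δ : Set ℤ) (x : ℤ) : ℕ :=
  ({y : ℤ | x ≤ y ∧ y < x + d} \ Δ).ncard

lemma gapCount_add_one (n : ℕ) (Δ : Set ℤ) (hncl : ∀ x ∈ Δ, x + (n:ℤ) ∈ Δ)
    {x : ℤ} (hx : x ∈ Δ) : gapCount n Δ (x + 1) = gapCount n Δ x := by
  unfold gapCount
  congr 1
  ext y
  simp only [Set.mem_diff, Set.mem_setOf_eq]
  constructor
  · rintro ⟨⟨h1, h2⟩, h3⟩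
    have hyn : y ≠ x + n := by rintro rfl; exact h3 (hncl x hx)
    exact ⟨⟨by omega, by omega⟩, h3⟩
  · rintro ⟨⟨h1, h2⟩, h3⟩
    have hyx : y ≠ x := by rintro rfl; exact h3 hx
    exact ⟨⟨by omega, by omega⟩, h3⟩

lemma gapCount_run (n : ℕ) (Δ : Set ℤ) (hncl : ∀ x ∈ Δ, x + (n:ℤ) ∈ Δ)
    {a e : ℤ} (hae : a ≤ e) (hrun : ∀ y, a ≤ y → y ≤ e → y ∈ Δ) :
    gapCount n Δ e = gapCount n Δ a := by
  have H : ∀ e, a ≤ e → (∀ y, a ≤ y → y ≤ e → y ∈ Δ) →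
      gapCount n Δ e = gapCount n Δ a := by
    refine Int.le_induction ?_ ?_
    · intro _; rfl
    · intro k hk ih hrun
      have hkΔ : k ∈ Δ := hrun k hk (by omega)
      rw [gapCount_add_one n Δ hncl hkΔ]
      exact ih fun y hy hy' => hrun y hy (by omega)
  exact H e hae hrun

lemma gapCount_succ_eq (n : ℕ) (Δ : Set ℤ) (hncl : ∀ x ∈ Δ, x + (n:ℤ) ∈ Δ)
    {b : ℤ} (hb : b ∈ Δ) : gapCount (n + 1) Δ b = gapCount n Δ b := by
  unfold gapCount
  congr 1
  ext y
  simp only [Set.mem_diff, Set.mem_setOf_eq]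
  push_cast
  constructor
  · rintro ⟨⟨h1, h2⟩, h3⟩
    have hyn : y ≠ b + n := by rintro rfl; exact h3 (hncl b hb)
    exact ⟨⟨h1, by omega⟩, h3⟩
  · rintro ⟨⟨h1, h2⟩, h3⟩
    exact ⟨⟨h1, by omega⟩, h3⟩

lemma mem_conductor (n : ℕ) (Δ : Set ℤ) (hn : 0 < n) (h0 : (0:ℤ) ∈ Δ)
    (hm' : ∀ x ∈ Δ, x + ((n:ℤ) + 1) ∈ Δ) (hncl : ∀ x ∈ Δ, x + (n:ℤ) ∈ Δ) :
    ∀ x : ℤ, (n:ℤ) * (n + 1) ≤ x → x ∈ Δ := by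
  have key : ∀ u v : ℕ, ((u : ℤ) * ((n:ℤ) + 1) + (v:ℤ) * n) ∈ Δ := by
    intro u
    induction u with
    | zero =>
        intro v
        induction v with
        | zero => simpa using h0
        | succ w ihw =>
            have := hncl _ ihw
            convert this using 1
            push_cast; ring
    | succ t iht =>
        intro v
        have := hm' _ (iht v)
        convert this using 1
        push_cast; ring
  intro x hx
  have hn' : (0:ℤ) < n := by exact_mod_cast hn
  set r : ℤ := x % n with hr
  have h0r : 0 ≤ r := Int.emod_nonneg x (by omega)
  have hrn : r < n := Int.emod_lt_of_pos x hn'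
  have hdm := Int.mul_ediv_add_emod x n
  have hdvd : (n:ℤ) ∣ (x - r * (n + 1)) := ⟨x / n - r, by linear_combination -hdm⟩
  have hd0 : 0 ≤ x - r * (n + 1) := by nlinarith [hrn, h0r, hx]
  obtain ⟨q, hq⟩ := hdvd
  have hq0 : 0 ≤ q := by nlinarith
  have hxe : x = ((r.toNat : ℤ)) * ((n:ℤ) + 1) + ((q.toNat : ℤ)) * n := by
    rw [Int.toNat_of_nonneg h0r, Int.toNat_of_nonneg hq0]
    linear_combination hq
  rw [hxe]
  exact key r.toNat q.toNat

open Classical in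
noncomputable def runEnd (Δ : Set ℤ) (a : ℤ) : ℤ :=
  if h : ∃ j : ℕ, a + (j:ℤ) + 1 ∉ Δ then a + Nat.find h else a

open Classical in
lemma runEnd_spec (Δ : Set ℤ) (a : ℤ) (h : ∃ j : ℕ, a + (j:ℤ) + 1 ∉ Δ) :
    runEnd Δ a + 1 ∉ Δ ∧ a ≤ runEnd Δ a ∧
      ∀ y, a ≤ y → y < runEnd Δ a → y + 1 ∈ Δ := by
  rw [runEnd, dif_pos h]
  refine ⟨Nat.find_spec h, by omega, ?_⟩
  intro y hy hlt
  have hj : (y - a).toNat < Nat.find h := by omega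
  have hmin := Nat.find_min h hj
  have heq : a + (((y - a).toNat : ℕ) : ℤ) + 1 = y + 1 := by omega
  rw [heq] at hmin
  exact not_not.mp hmin

open Classical in
lemma runEnd_eq (Δ : Set ℤ) {a b : ℤ} (hab : a ≤ b) (hb : b + 1 ∉ Δ)
    (hmid : ∀ y, a ≤ y → y < b → y + 1 ∈ Δ) : runEnd Δ a = b := by
  have h : ∃ j : ℕ, a + (j:ℤ) + 1 ∉ Δ :=
    ⟨(b - a).toNat, by rw [show a + (((b - a).toNat : ℕ) : ℤ) + 1 = b + 1 by omega]; exact hb⟩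
  rw [runEnd, dif_pos h]
  have h1 : Nat.find h ≤ (b - a).toNat := by
    apply Nat.find_le
    rw [show a + (((b - a).toNat : ℕ) : ℤ) + 1 = b + 1 by omega]
    exact hb
  have h2 : ¬ (Nat.find h : ℤ) + a < b := by
    intro hlt
    exact (Nat.find_spec h) (hmid (a + Nat.find h) (by omega) (by omega))
  omega

open Classical in
noncomputable def runStart (Δ : Set ℤ) (b : ℤ) : ℤ :=
  if h : ∃ j : ℕ, b - (j:ℤ) - 1 ∉ Δ then b - Nat.find h else b

open Classical in
lemma runStart_spec (Δ : Set ℤ) (b : ℤ) (h : ∃ j : ℕ, b - (j:ℤ) - 1 ∉ Δ) :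
    runStart Δ b - 1 ∉ Δ ∧ runStart Δ b ≤ b ∧
      ∀ y, runStart Δ b ≤ y → y < b → y ∈ Δ := by
  rw [runStart, dif_pos h]
  refine ⟨Nat.find_spec h, by omega, ?_⟩
  intro y hy hlt
  have hj : (b - y - 1).toNat < Nat.find h := by omega
  have hmin := Nat.find_min h hj
  have heq : b - (((b - y - 1).toNat : ℕ) : ℤ) - 1 = y := by omega
  rw [heq] at hmin
  exact not_not.mp hmin

/-- **`G_{n+1} = G_n` for `m = n + 1`.** For a 0-normalized `Γ_{n,n+1}`-semimodule `Δ`,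
the multiset of values `#([a, a+n) ∖ Δ)` over `(n+1)`-generators `a` of `Δ` equals the
multiset of values `#([b, b+n+1) ∖ Δ)` over `n`-generators `b` of `Δ`, together with one
extra copy of `0`. (Multiset equality is expressed by equality of multiplicities.) -/
theorem G_np1_eq_G_n (n : ℕ) (hn : 0 < n) (Δ : Set ℤ)
    (hΔ : IsSemimodule (n + 1) n Δ) :
    ∀ v : ℕ,
      {a : ℤ | a ∈ Δ ∧ a - (n + 1) ∉ Δ ∧ gapCount n Δ a = v}.ncard =
        {b : ℤ | b ∈ Δ ∧ b - n ∉ Δ ∧ gapCount (n + 1) Δ b = v}.ncard +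
          (if v = 0 then 1 else 0) := by
  classical
  obtain ⟨hpos, h0, hmcl, hncl⟩ := hΔ
  have hm' : ∀ x ∈ Δ, x + ((n:ℤ) + 1) ∈ Δ := by
    intro x hx; have := hmcl x hx; push_cast at this; exact this
  have hcond := mem_conductor n Δ hn h0 hm' hncl
  intro v
  set A : Set ℤ := {a : ℤ | a ∈ Δ ∧ a - (n + 1) ∉ Δ ∧ gapCount n Δ a = v} with hAdef
  set Bold : Set ℤ := {b : ℤ | b ∈ Δ ∧ b - n ∉ Δ ∧ gapCount (n + 1) Δ b = v} with hBolddef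
  set B : Set ℤ := {b : ℤ | b ∈ Δ ∧ b - (n:ℤ) ∉ Δ ∧ gapCount n Δ b = v} with hBdef
  have hBeq : Bold = B := by
    ext b
    simp only [hBolddef, hBdef, Set.mem_setOf_eq]
    constructor
    · rintro ⟨h1, h2, h3⟩
      exact ⟨h1, h2, by rw [← gapCount_succ_eq n Δ hncl h1]; exact h3⟩
    · rintro ⟨h1, h2, h3⟩
      exact ⟨h1, h2, by rw [gapCount_succ_eq n Δ hncl h1]; exact h3⟩
  have hIccfin : (Set.Icc (0:ℤ) ((n:ℤ)*(n+1)+n+1)).Finite := Set.finite_Icc _ _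
  have hAfin : A.Finite := by
    apply hIccfin.subset
    rintro a ⟨ha, ham, -⟩
    refine ⟨hpos a ha, ?_⟩
    by_contra hc
    push_neg at hc
    exact ham (hcond _ (by omega))
  have hBfin : B.Finite := by
    apply hIccfin.subset
    rintro b ⟨hb, hbn, -⟩
    refine ⟨hpos b hb, ?_⟩
    by_contra hc
    push_neg at hc
    exact hbn (hcond _ (by omega))
  set A1 : Set ℤ := {a ∈ A | a - 1 ∈ Δ} with hA1def
  set A2 : Set ℤ := {a ∈ A | a - 1 ∉ Δ} with hA2def
  set SF : Set ℤ := {a ∈ A2 | ∃ y, a ≤ y ∧ y + 1 ∉ Δ} with hSFdef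
  set SI : Set ℤ := {a ∈ A2 | ∀ y, a ≤ y → y + 1 ∈ Δ} with hSIdef
  set B1 : Set ℤ := {b ∈ B | b + 1 ∈ Δ} with hB1def
  set B2 : Set ℤ := {b ∈ B | b + 1 ∉ Δ} with hB2def
  have hA1fin : A1.Finite := hAfin.subset (Set.sep_subset _ _)
  have hA2fin : A2.Finite := hAfin.subset (Set.sep_subset _ _)
  have hSFfin : SF.Finite := hA2fin.subset (Set.sep_subset _ _)
  have hSIfin : SI.Finite := hA2fin.subset (Set.sep_subset _ _)
  have hB1fin : B1.Finite := hBfin.subset (Set.sep_subset _ _)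
  have hB2fin : B2.Finite := hBfin.subset (Set.sep_subset _ _)
  have hAunion : A = A1 ∪ A2 := by
    ext a
    simp only [hA1def, hA2def, Set.mem_union, Set.mem_sep_iff]
    tauto
  have hAdisj : Disjoint A1 A2 := by
    rw [Set.disjoint_left]
    rintro a ⟨-, h1⟩ ⟨-, h2⟩
    exact h2 h1
  have hA2union : A2 = SF ∪ SI := by
    ext a
    constructor
    · intro ha
      by_cases hy : ∃ y, a ≤ y ∧ y + 1 ∉ Δ
      · exact Or.inl ⟨ha, hy⟩
      · push_neg at hy
        exact Or.inr ⟨ha, hy⟩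
    · rintro (⟨ha, -⟩ | ⟨ha, -⟩) <;> exact ha
  have hA2disj : Disjoint SF SI := by
    rw [Set.disjoint_left]
    rintro a ⟨-, y, hy1, hy2⟩ ⟨-, hall⟩
    exact hy2 (hall y hy1)
  have hBunion : B = B1 ∪ B2 := by
    ext b
    simp only [hB1def, hB2def, Set.mem_union, Set.mem_sep_iff]
    tauto
  have hBdisj : Disjoint B1 B2 := by
    rw [Set.disjoint_left]
    rintro b ⟨-, h1⟩ ⟨-, h2⟩
    exact h2 h1
  -- A1 ↔ B1 via b ↦ b + 1
  have hA1img : A1 = (fun b => b + 1) '' B1 := by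
    ext a
    constructor
    · rintro ⟨⟨haΔ, ham, hag⟩, ha1⟩
      refine ⟨a - 1, ⟨⟨ha1, ?_, ?_⟩, ?_⟩, by ring⟩
      · rw [show a - 1 - (n:ℤ) = a - ((n:ℤ) + 1) by ring]
        exact ham
      · have h := gapCount_add_one n Δ hncl ha1
        rw [show a - 1 + 1 = a by ring] at h
        rw [← h]; exact hag
      · rw [show a - 1 + 1 = a by ring]; exact haΔ
    · rintro ⟨b, ⟨⟨hbΔ, hbn, hbg⟩, hb1⟩, rfl⟩
      refine ⟨⟨hb1, ?_, ?_⟩, by simpa using hbΔ⟩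
      · rw [show b + 1 - ((n:ℤ) + 1) = b - n by ring]
        exact hbn
      · rw [gapCount_add_one n Δ hncl hbΔ]
        exact hbg
  have h11 : A1.ncard = B1.ncard := by
    rw [hA1img]
    exact Set.ncard_image_of_injective _ (fun x y h => by omega)
  -- SF ↔ B2 via runEnd
  have hSFmain : ∀ a ∈ SF, runEnd Δ a ∈ B2 ∧ a ≤ runEnd Δ a ∧
      (∀ y, a ≤ y → y ≤ runEnd Δ a → y ∈ Δ) := by
    rintro a ⟨⟨⟨haΔ, ham, hag⟩, ha1⟩, y0, hy0, hy0'⟩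
    have hex : ∃ j : ℕ, a + (j:ℤ) + 1 ∉ Δ :=
      ⟨(y0 - a).toNat, by rw [show a + (((y0 - a).toNat : ℕ) : ℤ) + 1 = y0 + 1 by omega]; exact hy0'⟩
    obtain ⟨he1, he2, he3⟩ := runEnd_spec Δ a hex
    have hmemrun : ∀ y, a ≤ y → y ≤ runEnd Δ a → y ∈ Δ := by
      have H : ∀ y, a ≤ y → (y ≤ runEnd Δ a → y ∈ Δ) := by
        refine Int.le_induction ?_ ?_
        · intro _; exact haΔ
        · intro k hk ih hk1
          exact he3 k hk (by omega)
      exact fun y h1 h2 => H y h1 h2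
    have heΔ : runEnd Δ a ∈ Δ := hmemrun _ he2 le_rfl
    refine ⟨⟨⟨heΔ, ?_, ?_⟩, he1⟩, he2, hmemrun⟩
    · intro hc
      have h := hm' _ hc
      rw [show runEnd Δ a - (n:ℤ) + ((n:ℤ) + 1) = runEnd Δ a + 1 by ring] at h
      exact he1 h
    · rw [gapCount_run n Δ hncl he2 hmemrun]
      exact hag
  have hSFimg : B2 = runEnd Δ '' SF := by
    ext b
    constructor
    · rintro ⟨⟨hbΔ, hbn, hbg⟩, hb1⟩
      have hb0 : 0 ≤ b := hpos b hbΔ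
      have hex : ∃ j : ℕ, b - (j:ℤ) - 1 ∉ Δ := by
        refine ⟨b.toNat, ?_⟩
        rw [show b - ((b.toNat : ℕ) : ℤ) - 1 = -1 by omega]
        intro hc
        have := hpos _ hc
        omega
      obtain ⟨hs1, hs2, hs3⟩ := runStart_spec Δ b hex
      set s := runStart Δ b with hsdef
      have hsΔ : s ∈ Δ := by
        rcases eq_or_lt_of_le hs2 with h | h
        · rw [h]; exact hbΔ
        · exact hs3 s le_rfl h
      have hrunSB : ∀ y, s ≤ y → y ≤ b → y ∈ Δ := by
        intro y h1 h2
        rcases eq_or_lt_of_le h2 with h | h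
        · rw [h]; exact hbΔ
        · exact hs3 y h1 h
      have hsm : s - ((n:ℤ) + 1) ∉ Δ := by
        intro hc
        have h := hncl _ hc
        rw [show s - ((n:ℤ) + 1) + (n:ℤ) = s - 1 by ring] at h
        exact hs1 h
      have hsg : gapCount n Δ s = v := by
        rw [← gapCount_run n Δ hncl hs2 hrunSB]
        exact hbg
      refine ⟨s, ⟨⟨⟨hsΔ, hsm, hsg⟩, hs1⟩, b, hs2, hb1⟩, ?_⟩
      apply runEnd_eq Δ hs2 hb1
      intro y h1 h2
      rcases eq_or_lt_of_le (show y + 1 ≤ b by omega) with h | h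
      · rw [h]; exact hbΔ
      · exact hs3 (y + 1) (by omega) h
    · rintro ⟨a, haSF, rfl⟩
      exact (hSFmain a haSF).1
  have hSFinj : Set.InjOn (runEnd Δ) SF := by
    have key : ∀ a ∈ SF, ∀ a' ∈ SF, runEnd Δ a = runEnd Δ a' → ¬ a < a' := by
      intro a ha a' ha' heq hlt
      obtain ⟨-, he2, hmem⟩ := hSFmain a ha
      obtain ⟨-, he2', -⟩ := hSFmain a' ha'
      obtain ⟨⟨-, ha'1⟩, -⟩ := ha'
      exact ha'1 (hmem (a' - 1) (by omega) (by omega))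
    intro a ha a' ha' heq
    rcases lt_trichotomy a a' with h | h | h
    · exact absurd h (key a ha a' ha' heq)
    · exact h
    · exact absurd h (key a' ha' a ha heq.symm)
  have h22 : SF.ncard = B2.ncard := by
    rw [hSFimg, Set.ncard_image_of_injOn hSFinj]
  -- SI contributes the extra 0
  have hgzero : ∀ a : ℤ, (∀ y, a ≤ y → y ∈ Δ) → gapCount n Δ a = 0 := by
    intro a hall
    unfold gapCount
    convert Set.ncard_empty ℤ using 2
    ext y
    simp only [Set.mem_diff, Set.mem_setOf_eq, Set.mem_empty_iff_false, iff_false, not_and]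
    intro h1 h3
    exact absurd (hall y h1.1) h3
  have hSIcard : SI.ncard = if v = 0 then 1 else 0 := by
    obtain ⟨lo, hloP, hlomin⟩ :=
      Int.exists_least_of_bdd (P := fun z : ℤ => 0 ≤ z ∧ ∀ y, z ≤ y → y ∈ Δ)
        ⟨0, fun z hz => hz.1⟩
        ⟨(n:ℤ) * (n + 1), by positivity, fun y hy => hcond y hy⟩
    have hloΔ : lo ∈ Δ := hloP.2 lo le_rfl
    have hlo1 : lo - 1 ∉ Δ := by
      intro hc
      have hP : (0:ℤ) ≤ lo - 1 ∧ ∀ y, lo - 1 ≤ y → y ∈ Δ := by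
        refine ⟨hpos _ hc, fun y hy => ?_⟩
        rcases eq_or_lt_of_le hy with h | h
        · rw [← h]; exact hc
        · exact hloP.2 y (by omega)
      have := hlomin _ hP
      omega
    have hPall : ∀ a : ℤ, a ∈ Δ → (∀ y, a ≤ y → y + 1 ∈ Δ) → (∀ y, a ≤ y → y ∈ Δ) := by
      intro a haΔ hall y hy
      rcases eq_or_lt_of_le hy with h | h
      · rw [← h]; exact haΔ
      · have := hall (y - 1) (by omega)
        rw [show y - 1 + 1 = y by ring] at this
        exact this
    by_cases hv : v = 0
    · rw [if_pos hv]
      have hSIlo : SI = {lo} := by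
        ext a
        simp only [Set.mem_singleton_iff]
        constructor
        · rintro ⟨⟨⟨haΔ, -, -⟩, ha1⟩, hall⟩
          have hPa := hPall a haΔ hall
          have h1 : lo ≤ a := hlomin a ⟨hpos a haΔ, hPa⟩
          have h2 : ¬ lo < a := fun h => ha1 (hloP.2 (a - 1) (by omega))
          omega
        · intro ha
          rw [ha]
          refine ⟨⟨⟨hloΔ, ?_, ?_⟩, hlo1⟩, fun y hy => hloP.2 (y + 1) (by omega)⟩
          · intro hc
            have h := hncl _ hc
            rw [show lo - ((n:ℤ) + 1) + (n:ℤ) = lo - 1 by ring] at h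
            exact hlo1 h
          · rw [hgzero lo hloP.2, hv]
      rw [hSIlo, Set.ncard_singleton]
    · rw [if_neg hv]
      have hSIe : SI = (∅ : Set ℤ) := by
        ext a
        simp only [Set.mem_empty_iff_false, iff_false]
        rintro ⟨⟨⟨haΔ, -, hag⟩, -⟩, hall⟩
        rw [hgzero a (hPall a haΔ hall)] at hag
        exact hv hag.symm
      rw [hSIe, Set.ncard_empty]
  -- assemble
  have hcardA : A.ncard = A1.ncard + A2.ncard := by
    rw [hAunion]
    exact Set.ncard_union_eq hAdisj hA1fin hA2fin
  have hcardA2 : A2.ncard = SF.ncard + SI.ncard := by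
    rw [hA2union]
    exact Set.ncard_union_eq hA2disj hSFfin hSIfin
  have hcardB : B.ncard = B1.ncard + B2.ncard := by
    rw [hBunion]
    exact Set.ncard_union_eq hBdisj hB1fin hB2fin
  rw [hBeq, hcardA, hcardA2, h11, h22, hSIcard, hcardB]
  omega
end

section
/- Let m be a positive integer coprime to 3 and set δ = m − 1. Then the map φ : D ↦ (δ − |D|, h₊(D)), defined on the set of Young diagrams below the diagonal of the m×3 rectangle, is injective, and its image is exactly the set of integer points of the triangle T_δ = {(a, b) ∈ ℤ≥0 × ℤ≥0 : a + b ≤ δ, a + 2b ≥ δ, 2a + b ≥ δ}. -/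
/-- A Young diagram as a downward-closed finite set of cells `(x, y)` (column, row). -/
def IsYoung (D : Finset (ℕ × ℕ)) : Prop :=
  ∀ x y x' y', (x, y) ∈ D → x' ≤ x → y' ≤ y → (x', y') ∈ D

/-- `D` lies below the diagonal of the `m × n` rectangle. -/
def BelowDiag (m n : ℕ) (D : Finset (ℕ × ℕ)) : Prop :=
  ∀ c ∈ D, n * (c.1 + 1) + m * (c.2 + 1) < m * n

/-- Arm length of the cell `c` in `D`. -/
def arm (D : Finset (ℕ × ℕ)) (c : ℕ × ℕ) : ℕ :=
  (D.filter (fun c' => c'.2 = c.2 ∧ c.1 < c'.1)).card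

/-- Leg length of the cell `c` in `D`. -/
def leg (D : Finset (ℕ × ℕ)) (c : ℕ × ℕ) : ℕ :=
  (D.filter (fun c' => c'.1 = c.1 ∧ c.2 < c'.2)).card

/-- The statistic `h₊` for slope `n/m`: the number of cells `c ∈ D` with
`a(c)/(l(c)+1) ≤ n/m < (a(c)+1)/l(c)`. -/
def hplus (m n : ℕ) (D : Finset (ℕ × ℕ)) : ℕ :=
  (D.filter (fun c =>
    n * arm D c ≤ m * (leg D c + 1) ∧ m * leg D c < n * (arm D c + 1))).card

/-- The two-row diagram with `p` cells in row `0` and `q` cells in row `1`. -/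
def dia (p q : ℕ) : Finset (ℕ × ℕ) :=
  Finset.range p ×ˢ {0} ∪ Finset.range q ×ˢ {1}

lemma mem_dia {p q x y : ℕ} :
    (x, y) ∈ dia p q ↔ (x < p ∧ y = 0) ∨ (x < q ∧ y = 1) := by
  rw [dia, Finset.mem_union, Finset.mem_product, Finset.mem_product]
  simp only [Finset.mem_range, Finset.mem_singleton]

lemma card_dia (p q : ℕ) : (dia p q).card = p + q := by
  rw [dia, Finset.card_union_of_disjoint]
  · simp [Finset.card_product]
  · rw [Finset.disjoint_left]
    rintro ⟨a, b⟩ h1 h2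
    rw [Finset.mem_product] at h1 h2
    simp only [Finset.mem_range, Finset.mem_singleton] at h1 h2
    omega

lemma arm_dia0 (p q x : ℕ) : arm (dia p q) (x, 0) = p - (x + 1) := by
  have h : (dia p q).filter (fun c' => c'.2 = (x, (0:ℕ)).2 ∧ (x, (0:ℕ)).1 < c'.1)
      = Finset.Ico (x + 1) p ×ˢ {0} := by
    ext ⟨a, b⟩
    rw [Finset.mem_filter, mem_dia, Finset.mem_product]
    simp only [Finset.mem_Ico, Finset.mem_singleton]
    omega
  rw [arm, h, Finset.card_product]
  simp

lemma arm_dia1 (p q x : ℕ) : arm (dia p q) (x, 1) = q - (x + 1) := by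
  have h : (dia p q).filter (fun c' => c'.2 = (x, (1:ℕ)).2 ∧ (x, (1:ℕ)).1 < c'.1)
      = Finset.Ico (x + 1) q ×ˢ {1} := by
    ext ⟨a, b⟩
    rw [Finset.mem_filter, mem_dia, Finset.mem_product]
    simp only [Finset.mem_Ico, Finset.mem_singleton]
    omega
  rw [arm, h, Finset.card_product]
  simp

lemma leg_dia0_lt (p q x : ℕ) (h : x < q) : leg (dia p q) (x, 0) = 1 := by
  have h' : (dia p q).filter (fun c' => c'.1 = (x, (0:ℕ)).1 ∧ (x, (0:ℕ)).2 < c'.2)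
      = {(x, 1)} := by
    ext ⟨a, b⟩
    rw [Finset.mem_filter, mem_dia]
    simp only [Finset.mem_singleton, Prod.mk.injEq]
    omega
  rw [leg, h']
  simp

lemma leg_dia0_ge (p q x : ℕ) (h : q ≤ x) : leg (dia p q) (x, 0) = 0 := by
  have h' : (dia p q).filter (fun c' => c'.1 = (x, (0:ℕ)).1 ∧ (x, (0:ℕ)).2 < c'.2)
      = ∅ := by
    ext ⟨a, b⟩
    rw [Finset.mem_filter, mem_dia]
    simp only [Finset.notMem_empty, iff_false]
    omega
  rw [leg, h']
  simp

lemma leg_dia1 (p q x : ℕ) : leg (dia p q) (x, 1) = 0 := by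
  have h' : (dia p q).filter (fun c' => c'.1 = (x, (1:ℕ)).1 ∧ (x, (1:ℕ)).2 < c'.2)
      = ∅ := by
    ext ⟨a, b⟩
    rw [Finset.mem_filter, mem_dia]
    simp only [Finset.notMem_empty, iff_false]
    omega
  rw [leg, h']
  simp

lemma isYoung_dia (p q : ℕ) (hqp : q ≤ p) : IsYoung (dia p q) := by
  intro x y x' y' hmem hx hy
  rw [mem_dia] at hmem ⊢
  omega

lemma belowDiag_dia (m p q : ℕ) (hp : 3 * p < 2 * m) (hq : 3 * q < m) :
    BelowDiag m 3 (dia p q) := by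
  rintro ⟨x, y⟩ hmem
  rw [mem_dia] at hmem
  rcases hmem with ⟨hx, rfl⟩ | ⟨hx, rfl⟩ <;> dsimp only <;> omega

lemma hplus_dia (m B p q : ℕ) (hB : m = 3 * B + 1 ∨ m = 3 * B + 2)
    (hqp : q ≤ p) (hq : 3 * q < m) (hp : 3 * p < 2 * m) :
    hplus m 3 (dia p q) = q + min (p - q) (B + 1) + min q (p - B) := by
  set D := dia p q with hD
  set Pd : ℕ × ℕ → Prop := fun c =>
    3 * arm D c ≤ m * (leg D c + 1) ∧ m * leg D c < 3 * (arm D c + 1) with hPd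
  have hP0 : ∀ x : ℕ, x < p →
      (Pd (x, 0) ↔ (x < min q (p - B) ∨ max q (p - B - 1) ≤ x)) := by
    intro x hx
    rw [hPd]
    dsimp only
    rw [hD, arm_dia0]
    rcases lt_or_ge x q with h | h
    · rw [leg_dia0_lt p q x h]
      omega
    · rw [leg_dia0_ge p q x h]
      omega
  have hP1 : ∀ x : ℕ, x < q → Pd (x, 1) := by
    intro x hx
    rw [hPd]
    dsimp only
    rw [hD, arm_dia1, leg_dia1]
    omega
  have hsplit : D.filter Pd
      = (Finset.range p ×ˢ {0}).filter Pd ∪ (Finset.range q ×ˢ {1}).filter Pd := by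
    rw [← Finset.filter_union]
    rfl
  have h0 : (Finset.range p ×ˢ {0}).filter Pd
      = (Finset.range (min q (p - B)) ∪ Finset.Ico (max q (p - B - 1)) p) ×ˢ {0} := by
    ext ⟨x, y⟩
    rw [Finset.mem_filter, Finset.mem_product, Finset.mem_product]
    simp only [Finset.mem_range, Finset.mem_singleton, Finset.mem_union, Finset.mem_Ico]
    constructor
    · rintro ⟨⟨hx, rfl⟩, hPred⟩
      have := (hP0 x hx).mp hPred
      exact ⟨by omega, rfl⟩
    · rintro ⟨hcond, rfl⟩
      have hx : x < p := by omega
      exact ⟨⟨hx, rfl⟩, (hP0 x hx).mpr (by omega)⟩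
  have h1 : (Finset.range q ×ˢ {1}).filter Pd = Finset.range q ×ˢ {1} := by
    apply Finset.filter_eq_self.mpr
    rintro ⟨x, y⟩ hmem
    rw [Finset.mem_product] at hmem
    simp only [Finset.mem_range, Finset.mem_singleton] at hmem
    obtain ⟨hx, rfl⟩ := hmem
    exact hP1 x hx
  have hcard : hplus m 3 D = (D.filter Pd).card := rfl
  rw [hcard, hsplit, h0, h1, Finset.card_union_of_disjoint, Finset.card_product,
    Finset.card_product, Finset.card_union_of_disjoint, Nat.card_Ico, Finset.card_range]
  · simp only [Finset.card_singleton, Finset.card_range]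
    omega
  · rw [Finset.disjoint_left]
    intro a ha hb
    simp only [Finset.mem_range] at ha
    simp only [Finset.mem_Ico] at hb
    omega
  · rw [Finset.disjoint_left]
    rintro ⟨a, b⟩ ha hb
    rw [Finset.mem_product] at ha hb
    simp only [Finset.mem_singleton] at ha hb
    omega

lemma mem_iff_lt_card (s : Finset ℕ) (h : ∀ a ∈ s, ∀ b ≤ a, b ∈ s) :
    ∀ x, x ∈ s ↔ x < s.card := by
  intro x
  constructor
  · intro hx
    have hsub : Finset.range (x + 1) ⊆ s := by
      intro b hb
      exact h x hx b (Nat.lt_succ_iff.mp (Finset.mem_range.mp hb))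
    have := Finset.card_le_card hsub
    simpa using this
  · intro hx
    by_contra hxs
    have hsub : s ⊆ Finset.range x := by
      intro a ha
      rw [Finset.mem_range]
      by_contra h'
      exact hxs (h a ha x (by omega))
    have := Finset.card_le_card hsub
    simp only [Finset.card_range] at this
    omega

lemma struct (m : ℕ) (hm : 0 < m) (D : Finset (ℕ × ℕ)) (hY : IsYoung D)
    (hBD : BelowDiag m 3 D) :
    ∃ p q, q ≤ p ∧ 3 * p < 2 * m ∧ 3 * q < m ∧ D = dia p q := by
  classical
  set s0 := (D.filter (fun c => c.2 = 0)).image Prod.fst with hs0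
  set s1 := (D.filter (fun c => c.2 = 1)).image Prod.fst with hs1
  have hmem0 : ∀ x, x ∈ s0 ↔ (x, 0) ∈ D := by
    intro x
    constructor
    · intro hx
      obtain ⟨⟨a, b⟩, hc, rfl⟩ := Finset.mem_image.mp hx
      obtain ⟨hcD, hc2⟩ := Finset.mem_filter.mp hc
      simp only at hc2
      subst hc2
      exact hcD
    · intro hmem
      exact Finset.mem_image.mpr ⟨(x, 0), Finset.mem_filter.mpr ⟨hmem, rfl⟩, rfl⟩
  have hmem1 : ∀ x, x ∈ s1 ↔ (x, 1) ∈ D := by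
    intro x
    constructor
    · intro hx
      obtain ⟨⟨a, b⟩, hc, rfl⟩ := Finset.mem_image.mp hx
      obtain ⟨hcD, hc2⟩ := Finset.mem_filter.mp hc
      simp only at hc2
      subst hc2
      exact hcD
    · intro hmem
      exact Finset.mem_image.mpr ⟨(x, 1), Finset.mem_filter.mpr ⟨hmem, rfl⟩, rfl⟩
  have hlt0 : ∀ x, x ∈ s0 ↔ x < s0.card := by
    apply mem_iff_lt_card
    intro a ha b hb
    exact (hmem0 b).mpr (hY a 0 b 0 ((hmem0 a).mp ha) hb le_rfl)
  have hlt1 : ∀ x, x ∈ s1 ↔ x < s1.card := by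
    apply mem_iff_lt_card
    intro a ha b hb
    exact (hmem1 b).mpr (hY a 1 b 1 ((hmem1 a).mp ha) hb le_rfl)
  have hy1 : ∀ x y, (x, y) ∈ D → y ≤ 1 := by
    intro x y hmem
    have := hBD (x, y) hmem
    dsimp only at this
    by_contra h'
    have h2 : 3 ≤ y + 1 := by omega
    have := Nat.mul_le_mul_left m h2
    omega
  refine ⟨s0.card, s1.card, ?_, ?_, ?_, ?_⟩
  · by_contra h
    push_neg at h
    have h1 : s0.card ∈ s1 := (hlt1 _).mpr h
    have h2 : (s0.card, 0) ∈ D := hY s0.card 1 s0.card 0 ((hmem1 _).mp h1) le_rfl (by omega)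
    have h3 := (hlt0 _).mp ((hmem0 _).mpr h2)
    omega
  · rcases Nat.eq_zero_or_pos s0.card with h | h
    · omega
    · have hx : s0.card - 1 ∈ s0 := (hlt0 _).mpr (by omega)
      have := hBD _ ((hmem0 _).mp hx)
      dsimp only at this
      omega
  · rcases Nat.eq_zero_or_pos s1.card with h | h
    · omega
    · have hx : s1.card - 1 ∈ s1 := (hlt1 _).mpr (by omega)
      have := hBD _ ((hmem1 _).mp hx)
      dsimp only at this
      omega
  · ext ⟨x, y⟩
    rw [mem_dia]
    constructor
    · intro hmem
      have hy := hy1 x y hmem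
      interval_cases y
      · exact Or.inl ⟨(hlt0 _).mp ((hmem0 x).mpr hmem), rfl⟩
      · exact Or.inr ⟨(hlt1 _).mp ((hmem1 x).mpr hmem), rfl⟩
    · rintro (⟨hx, rfl⟩ | ⟨hx, rfl⟩)
      · exact (hmem0 x).mp ((hlt0 _).mpr hx)
      · exact (hmem1 x).mp ((hlt1 _).mpr hx)

/-- **The `(3, m)` case of the symmetry conjecture: structure of the image of `φ`.**
For `m` coprime to `3` and `δ = m - 1`, the map `D ↦ (δ - |D|, h₊(D))` is injective on
Young diagrams below the diagonal of the `m × 3` rectangle, and its image is the set of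
lattice points of the triangle `{(a,b) : a + b ≤ δ, a + 2b ≥ δ, 2a + b ≥ δ}`. -/
theorem phi_injective_image_triangle (m : ℕ) (hm : 0 < m) (hm3 : Nat.Coprime m 3) :
    Set.InjOn (fun D : Finset (ℕ × ℕ) => ((m - 1) - D.card, hplus m 3 D))
      {D | IsYoung D ∧ BelowDiag m 3 D} ∧
    (fun D : Finset (ℕ × ℕ) => ((m - 1) - D.card, hplus m 3 D)) ''
        {D | IsYoung D ∧ BelowDiag m 3 D} =
      {p : ℕ × ℕ | p.1 + p.2 ≤ m - 1 ∧ m - 1 ≤ p.1 + 2 * p.2 ∧ m - 1 ≤ 2 * p.1 + p.2} := by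
  have h3 : ¬ (3 ∣ m) := by
    intro hdvd
    have h1 : (3 : ℕ) = 1 := (Nat.coprime_comm.mp hm3).eq_one_of_dvd hdvd
    omega
  have h3' : m % 3 ≠ 0 := fun h => h3 (Nat.dvd_of_mod_eq_zero h)
  set B := m / 3 with hBdef
  have hB : m = 3 * B + 1 ∨ m = 3 * B + 2 := by omega
  constructor
  · rintro D ⟨hY, hBD⟩ D' ⟨hY', hBD'⟩ heq
    obtain ⟨p, q, hqp, hp, hq, rfl⟩ := struct m hm D hY hBD
    obtain ⟨p', q', hqp', hp', hq', rfl⟩ := struct m hm D' hY' hBD'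
    simp only [card_dia, hplus_dia m B p q hB hqp hq hp,
      hplus_dia m B p' q' hB hqp' hq' hp', Prod.mk.injEq] at heq
    obtain ⟨h1, h2⟩ := heq
    have hpq : p = p' ∧ q = q' := by omega
    rw [hpq.1, hpq.2]
  · ext ⟨a, b⟩
    simp only [Set.mem_image, Set.mem_setOf_eq]
    constructor
    · rintro ⟨D, ⟨hY, hBD⟩, heq⟩
      obtain ⟨p, q, hqp, hp, hq, rfl⟩ := struct m hm D hY hBD
      simp only [card_dia, hplus_dia m B p q hB hqp hq hp, Prod.mk.injEq] at heq
      obtain ⟨h1, h2⟩ := heq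
      refine ⟨?_, ?_, ?_⟩ <;> omega
    · rintro ⟨h1, h2, h3⟩
      have key : ∃ p q, q ≤ p ∧ 3 * p < 2 * m ∧ 3 * q < m ∧
          (m - 1) - (p + q) = a ∧ q + min (p - q) (B + 1) + min q (p - B) = b := by
        rcases le_or_gt b B with hb | hb
        · exact ⟨b, (m - 1) - a - b, by omega, by omega, by omega, by omega, by omega⟩
        · rcases Nat.even_or_odd (b - B) with he | he
          · obtain ⟨t, ht⟩ := he
            exact ⟨B + t, (m - 1) - a - (B + t), by omega, by omega, by omega, by omega,
              by omega⟩
          · obtain ⟨t, ht⟩ := he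
            exact ⟨(m - 1) - a - t, t, by omega, by omega, by omega, by omega, by omega⟩
      obtain ⟨p, q, hqp, hp, hq, ha, hbeq⟩ := key
      refine ⟨dia p q, ⟨isYoung_dia p q hqp, belowDiag_dia m p q hp hq⟩, ?_⟩
      simp only [card_dia, hplus_dia m B p q hB hqp hq hp, Prod.mk.injEq]
      exact ⟨ha, hbeq⟩
end

section
/- Let m and n be coprime positive integers. Then the number of partitions (Young diagrams) that are simultaneously m-cores and n-cores, i.e. that contain no cell of hook length m and no cell of hook length n, is finite and equals binom(m+n, n)/(m+n). -/
/-- `D` is a `p`-core: no cell of `D` has hook length `p`. -/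
def IsCore (p : ℕ) (D : Finset (ℕ × ℕ)) : Prop :=
  ∀ c ∈ D, arm D c + leg D c + 1 ≠ p

namespace Anderson

open Finset

/-- a down-closed finite set of naturals is an initial segment -/
lemma mem_iff_lt_card_of_dc (T : Finset ℕ) (hT : ∀ a b : ℕ, a ≤ b → b ∈ T → a ∈ T) (x : ℕ) :
    x ∈ T ↔ x < T.card := by
  constructor
  · intro hx
    have h1 : Finset.range (x+1) ⊆ T := by
      intro a ha; exact hT a x (by simpa using Nat.lt_succ_iff.mp (Finset.mem_range.mp ha)) hx
    have := Finset.card_le_card h1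
    simpa using this
  · intro hx
    by_contra hxT
    have h1 : T ⊆ Finset.range x := by
      intro t ht
      rcases lt_or_ge t x with h | h
      · simpa using h
      · exact absurd (hT x t h ht) hxT
    have := Finset.card_le_card h1
    simp only [Finset.card_range] at this; omega

def rowL (D : Finset (ℕ × ℕ)) (y : ℕ) : ℕ := (D.filter (fun c => c.2 = y)).card

def colL (D : Finset (ℕ × ℕ)) (x : ℕ) : ℕ := (D.filter (fun c => c.1 = x)).card

section YoungLemmas

variable {D : Finset (ℕ × ℕ)}

lemma row_image (hD : IsYoung D) : (D.filter (fun c => c.2 = y)).image Prod.fst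
    = Finset.range (rowL D y) := by
  have hinj : Set.InjOn (Prod.fst : ℕ × ℕ → ℕ) ↑(D.filter (fun c => c.2 = y)) := by
    intro a ha b hb hab
    simp only [coe_filter, Set.mem_setOf_eq] at ha hb
    exact Prod.ext hab (ha.2.trans hb.2.symm)
  have hcard : ((D.filter (fun c => c.2 = y)).image Prod.fst).card = rowL D y :=
    Finset.card_image_of_injOn hinj
  have hdc : ∀ a b : ℕ, a ≤ b → b ∈ (D.filter (fun c => c.2 = y)).image Prod.fst →
      a ∈ (D.filter (fun c => c.2 = y)).image Prod.fst := by
    intro a b hab hb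
    simp only [Finset.mem_image] at hb ⊢
    obtain ⟨c, hc, hc1⟩ := hb
    simp only [Finset.mem_filter] at hc
    refine ⟨(a, y), ?_, rfl⟩
    simp only [Finset.mem_filter]
    exact ⟨hD c.1 c.2 a y (by simpa using hc.1) (by omega) (le_of_eq hc.2.symm), trivial⟩
  ext a
  rw [Finset.mem_range, ← hcard]
  exact mem_iff_lt_card_of_dc _ hdc a

lemma mem_iff_row (hD : IsYoung D) {x y : ℕ} : (x, y) ∈ D ↔ x < rowL D y := by
  rw [← Finset.mem_range, ← row_image hD (y := y), Finset.mem_image]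
  constructor
  · intro h; exact ⟨(x,y), by simp [h], rfl⟩
  · rintro ⟨c, hc, rfl⟩
    simp only [Finset.mem_filter] at hc
    have : c = (c.1, y) := Prod.ext rfl hc.2
    rw [← this]; exact hc.1

lemma col_image (hD : IsYoung D) : (D.filter (fun c => c.1 = x)).image Prod.snd
    = Finset.range (colL D x) := by
  have hinj : Set.InjOn (Prod.snd : ℕ × ℕ → ℕ) ↑(D.filter (fun c => c.1 = x)) := by
    intro a ha b hb hab
    simp only [coe_filter, Set.mem_setOf_eq] at ha hb
    exact Prod.ext (ha.2.trans hb.2.symm) hab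
  have hcard : ((D.filter (fun c => c.1 = x)).image Prod.snd).card = colL D x :=
    Finset.card_image_of_injOn hinj
  have hdc : ∀ a b : ℕ, a ≤ b → b ∈ (D.filter (fun c => c.1 = x)).image Prod.snd →
      a ∈ (D.filter (fun c => c.1 = x)).image Prod.snd := by
    intro a b hab hb
    simp only [Finset.mem_image] at hb ⊢
    obtain ⟨c, hc, hc1⟩ := hb
    simp only [Finset.mem_filter] at hc
    refine ⟨(x, a), ?_, rfl⟩
    simp only [Finset.mem_filter]
    refine ⟨hD c.1 c.2 x a ?_ (le_of_eq hc.2.symm) (by omega), trivial⟩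
    simpa using hc.1
  ext a
  rw [Finset.mem_range, ← hcard]
  exact mem_iff_lt_card_of_dc _ hdc a

lemma mem_iff_col (hD : IsYoung D) {x y : ℕ} : (x, y) ∈ D ↔ y < colL D x := by
  rw [← Finset.mem_range, ← col_image hD (x := x), Finset.mem_image]
  constructor
  · intro h; exact ⟨(x,y), by simp [h], rfl⟩
  · rintro ⟨c, hc, rfl⟩
    simp only [Finset.mem_filter] at hc
    have : c = (x, c.2) := Prod.ext hc.2 rfl
    rw [← this]; exact hc.1

lemma row_lt_iff_col (hD : IsYoung D) {x y : ℕ} : x < rowL D y ↔ y < colL D x :=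
  (mem_iff_row hD).symm.trans (mem_iff_col hD)

lemma row_antitone (hD : IsYoung D) {y y' : ℕ} (h : y' ≤ y) : rowL D y ≤ rowL D y' := by
  by_contra hc
  push_neg at hc
  have h1 : (rowL D y', y) ∈ D := (mem_iff_row hD).mpr hc
  have h2 : (rowL D y', y') ∈ D := hD _ _ _ _ h1 le_rfl h
  rw [mem_iff_row hD] at h2; omega

lemma col_antitone (hD : IsYoung D) {x x' : ℕ} (h : x' ≤ x) : colL D x ≤ colL D x' := by
  by_contra hc
  push_neg at hc
  have h1 : (x, colL D x') ∈ D := (mem_iff_col hD).mpr hc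
  have h2 : (x', colL D x') ∈ D := hD _ _ _ _ h1 h le_rfl
  rw [mem_iff_col hD] at h2; omega

lemma arm_eq (hD : IsYoung D) {x y : ℕ} (hxy : (x, y) ∈ D) : arm D (x, y) + (x + 1) = rowL D y := by
  have hx : x < rowL D y := (mem_iff_row hD).mp hxy
  have himg : (D.filter (fun c' => c'.2 = y ∧ x < c'.1)).image Prod.fst
      = (Finset.range (rowL D y)).filter (fun a => x < a) := by
    ext a
    simp only [Finset.mem_image, Finset.mem_filter, Finset.mem_range]
    constructor
    · rintro ⟨c, hc, rfl⟩
      have : c = (c.1, y) := Prod.ext rfl hc.2.1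
      rw [this] at hc
      exact ⟨(mem_iff_row hD).mp hc.1, hc.2.2⟩
    · rintro ⟨ha, hxa⟩
      exact ⟨(a, y), ⟨(mem_iff_row hD).mpr ha, rfl, hxa⟩, rfl⟩
  have hinj : Set.InjOn (Prod.fst : ℕ × ℕ → ℕ) ↑(D.filter (fun c' => c'.2 = y ∧ x < c'.1)) := by
    intro a ha b hb hab
    simp only [coe_filter, Set.mem_setOf_eq] at ha hb
    exact Prod.ext hab (ha.2.1.trans hb.2.1.symm)
  have hcard : arm D (x, y) = ((Finset.range (rowL D y)).filter (fun a => x < a)).card := by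
    rw [arm, ← Finset.card_image_of_injOn hinj, himg]
  have : (Finset.range (rowL D y)).filter (fun a => x < a) = Finset.Ico (x+1) (rowL D y) := by
    ext a
    simp only [Finset.mem_filter, Finset.mem_range, Finset.mem_Ico]
    omega
  rw [hcard, this, Nat.card_Ico]
  omega

lemma leg_eq (hD : IsYoung D) {x y : ℕ} (hxy : (x, y) ∈ D) : leg D (x, y) + (y + 1) = colL D x := by
  have hx : y < colL D x := (mem_iff_col hD).mp hxy
  have himg : (D.filter (fun c' => c'.1 = x ∧ y < c'.2)).image Prod.snd
      = (Finset.range (colL D x)).filter (fun a => y < a) := by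
    ext a
    simp only [Finset.mem_image, Finset.mem_filter, Finset.mem_range]
    constructor
    · rintro ⟨c, hc, rfl⟩
      have : c = (x, c.2) := Prod.ext hc.2.1 rfl
      rw [this] at hc
      exact ⟨(mem_iff_col hD).mp hc.1, hc.2.2⟩
    · rintro ⟨ha, hya⟩
      exact ⟨(x, a), ⟨(mem_iff_col hD).mpr ha, rfl, hya⟩, rfl⟩
  have hinj : Set.InjOn (Prod.snd : ℕ × ℕ → ℕ) ↑(D.filter (fun c' => c'.1 = x ∧ y < c'.2)) := by
    intro a ha b hb hab
    simp only [coe_filter, Set.mem_setOf_eq] at ha hb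
    exact Prod.ext (ha.2.1.trans hb.2.1.symm) hab
  have hcard : leg D (x, y) = ((Finset.range (colL D x)).filter (fun a => y < a)).card := by
    rw [leg, ← Finset.card_image_of_injOn hinj, himg]
  have : (Finset.range (colL D x)).filter (fun a => y < a) = Finset.Ico (y+1) (colL D x) := by
    ext a
    simp only [Finset.mem_filter, Finset.mem_range, Finset.mem_Ico]
    omega
  rw [hcard, this, Nat.card_Ico]
  omega

lemma hook_sum (hD : IsYoung D) {x y : ℕ} (hxy : (x, y) ∈ D) :
    (arm D (x, y) + leg D (x, y) + 1) + (x + y + 1) = rowL D y + colL D x := by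
  have h1 := arm_eq hD hxy
  have h2 := leg_eq hD hxy
  omega

/-- key: no cell has "hook length zero" -/
lemma key_ineq (hD : IsYoung D) (x y : ℕ) : rowL D y + colL D x ≠ x + y + 1 := by
  rcases lt_or_ge x (rowL D y) with h | h
  · have h2 : y < colL D x := (row_lt_iff_col hD).mp h
    omega
  · have h2 : colL D x ≤ y := by
      by_contra hc
      push_neg at hc
      have := (row_lt_iff_col hD).mpr hc
      omega
    omega

end YoungLemmas

end Anderson

namespace Anderson

open Finset

def HB (D : Finset (ℕ × ℕ)) : Finset ℕ :=
  (Finset.range (colL D 0)).image (fun y => rowL D y + (colL D 0 - 1 - y))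

def CoreP (p : ℕ) (HH : Finset ℕ) : Prop :=
  p ∉ HH ∧ ∀ h ∈ HH, p < h → h - p ∈ HH

lemma nat_eq_of_lt_iff {a b : ℕ} (h : ∀ k : ℕ, k < a ↔ k < b) : a = b := by
  have h1 := h a; have h2 := h b; omega

section CoreEquiv

variable {D : Finset (ℕ × ℕ)}

lemma mem_HB {h : ℕ} :
    h ∈ HB D ↔ ∃ y, y < colL D 0 ∧ h + y + 1 = rowL D y + colL D 0 := by
  simp only [HB, Finset.mem_image, Finset.mem_range]
  constructor
  · rintro ⟨y, hy, rfl⟩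
    exact ⟨y, hy, by omega⟩
  · rintro ⟨y, hy, heq⟩
    exact ⟨y, hy, by omega⟩

lemma row_mem_col (hD : IsYoung D) {x y : ℕ} (hxy : (x, y) ∈ D) : y < colL D 0 := by
  have : (0, y) ∈ D := hD x y 0 y hxy (by omega) le_rfl
  exact (mem_iff_col hD).mp this

/-- Lemma B: from a violated beta-set condition produce a cell of hook length `p`. -/
lemma exists_hook (hD : IsYoung D) {p h : ℕ} (hp : 0 < p) (hh : h ∈ HB D)
    (hph : p < h) (hnot : h - p ∉ HB D) :
    ∃ c ∈ D, arm D c + leg D c + 1 = p := by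
  set r := colL D 0 with hr
  obtain ⟨y, hy, heq⟩ := mem_HB.mp hh
  set g := h - p with hg
  have hg1 : 1 ≤ g := by omega
  set T := (Finset.range r).filter (fun y' => g + y' + 1 < rowL D y' + r) with hT
  set t := T.card with ht
  have hmemT : ∀ y', y' ∈ T ↔ y' < t := by
    apply mem_iff_lt_card_of_dc
    intro a b hab hb
    simp only [hT, Finset.mem_filter, Finset.mem_range] at hb ⊢
    have := row_antitone hD hab
    omega
  have hyT : y ∈ T := by
    simp only [hT, Finset.mem_filter, Finset.mem_range]
    exact ⟨hy, by omega⟩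
  have hyt : y < t := (hmemT y).mp hyT
  have htr : t ≤ r := by
    have : T ⊆ Finset.range r := Finset.filter_subset _ _
    have := Finset.card_le_card this
    simpa using this
  have ht1 : g + t < rowL D (t-1) + r := by
    have : t - 1 ∈ T := (hmemT _).mpr (by omega)
    simp only [hT, Finset.mem_filter, Finset.mem_range] at this
    omega
  have ht2 : rowL D t + r ≤ g + t := by
    rcases eq_or_lt_of_le htr with hteq | htlt
    · have : rowL D t = 0 := by
        by_contra hc
        have : (0, t) ∈ D := (mem_iff_row hD).mpr (by omega)
        have := (mem_iff_col hD).mp this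
        omega
      omega
    · have hnT : t ∉ T := by rw [hmemT]; omega
      simp only [hT, Finset.mem_filter, Finset.mem_range] at hnT
      have h1 : ¬ (g + t + 1 < rowL D t + r) := by tauto
      have h2 : g + t + 1 ≠ rowL D t + r := by
        intro hc
        exact hnot (mem_HB.mpr ⟨t, htlt, by omega⟩)
      omega
  have hgtr : r ≤ g + t := by omega
  set x := g + t - r with hx
  have hxr : x + r = g + t := by omega
  have hcol : colL D x = t := by
    apply nat_eq_of_lt_iff
    intro k
    rw [← mem_iff_col hD (x := x) (y := k), mem_iff_row hD]
    constructor
    · intro hk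
      by_contra hc
      push_neg at hc
      have := row_antitone hD (show t ≤ k by omega)
      omega
    · intro hk
      have := row_antitone hD (show k ≤ t - 1 by omega)
      omega
  have hmem : (x, y) ∈ D := by
    rw [mem_iff_row hD]
    have := row_antitone hD (show y ≤ t - 1 by omega)
    omega
  refine ⟨(x, y), hmem, ?_⟩
  have hs := hook_sum hD hmem
  rw [hcol] at hs
  omega

/-- the core condition transfers to beta sets -/
lemma isCore_iff (hD : IsYoung D) {p : ℕ} (hp : 0 < p) :
    IsCore p D ↔ CoreP p (HB D) := by
  constructor
  · intro hc
    constructor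
    · intro hmem
      obtain ⟨y, hy, heq⟩ := mem_HB.mp hmem
      have h0y : (0, y) ∈ D := (mem_iff_col hD).mpr hy
      have hs := hook_sum hD h0y
      exact hc (0, y) h0y (by omega)
    · intro h hh hph
      by_contra hnot
      obtain ⟨c, hcD, hcp⟩ := exists_hook hD hp hh hph hnot
      exact hc c hcD hcp
  · rintro ⟨hpH, hclo⟩ c hcD hcp
    obtain ⟨x, y⟩ := c
    set r := colL D 0 with hr
    have hy : y < r := row_mem_col hD hcD
    set h := rowL D y + (r - 1 - y) with hdefh
    have heq : h + y + 1 = rowL D y + r := by omega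
    have hhH : h ∈ HB D := mem_HB.mpr ⟨y, hy, heq⟩
    have hs := hook_sum hD hcD
    rw [hcp] at hs
    have hcolr : colL D x ≤ r := col_antitone hD (by omega)
    have hkey : h + colL D x = p + x + r := by omega
    rcases eq_or_lt_of_le (show p ≤ h by omega) with hph | hph
    · exact hpH (hph ▸ hhH)
    · have := hclo h hhH hph
      obtain ⟨y', hy', heq'⟩ := mem_HB.mp this
      have : rowL D y' + colL D x = x + y' + 1 := by omega
      exact key_ineq hD x y' this

end CoreEquiv

end Anderson

namespace Anderson

open Finset

def AA (HH : Finset ℕ) (x y : ℕ) : ℕ := (HH.filter (fun h => x + HH.card ≤ h + y)).card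

section PsiSec

variable {D : Finset (ℕ × ℕ)} {HH : Finset ℕ}

lemma f_injOn (hD : IsYoung D) :
    Set.InjOn (fun y' => rowL D y' + (colL D 0 - 1 - y')) ↑(Finset.range (colL D 0)) := by
  intro a ha b hb heq
  simp only [Finset.coe_range, Set.mem_Iio] at ha hb
  simp only at heq
  rcases lt_trichotomy a b with h | h | h
  · have := row_antitone hD (le_of_lt h); omega
  · exact h
  · have := row_antitone hD (le_of_lt h); omega

lemma card_HB (hD : IsYoung D) : (HB D).card = colL D 0 := by
  rw [HB, Finset.card_image_of_injOn (f_injOn hD), Finset.card_range]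

lemma lemC (hD : IsYoung D) {x y : ℕ} : (x, y) ∈ D ↔ y < AA (HB D) x y := by
  set r := colL D 0 with hr
  have himg : (HB D).filter (fun h => x + (HB D).card ≤ h + y)
      = ((Finset.range r).filter (fun y' => x + y' + 1 ≤ rowL D y' + y)).image
          (fun y' => rowL D y' + (r - 1 - y')) := by
    ext h
    rw [Finset.mem_filter, card_HB hD, mem_HB]
    simp only [Finset.mem_image, Finset.mem_filter, Finset.mem_range]
    constructor
    · rintro ⟨⟨y', hy', heq⟩, hle⟩
      exact ⟨y', ⟨hy', by omega⟩, by omega⟩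
    · rintro ⟨y', ⟨hy', hle⟩, rfl⟩
      exact ⟨⟨y', hy', by omega⟩, by omega⟩
  have hcard : AA (HB D) x y
      = ((Finset.range r).filter (fun y' => x + y' + 1 ≤ rowL D y' + y)).card := by
    rw [AA, himg, Finset.card_image_of_injOn ((f_injOn hD).mono (by
      intro a ha
      simp only [Finset.coe_filter, Set.mem_setOf_eq, Finset.mem_range] at ha
      simp only [Finset.coe_range, Set.mem_Iio]
      exact ha.1))]
  have hdc : ∀ a b : ℕ, a ≤ b →
      b ∈ (Finset.range r).filter (fun y' => x + y' + 1 ≤ rowL D y' + y) →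
      a ∈ (Finset.range r).filter (fun y' => x + y' + 1 ≤ rowL D y' + y) := by
    intro a b hab hb
    simp only [Finset.mem_filter, Finset.mem_range] at hb ⊢
    have := row_antitone hD hab
    omega
  rw [hcard, ← mem_iff_lt_card_of_dc _ hdc y]
  simp only [Finset.mem_filter, Finset.mem_range]
  constructor
  · intro hmem
    exact ⟨row_mem_col hD hmem, by have := (mem_iff_row hD).mp hmem; omega⟩
  · rintro ⟨hy, hle⟩
    exact (mem_iff_row hD).mpr (by omega)

lemma HB_injective {D' : Finset (ℕ × ℕ)} (hD : IsYoung D) (hD' : IsYoung D')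
    (h : HB D = HB D') : D = D' := by
  ext c
  obtain ⟨x, y⟩ := c
  rw [lemC hD, lemC hD', h]

def psiM (HH : Finset ℕ) : ℕ := HH.sup id + HH.card + 1

def psi (HH : Finset ℕ) : Finset (ℕ × ℕ) :=
  ((Finset.range (psiM HH)) ×ˢ (Finset.range (psiM HH))).filter
    (fun c => c.2 < AA HH c.1 c.2)

lemma AA_le (HH : Finset ℕ) (x y : ℕ) : AA HH x y ≤ HH.card := Finset.card_filter_le _ _

lemma bounds_of_AA {x y : ℕ} (hcond : y < AA HH x y) : x < psiM HH ∧ y < psiM HH := by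
  have h1 : y < HH.card := lt_of_lt_of_le hcond (AA_le HH x y)
  have h2 : (HH.filter (fun h => x + HH.card ≤ h + y)).Nonempty :=
    Finset.card_pos.mp (by rw [← AA]; omega)
  obtain ⟨h, hh⟩ := h2
  simp only [Finset.mem_filter] at hh
  have h3 : h ≤ HH.sup id := Finset.le_sup (f := id) hh.1
  constructor <;> [skip; skip] <;> simp only [psiM] <;> omega

lemma mem_psi {x y : ℕ} : (x, y) ∈ psi HH ↔ y < AA HH x y := by
  simp only [psi, Finset.mem_filter, Finset.mem_product, Finset.mem_range]
  constructor
  · tauto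
  · intro h
    have := bounds_of_AA h
    tauto

lemma AA_mono_x {x x' y : ℕ} (h : x' ≤ x) : AA HH x y ≤ AA HH x' y := by
  apply Finset.card_le_card
  intro a ha
  simp only [Finset.mem_filter] at ha ⊢
  exact ⟨ha.1, by omega⟩

lemma AA_y {x y y' : ℕ} (h : y' ≤ y) : AA HH x y ≤ AA HH x y' + (y - y') := by
  classical
  rw [AA, AA]
  have hsplit : HH.filter (fun h => x + HH.card ≤ h + y)
      ⊆ HH.filter (fun h => x + HH.card ≤ h + y')
        ∪ HH.filter (fun h => x + HH.card ≤ h + y ∧ h + y' < x + HH.card) := by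
    intro a ha
    simp only [Finset.mem_filter, Finset.mem_union] at ha ⊢
    rcases ha with ⟨h1, h2⟩
    by_cases hc : x + HH.card ≤ a + y'
    · exact Or.inl ⟨h1, hc⟩
    · exact Or.inr ⟨h1, h2, by omega⟩
  have hmid : (HH.filter (fun h => x + HH.card ≤ h + y ∧ h + y' < x + HH.card)).card ≤ y - y' := by
    have hsub : HH.filter (fun h => x + HH.card ≤ h + y ∧ h + y' < x + HH.card)
        ⊆ Finset.Ico (x + HH.card - y) (x + HH.card - y') := by
      intro a ha
      simp only [Finset.mem_filter, Finset.mem_Ico] at ha ⊢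
      omega
    have := Finset.card_le_card hsub
    rw [Nat.card_Ico] at this
    omega
  calc (HH.filter (fun h => x + HH.card ≤ h + y)).card
      ≤ _ := Finset.card_le_card hsplit
    _ ≤ _ + _ := Finset.card_union_le _ _
    _ ≤ (HH.filter (fun h => x + HH.card ≤ h + y')).card + (y - y') :=
        Nat.add_le_add le_rfl hmid

lemma psi_young : IsYoung (psi HH) := by
  intro x y x' y' hmem hx hy
  rw [mem_psi] at hmem ⊢
  have h1 : AA HH x y ≤ AA HH x y' + (y - y') := AA_y hy
  have h2 : AA HH x y' ≤ AA HH x' y' := AA_mono_x hx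
  omega

lemma psi_col0 (h0 : 0 ∉ HH) : colL (psi HH) 0 = HH.card := by
  apply nat_eq_of_lt_iff
  intro k
  rw [← mem_iff_col psi_young (x := 0) (y := k), mem_psi]
  constructor
  · intro h; exact lt_of_lt_of_le h (AA_le HH 0 k)
  · intro hk
    have hneg : (HH.filter (fun h => ¬ (0 + HH.card ≤ h + k))).card ≤ HH.card - k - 1 := by
      have hsub : HH.filter (fun h => ¬ (0 + HH.card ≤ h + k)) ⊆ Finset.Ico 1 (HH.card - k) := by
        intro a ha
        simp only [Finset.mem_filter, Finset.mem_Ico] at ha ⊢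
        have : a ≠ 0 := fun hc => h0 (hc ▸ ha.1)
        omega
      have := Finset.card_le_card hsub
      rw [Nat.card_Ico] at this
      omega
    have := Finset.card_filter_add_card_filter_not
      (s := HH) (p := fun h => 0 + HH.card ≤ h + k)
    rw [AA]
    omega

lemma psi_row_mem (h0 : 0 ∉ HH) {y : ℕ} (hy : y < HH.card) :
    ∃ h ∈ HH, h + y + 1 = rowL (psi HH) y + HH.card := by
  have hy0 : (0, y) ∈ psi HH := (mem_iff_col psi_young).mpr (by rwa [psi_col0 h0])
  have hpos : 0 < rowL (psi HH) y := (mem_iff_row psi_young).mp hy0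
  set lam := rowL (psi HH) y with hlam
  have hin : (lam - 1, y) ∈ psi HH := (mem_iff_row psi_young).mpr (by omega)
  have hout : ¬ ((lam, y) ∈ psi HH) := by
    rw [mem_iff_row psi_young]; omega
  rw [mem_psi] at hin hout
  push_neg at hout
  rw [AA] at hin hout
  have hsub : HH.filter (fun h => lam + HH.card ≤ h + y)
      ⊆ HH.filter (fun h => (lam - 1) + HH.card ≤ h + y) := by
    intro a ha
    simp only [Finset.mem_filter] at ha ⊢
    exact ⟨ha.1, by omega⟩
  have : ∃ h ∈ HH.filter (fun h => (lam - 1) + HH.card ≤ h + y),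
      h ∉ HH.filter (fun h => lam + HH.card ≤ h + y) := by
    by_contra hc
    push_neg at hc
    exact absurd (Finset.card_le_card (fun a ha => hc a ha)) (by omega)
  obtain ⟨h, hh1, hh2⟩ := this
  simp only [Finset.mem_filter] at hh1 hh2
  have hne : ¬ (lam + HH.card ≤ h + y) := fun hc => hh2 ⟨hh1.1, hc⟩
  exact ⟨h, hh1.1, by omega⟩

lemma HB_psi (h0 : 0 ∉ HH) : HB (psi HH) = HH := by
  have hsub : HB (psi HH) ⊆ HH := by
    intro h hh
    obtain ⟨y, hy, heq⟩ := mem_HB.mp hh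
    rw [psi_col0 h0] at hy heq
    obtain ⟨h', hh', heq'⟩ := psi_row_mem h0 hy
    have : h = h' := by omega
    rwa [this]
  have hcard : HH.card ≤ (HB (psi HH)).card := by
    rw [card_HB psi_young, psi_col0 h0]
  exact Finset.eq_of_subset_of_card_le hsub hcard

lemma psi_HB (hD : IsYoung D) : psi (HB D) = D := by
  ext c
  obtain ⟨x, y⟩ := c
  rw [mem_psi, ← lemC hD]

end PsiSec

end Anderson

namespace Anderson

open Finset

section Words

variable (m n : ℕ)

def wstep (A : Finset (ZMod (m+n))) (i : ℕ) : ℤ :=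
  if (i : ZMod (m+n)) ∈ A then -(m : ℤ) else (n : ℤ)

def sfun (A : Finset (ZMod (m+n))) (j : ℕ) : ℤ := ∑ i ∈ Finset.range j, wstep m n A i

variable {m n}

lemma cast_add_zero : ((m : ZMod (m+n)) + (n : ZMod (m+n))) = 0 := by
  rw [← Nat.cast_add]; exact ZMod.natCast_self _

lemma wstep_periodic (A : Finset (ZMod (m+n))) (i : ℕ) :
    wstep m n A (i + (m+n)) = wstep m n A i := by
  have : ((i + (m+n) : ℕ) : ZMod (m+n)) = (i : ZMod (m+n)) := by
    push_cast
    rw [cast_add_zero, add_zero]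
  rw [wstep, wstep, this]

lemma cast_count (hN : 0 < m + n) (A : Finset (ZMod (m+n))) :
    ((Finset.range (m+n)).filter (fun i : ℕ => ((i : ZMod (m+n)) ∈ A))).card = A.card := by
  haveI : NeZero (m+n) := ⟨by omega⟩
  apply Finset.card_bij (fun (i : ℕ) (_ : i ∈ (Finset.range (m+n)).filter (fun i : ℕ => ((i : ZMod (m+n)) ∈ A))) => ((i : ZMod (m+n))))
  · intro a ha
    simp only [Finset.mem_filter] at ha
    exact ha.2
  · intro a ha b hb hab
    simp only [Finset.mem_filter, Finset.mem_range] at ha hb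
    have := congrArg ZMod.val hab
    rwa [ZMod.val_cast_of_lt ha.1, ZMod.val_cast_of_lt hb.1] at this
  · intro b hb
    refine ⟨b.val, ?_, ?_⟩
    · simp only [Finset.mem_filter, Finset.mem_range]
      exact ⟨ZMod.val_lt b, by rw [ZMod.natCast_rightInverse b]; exact hb⟩
    · rw [ZMod.natCast_rightInverse b]

lemma sfun_eq (A : Finset (ZMod (m+n))) (j : ℕ) :
    sfun m n A j
      = ((Finset.range j).filter (fun i : ℕ => ¬ ((i : ZMod (m+n)) ∈ A))).card * n
        - ((Finset.range j).filter (fun i : ℕ => ((i : ZMod (m+n)) ∈ A))).card * m := by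
  induction j with
  | zero => simp [sfun]
  | succ j ih =>
    rw [sfun, Finset.sum_range_succ, ← sfun, ih, wstep]
    by_cases hc : (j : ZMod (m+n)) ∈ A
    · rw [if_pos hc]
      have e1 : (Finset.range (j+1)).filter (fun i : ℕ => ((i : ZMod (m+n)) ∈ A))
          = insert j ((Finset.range j).filter (fun i : ℕ => ((i : ZMod (m+n)) ∈ A))) := by
        rw [Finset.range_add_one, Finset.filter_insert, if_pos hc]
      have e2 : (Finset.range (j+1)).filter (fun i : ℕ => ¬ ((i : ZMod (m+n)) ∈ A))
          = (Finset.range j).filter (fun i : ℕ => ¬ ((i : ZMod (m+n)) ∈ A)) := by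
        rw [Finset.range_add_one, Finset.filter_insert, if_neg (by simpa using hc)]
      rw [e1, e2, Finset.card_insert_of_notMem (by simp)]
      push_cast
      ring
    · rw [if_neg hc]
      have e1 : (Finset.range (j+1)).filter (fun i : ℕ => ((i : ZMod (m+n)) ∈ A))
          = (Finset.range j).filter (fun i : ℕ => ((i : ZMod (m+n)) ∈ A)) := by
        rw [Finset.range_add_one, Finset.filter_insert, if_neg hc]
      have e2 : (Finset.range (j+1)).filter (fun i : ℕ => ¬ ((i : ZMod (m+n)) ∈ A))
          = insert j ((Finset.range j).filter (fun i : ℕ => ¬ ((i : ZMod (m+n)) ∈ A))) := by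
        rw [Finset.range_add_one, Finset.filter_insert, if_pos (by simpa using hc)]
      rw [e1, e2, Finset.card_insert_of_notMem (by simp)]
      push_cast
      ring

lemma sum_period_zero (hN : 0 < m + n) {A : Finset (ZMod (m+n))} (hcard : A.card = n) :
    sfun m n A (m + n) = 0 := by
  rw [sfun_eq]
  have hin := cast_count hN A
  have := Finset.card_filter_add_card_filter_not
    (s := Finset.range (m+n)) (p := fun i : ℕ => ((i : ZMod (m+n)) ∈ A))
  rw [Finset.card_range] at this
  have h2 : (((Finset.range (m+n)).filter (fun i : ℕ => ¬ ((i : ZMod (m+n)) ∈ A))).card : ℤ) = m := by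
    omega
  rw [h2, hin, hcard]
  push_cast
  ring

lemma sum_shift_period (hN : 0 < m + n) {A : Finset (ZMod (m+n))} (hcard : A.card = n)
    (a : ℕ) : ∑ i ∈ Finset.range (m+n), wstep m n A (a + i) = 0 := by
  induction a with
  | zero => simpa [sfun] using sum_period_zero hN hcard
  | succ a ih =>
    have h1 : ∑ i ∈ Finset.range ((m+n)+1), wstep m n A (a + i)
        = ∑ i ∈ Finset.range (m+n), wstep m n A (a + (i+1)) + wstep m n A (a + 0) :=
      Finset.sum_range_succ' _ _
    have h2 : ∑ i ∈ Finset.range ((m+n)+1), wstep m n A (a + i)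
        = ∑ i ∈ Finset.range (m+n), wstep m n A (a + i) + wstep m n A (a + (m+n)) :=
      Finset.sum_range_succ _ _
    have h3 : wstep m n A (a + (m+n)) = wstep m n A (a + 0) := by
      rw [add_comm a (m+n), add_comm (m+n) a]
      simpa using wstep_periodic A a
    have h5 : ∑ i ∈ Finset.range (m+n), wstep m n A ((a+1) + i)
        = ∑ i ∈ Finset.range (m+n), wstep m n A (a + (i+1)) := by
      apply Finset.sum_congr rfl
      intro i _
      congr 1
      omega
    omega

lemma sfun_add (A : Finset (ZMod (m+n))) (a b : ℕ) :
    sfun m n A (a + b) = sfun m n A a + ∑ i ∈ Finset.range b, wstep m n A (a + i) := by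
  rw [sfun, sfun, Finset.sum_range_add]

lemma sfun_periodic (hN : 0 < m + n) {A : Finset (ZMod (m+n))} (hcard : A.card = n)
    (j : ℕ) : sfun m n A (j + (m+n)) = sfun m n A j := by
  rw [sfun_add, sum_shift_period hN hcard, add_zero]

lemma sfun_mod (hN : 0 < m + n) {A : Finset (ZMod (m+n))} (hcard : A.card = n)
    (j : ℕ) : sfun m n A j = sfun m n A (j % (m+n)) := by
  induction j using Nat.strong_induction_on with
  | _ j ih =>
    rcases lt_or_ge j (m+n) with h | h
    · rw [Nat.mod_eq_of_lt h]
    · have h1 : sfun m n A j = sfun m n A (j - (m+n)) := by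
        conv_lhs => rw [show j = (j - (m+n)) + (m+n) by omega]
        exact sfun_periodic hN hcard _
      rw [h1, ih _ (by omega), Nat.mod_eq_sub_mod h]

lemma sfun_residue (A : Finset (ZMod (m+n))) (j : ℕ) :
    ((sfun m n A j : ℤ) : ZMod (m+n)) = (j : ZMod (m+n)) * (n : ZMod (m+n)) := by
  induction j with
  | zero => simp [sfun]
  | succ j ih =>
    rw [sfun, Finset.sum_range_succ, ← sfun]
    push_cast
    rw [ih]
    have hw : ((wstep m n A j : ℤ) : ZMod (m+n)) = (n : ZMod (m+n)) := by
      rw [wstep]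
      split
      · push_cast
        linear_combination -cast_add_zero (m := m) (n := n)
      · push_cast; ring
    rw [hw]
    ring

end Words

end Anderson

namespace Anderson

open Finset

section Rot

variable {m n : ℕ}

def rotW (k : ZMod (m+n)) (A : Finset (ZMod (m+n))) : Finset (ZMod (m+n)) :=
  A.image (fun v => v - k)

lemma mem_rotW {k v : ZMod (m+n)} {A : Finset (ZMod (m+n))} :
    v ∈ rotW k A ↔ v + k ∈ A := by
  simp only [rotW, Finset.mem_image]
  constructor
  · rintro ⟨a, ha, rfl⟩
    simpa using ha
  · intro h
    exact ⟨v + k, h, by ring⟩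

lemma rotW_rotW (k l : ZMod (m+n)) (A : Finset (ZMod (m+n))) :
    rotW k (rotW l A) = rotW (k + l) A := by
  ext v
  rw [mem_rotW, mem_rotW, mem_rotW, add_assoc]

lemma rotW_zero (A : Finset (ZMod (m+n))) : rotW 0 A = A := by
  ext v
  rw [mem_rotW, add_zero]

lemma card_rotW (k : ZMod (m+n)) (A : Finset (ZMod (m+n))) : (rotW k A).card = A.card := by
  apply Finset.card_image_of_injective
  intro a b h
  have := congrArg (fun z => z + k) h
  simpa using this

lemma wstep_rotW (hN : 0 < m + n) (k : ZMod (m+n)) (A : Finset (ZMod (m+n))) (j : ℕ) :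
    wstep m n (rotW k A) j = wstep m n A (k.val + j) := by
  haveI : NeZero (m+n) := ⟨by omega⟩
  have hcast : ((k.val + j : ℕ) : ZMod (m+n)) = (j : ZMod (m+n)) + k := by
    push_cast
    rw [ZMod.natCast_rightInverse k]
    ring
  rw [wstep, wstep, hcast]
  simp only [mem_rotW]

lemma sfun_rotW (hN : 0 < m + n) (k : ZMod (m+n)) (A : Finset (ZMod (m+n))) (j : ℕ) :
    sfun m n (rotW k A) j + sfun m n A k.val = sfun m n A (k.val + j) := by
  induction j with
  | zero => simp [sfun]
  | succ j ih =>
    have hL : sfun m n (rotW k A) (j+1) = sfun m n (rotW k A) j + wstep m n (rotW k A) j :=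
      Finset.sum_range_succ _ _
    have hR : sfun m n A ((k.val + j) + 1) = sfun m n A (k.val + j) + wstep m n A (k.val + j) :=
      Finset.sum_range_succ _ _
    have hw := wstep_rotW hN k A j
    rw [show k.val + (j + 1) = (k.val + j) + 1 by omega, hR, hL, hw]
    omega

def GoodW (m n : ℕ) (A : Finset (ZMod (m+n))) : Prop := ∀ j < m + n, 0 ≤ sfun m n A j

instance (m n : ℕ) (A : Finset (ZMod (m+n))) : Decidable (GoodW m n A) := by
  unfold GoodW; infer_instance

lemma goodW_iff_all (hN : 0 < m + n) {A : Finset (ZMod (m+n))} (hcard : A.card = n) :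
    GoodW m n A ↔ ∀ j, 0 ≤ sfun m n A j := by
  constructor
  · intro hg j
    rw [sfun_mod hN hcard]
    exact hg _ (Nat.mod_lt _ hN)
  · intro hg j _
    exact hg j

lemma exists_unique_goodRot (hm : 0 < m) (hn : 0 < n) (hmn : Nat.Coprime m n)
    {A : Finset (ZMod (m+n))} (hcard : A.card = n) :
    ∃! k : ZMod (m+n), GoodW m n (rotW k A) := by
  have hN : 0 < m + n := by omega
  haveI : NeZero (m+n) := ⟨by omega⟩
  have hrotcard : ∀ k : ZMod (m+n), (rotW k A).card = n := fun k => by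
    rw [card_rotW]; exact hcard
  have hchar : ∀ k : ZMod (m+n), GoodW m n (rotW k A) ↔
      ∀ j, sfun m n A k.val ≤ sfun m n A j := by
    intro k
    rw [goodW_iff_all hN (hrotcard k)]
    constructor
    · intro hg j
      have hkv := ZMod.val_lt k
      have h1 := sfun_rotW hN k A (j % (m+n) + (m+n) - k.val)
      have h2 := hg (j % (m+n) + (m+n) - k.val)
      rw [show k.val + (j % (m+n) + (m+n) - k.val) = j % (m+n) + (m+n) by omega] at h1
      have h3 : sfun m n A (j % (m+n) + (m+n)) = sfun m n A (j % (m+n)) :=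
        sfun_periodic hN hcard _
      have h4 : sfun m n A j = sfun m n A (j % (m+n)) := sfun_mod hN hcard j
      omega
    · intro hmin j
      have h1 := sfun_rotW hN k A j
      have h2 := hmin (k.val + j)
      omega
  have hval_n : ∀ k : ZMod (m+n), ((sfun m n A k.val : ℤ) : ZMod (m+n)) = k * n := by
    intro k
    rw [sfun_residue, ZMod.natCast_rightInverse k]
  -- existence
  obtain ⟨k0, hk0r, hk0min⟩ := Finset.exists_min_image (Finset.range (m+n)) (sfun m n A)
    ⟨0, Finset.mem_range.mpr hN⟩
  rw [Finset.mem_range] at hk0r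
  refine ⟨(k0 : ZMod (m+n)), ?_, ?_⟩
  · show GoodW m n (rotW ((k0 : ℕ) : ZMod (m+n)) A)
    rw [hchar]
    intro j
    rw [ZMod.val_cast_of_lt hk0r, sfun_mod hN hcard j]
    exact hk0min _ (Finset.mem_range.mpr (Nat.mod_lt _ hN))
  · intro k' hk'
    have hmink' := (hchar k').mp hk'
    have hmink : ∀ j, sfun m n A k0 ≤ sfun m n A j := by
      intro j
      rw [sfun_mod hN hcard j]
      exact hk0min _ (Finset.mem_range.mpr (Nat.mod_lt _ hN))
    have heq : sfun m n A k'.val = sfun m n A ((k0 : ZMod (m+n)).val) := by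
      rw [ZMod.val_cast_of_lt hk0r]
      exact le_antisymm (hmink' k0) (hmink k'.val)
    have hres := hval_n k'
    rw [heq, hval_n ((k0 : ZMod (m+n)))] at hres
    have hcop : Nat.Coprime n (m+n) :=
      (Nat.coprime_add_self_right).mpr hmn.symm
    have hu : IsUnit ((n : ℕ) : ZMod (m+n)) :=
      ⟨ZMod.unitOfCoprime n hcop, ZMod.coe_unitOfCoprime n hcop⟩
    have hthis : (n : ZMod (m+n)) * k' = (n : ZMod (m+n)) * (k0 : ZMod (m+n)) := by
      rw [mul_comm ((n : ℕ) : ZMod (m+n)) k', mul_comm ((n : ℕ) : ZMod (m+n)) ((k0 : ℕ) : ZMod (m+n))]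
      exact hres.symm
    exact hu.mul_left_cancel hthis

end Rot

end Anderson

namespace Anderson

open Finset

section CountGood

variable {m n : ℕ}

open Classical in
noncomputable def pickRot (m n : ℕ) (A : Finset (ZMod (m+n))) : ZMod (m+n) :=
  if h : ∃! k : ZMod (m+n), GoodW m n (rotW k A) then h.choose else 0

lemma pickRot_spec {A : Finset (ZMod (m+n))} (h : ∃! k : ZMod (m+n), GoodW m n (rotW k A)) :
    GoodW m n (rotW (pickRot m n A) A)
      ∧ ∀ k : ZMod (m+n), GoodW m n (rotW k A) → k = pickRot m n A := by
  rw [pickRot]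
  rw [dif_pos h]
  exact ⟨h.choose_spec.1, fun k hk => h.choose_spec.2 k hk⟩

lemma card_goodWS [NeZero (m+n)] (hm : 0 < m) (hn : 0 < n) (hmn : Nat.Coprime m n) :
    ((((Finset.univ : Finset (ZMod (m+n))).powersetCard n).filter (GoodW m n)).card) * (m+n)
      = (m+n).choose n := by
  classical
  set AllW := ((Finset.univ : Finset (ZMod (m+n))).powersetCard n) with hAllW
  set GS := AllW.filter (GoodW m n) with hGS
  have hcard_of_mem : ∀ A : Finset (ZMod (m+n)), A ∈ AllW → A.card = n := by
    intro A hA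
    rw [hAllW, Finset.mem_powersetCard] at hA
    exact hA.2
  have hbij : AllW.card = (GS ×ˢ (Finset.univ : Finset (ZMod (m+n)))).card := by
    apply Finset.card_bij' (i := fun A _ => (rotW (pickRot m n A) A, pickRot m n A))
      (j := fun p _ => rotW (-p.2) p.1)
    · intro A hA
      have hspec := pickRot_spec (exists_unique_goodRot hm hn hmn (hcard_of_mem A hA))
      rw [Finset.mem_product]
      constructor
      · rw [hGS, Finset.mem_filter]
        refine ⟨?_, hspec.1⟩
        rw [hAllW, Finset.mem_powersetCard]
        exact ⟨Finset.subset_univ _, by rw [card_rotW]; exact hcard_of_mem A hA⟩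
      · exact Finset.mem_univ _
    · intro p hp
      rw [Finset.mem_product, hGS, Finset.mem_filter] at hp
      rw [hAllW, Finset.mem_powersetCard]
      refine ⟨Finset.subset_univ _, ?_⟩
      rw [card_rotW]
      exact hcard_of_mem _ hp.1.1
    · intro A hA
      show rotW (-(pickRot m n A)) (rotW (pickRot m n A) A) = A
      rw [rotW_rotW, neg_add_cancel, rotW_zero]
    · intro p hp
      rw [Finset.mem_product, hGS, Finset.mem_filter] at hp
      have hgood : GoodW m n (rotW p.2 (rotW (-p.2) p.1)) := by
        rw [rotW_rotW, add_neg_cancel, rotW_zero]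
        exact hp.1.2
      have hpick : p.2 = pickRot m n (rotW (-p.2) p.1) := by
        have hc : (rotW (-p.2) p.1).card = n := by
          rw [card_rotW]; exact hcard_of_mem _ hp.1.1
        exact (pickRot_spec (exists_unique_goodRot hm hn hmn hc)).2 p.2 hgood
      have h1 : rotW (pickRot m n (rotW (-p.2) p.1)) (rotW (-p.2) p.1) = p.1 := by
        rw [← hpick, rotW_rotW, add_neg_cancel, rotW_zero]
      show (rotW (pickRot m n (rotW (-p.2) p.1)) (rotW (-p.2) p.1),
        pickRot m n (rotW (-p.2) p.1)) = p
      rw [← hpick, rotW_rotW, add_neg_cancel, rotW_zero]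
  have hprod : (GS ×ˢ (Finset.univ : Finset (ZMod (m+n)))).card = GS.card * (m+n) := by
    rw [Finset.card_product, Finset.card_univ, ZMod.card]
  have hall : AllW.card = (m+n).choose n := by
    rw [hAllW, Finset.card_powersetCard, Finset.card_univ, ZMod.card]
  rw [← hprod, ← hbij, hall]

end CountGood

end Anderson

namespace Anderson

open Finset

section Bridge

variable {m n : ℕ}

def CorePair (m n : ℕ) (HH : Finset ℕ) : Prop := 0 ∉ HH ∧ CoreP m HH ∧ CoreP n HH

lemma repr_lemma (hm : 0 < m) (hn : 0 < n) (hmn : Nat.Coprime m n) {x : ℕ} (hx : m * n ≤ x) :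
    ∃ a b : ℕ, x = a * m + b * n := by
  rcases eq_or_lt_of_le (show 1 ≤ m from hm) with hm1 | hm1
  · exact ⟨x, 0, by rw [← hm1]; ring⟩
  rcases eq_or_lt_of_le (show 1 ≤ n from hn) with hn1 | hn1
  · exact ⟨0, x, by rw [← hn1]; ring⟩
  have hF := frobeniusNumber_pair hmn hm1 hn1
  have hxc : x ∈ AddSubmonoid.closure ({m, n} : Set ℕ) := by
    by_contra hc
    have := hF.2 hc
    have : m + n ≤ m * n := Nat.add_le_mul hm1 hn1
    omega
  rw [AddSubmonoid.mem_closure_pair] at hxc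
  obtain ⟨a, b, hab⟩ := hxc
  exact ⟨a, b, by simpa [smul_eq_mul] using hab.symm⟩

section CPLemmas

variable {HH : Finset ℕ} (hHH : CorePair m n HH)
include hHH

lemma not_mem_add_m {x : ℕ} (hx : x ∉ HH) : x + m ∉ HH := by
  intro hmem
  rcases Nat.eq_zero_or_pos x with rfl | hx1
  · exact hHH.2.1.1 (by simpa using hmem)
  · have := hHH.2.1.2 (x + m) hmem (by omega)
    rw [show x + m - m = x by omega] at this
    exact hx this

lemma not_mem_add_n {x : ℕ} (hx : x ∉ HH) : x + n ∉ HH := by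
  intro hmem
  rcases Nat.eq_zero_or_pos x with rfl | hx1
  · exact hHH.2.2.1 (by simpa using hmem)
  · have := hHH.2.2.2 (x + n) hmem (by omega)
    rw [show x + n - n = x by omega] at this
    exact hx this

lemma not_mem_repr : ∀ a b : ℕ, a * m + b * n ∉ HH := by
  intro a
  induction a with
  | zero =>
    intro b
    induction b with
    | zero => simpa using hHH.1
    | succ b ihb =>
      have := not_mem_add_n hHH ihb
      rw [show 0 * m + b * n + n = 0 * m + (b+1) * n by ring] at this
      exact this
  | succ a iha =>
    intro b
    have := not_mem_add_m hHH (iha b)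
    rw [show a * m + b * n + m = (a+1) * m + b * n by ring] at this
    exact this

lemma bounded_of_corePair (hm : 0 < m) (hn : 0 < n) (hmn : Nat.Coprime m n)
    {x : ℕ} (hx : x ∈ HH) : x < m * n := by
  by_contra hc
  push_neg at hc
  obtain ⟨a, b, rfl⟩ := repr_lemma hm hn hmn hc
  exact not_mem_repr hHH a b hx

lemma not_mem_add_mul {x : ℕ} (hx : x ∉ HH) (k : ℕ) : x + k * (m + n) ∉ HH := by
  induction k with
  | zero => simpa using hx
  | succ k ih =>
    have h1 := not_mem_add_m hHH ih
    have h2 := not_mem_add_n hHH h1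
    rw [show x + k * (m+n) + m + n = x + (k+1) * (m+n) by ring] at h2
    exact h2

end CPLemmas

lemma tmin_ex (m n : ℕ) [NeZero (m+n)] (HH : Finset ℕ) (j : ℕ) :
    ∃ x : ℕ, x ∉ HH ∧ ((x : ZMod (m+n)) = (j : ZMod (m+n)) * (n : ZMod (m+n))) := by
  have hN : 0 < m + n := Nat.pos_of_ne_zero (NeZero.ne _)
  refine ⟨((j : ZMod (m+n)) * (n : ZMod (m+n))).val + (m+n) * (HH.sup id + 1), ?_, ?_⟩
  · intro hmem
    have := Finset.le_sup (f := id) hmem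
    simp only [id] at this
    have h2 : HH.sup id + 1 ≤ (m+n) * (HH.sup id + 1) := Nat.le_mul_of_pos_left _ hN
    omega
  · rw [Nat.cast_add, Nat.cast_mul, ZMod.natCast_self, zero_mul, add_zero,
      ZMod.natCast_rightInverse]

def tmin (m n : ℕ) [NeZero (m+n)] (HH : Finset ℕ) (j : ℕ) : ℕ :=
  Nat.find (tmin_ex m n HH j)

lemma tmin_not_mem (m n : ℕ) [NeZero (m+n)] (HH : Finset ℕ) (j : ℕ) :
    tmin m n HH j ∉ HH := (Nat.find_spec (tmin_ex m n HH j)).1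

lemma tmin_res (m n : ℕ) [NeZero (m+n)] (HH : Finset ℕ) (j : ℕ) :
    ((tmin m n HH j : ℕ) : ZMod (m+n)) = (j : ZMod (m+n)) * (n : ZMod (m+n)) :=
  (Nat.find_spec (tmin_ex m n HH j)).2

lemma tmin_le [NeZero (m+n)] {HH : Finset ℕ} {j x : ℕ} (hx : x ∉ HH)
    (hres : ((x : ℕ) : ZMod (m+n)) = (j : ZMod (m+n)) * (n : ZMod (m+n))) :
    tmin m n HH j ≤ x :=
  Nat.find_min' (tmin_ex m n HH j) ⟨hx, hres⟩

lemma tmin_congr [NeZero (m+n)] (HH : Finset ℕ) {j j' : ℕ}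
    (h : ((j : ℕ) : ZMod (m+n)) = ((j' : ℕ) : ZMod (m+n))) :
    tmin m n HH j = tmin m n HH j' := by
  apply le_antisymm
  · exact tmin_le (tmin_not_mem m n HH j') (by rw [tmin_res, ← h])
  · exact tmin_le (tmin_not_mem m n HH j) (by rw [tmin_res, h])

lemma tmin_zero [NeZero (m+n)] {HH : Finset ℕ} (h0 : 0 ∉ HH) : tmin m n HH 0 = 0 := by
  have := tmin_le (m := m) (n := n) (j := 0) h0 (by push_cast; ring)
  omega

lemma tmin_step [NeZero (m+n)] {HH : Finset ℕ} (hHH : CorePair m n HH) (j : ℕ) :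
    tmin m n HH (j+1) = tmin m n HH j + n ∨ tmin m n HH j = tmin m n HH (j+1) + m := by
  set u := tmin m n HH j with hu
  set v := tmin m n HH (j+1) with hv
  have h1 : v ≤ u + n := by
    apply tmin_le (not_mem_add_n hHH (tmin_not_mem m n HH j))
    push_cast
    rw [tmin_res]
    ring
  have h2 : u ≤ v + m := by
    apply tmin_le (not_mem_add_m hHH (tmin_not_mem m n HH (j+1)))
    push_cast
    rw [tmin_res]
    push_cast
    linear_combination (cast_add_zero (m := m) (n := n))
  set d := u + n - v with hd
  have hdle : d ≤ m + n := by omega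
  have hdres : ((d : ℕ) : ZMod (m+n)) = 0 := by
    rw [hd, Nat.cast_sub (by omega)]
    rw [hv]
    push_cast
    rw [tmin_res, tmin_res]
    push_cast
    ring
  rcases eq_or_lt_of_le hdle with hdeq | hdlt
  · right; omega
  · left
    have : d = ((d : ZMod (m+n))).val := (ZMod.val_cast_of_lt hdlt).symm
    rw [hdres] at this
    simp only [ZMod.val_zero] at this
    omega

end Bridge

end Anderson

namespace Anderson

open Finset

section Bridge2

variable {m n : ℕ}

def wordOf (m n : ℕ) [NeZero (m+n)] (HH : Finset ℕ) : Finset (ZMod (m+n)) :=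
  Finset.univ.filter (fun j : ZMod (m+n) => tmin m n HH (j.val + 1) + m = tmin m n HH j.val)

lemma sfun_wordOf [NeZero (m+n)] {HH : Finset ℕ} (hHH : CorePair m n HH) (j : ℕ) :
    sfun m n (wordOf m n HH) j = (tmin m n HH j : ℤ) := by
  induction j with
  | zero => simp [sfun, tmin_zero hHH.1]
  | succ j ih =>
    have hstep : sfun m n (wordOf m n HH) (j+1)
        = sfun m n (wordOf m n HH) j + wstep m n (wordOf m n HH) j :=
      Finset.sum_range_succ _ _
    have hval : tmin m n HH (((j : ℕ) : ZMod (m+n)).val) = tmin m n HH j :=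
      tmin_congr HH (by rw [ZMod.natCast_rightInverse])
    have hval1 : tmin m n HH (((j : ℕ) : ZMod (m+n)).val + 1) = tmin m n HH (j + 1) :=
      tmin_congr HH (by push_cast; rw [ZMod.natCast_rightInverse])
    by_cases hc : ((j : ℕ) : ZMod (m+n)) ∈ wordOf m n HH
    · have hcond : tmin m n HH (j+1) + m = tmin m n HH j := by
        have := (Finset.mem_filter.mp hc).2
        omega
      have hw : wstep m n (wordOf m n HH) j = -(m : ℤ) := if_pos hc
      rw [hstep, hw, ih]
      push_cast
      omega
    · have hcond : ¬ (tmin m n HH (j+1) + m = tmin m n HH j) := by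
        intro hcontra
        exact hc (Finset.mem_filter.mpr ⟨Finset.mem_univ _, by omega⟩)
      have hdi := tmin_step hHH j
      have hup : tmin m n HH (j+1) = tmin m n HH j + n := by tauto
      have hw : wstep m n (wordOf m n HH) j = (n : ℤ) := if_neg hc
      rw [hstep, hw, ih]
      push_cast
      omega

lemma tmin_N [NeZero (m+n)] {HH : Finset ℕ} (h0 : 0 ∉ HH) : tmin m n HH (m+n) = 0 := by
  rw [tmin_congr HH (j := m+n) (j' := 0) (by rw [ZMod.natCast_self, Nat.cast_zero]),
    tmin_zero h0]

lemma card_wordOf (hN : 0 < m + n) [NeZero (m+n)] {HH : Finset ℕ} (hHH : CorePair m n HH) :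
    (wordOf m n HH).card = n := by
  have hs := sfun_wordOf hHH (m+n)
  rw [tmin_N hHH.1] at hs
  rw [sfun_eq] at hs
  have hsplit := Finset.card_filter_add_card_filter_not
    (s := Finset.range (m+n)) (p := fun i : ℕ => ((i : ZMod (m+n)) ∈ wordOf m n HH))
  rw [Finset.card_range] at hsplit
  have hcast := cast_count hN (wordOf m n HH)
  set cIn := ((Finset.range (m+n)).filter
    (fun i : ℕ => ((i : ZMod (m+n)) ∈ wordOf m n HH))).card with hcIn
  set cOut := ((Finset.range (m+n)).filter
    (fun i : ℕ => ¬ ((i : ZMod (m+n)) ∈ wordOf m n HH))).card with hcOut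
  have h1 : (cIn : ℤ) + cOut = (m : ℤ) + n := by exact_mod_cast congrArg (fun t : ℕ => (t : ℤ)) hsplit
  have h2 : (cOut : ℤ) * n - cIn * m = 0 := by push_cast at hs ⊢; omega
  have h3 : ((m : ℤ) + n) * cIn = ((m : ℤ) + n) * n := by linear_combination (n : ℤ) * h1 - h2
  have h4 : (cIn : ℤ) = n := by
    have hne : ((m : ℤ) + n) ≠ 0 := by exact_mod_cast (by omega : (m + n : ℕ) ≠ 0)
    exact mul_left_cancel₀ hne h3
  have : cIn = n := by exact_mod_cast h4
  omega

lemma goodW_wordOf [NeZero (m+n)] {HH : Finset ℕ} (hHH : CorePair m n HH) :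
    GoodW m n (wordOf m n HH) := by
  intro j _
  rw [sfun_wordOf hHH]
  exact Int.natCast_nonneg _

end Bridge2

end Anderson

namespace Anderson

open Finset

section Bridge3

variable {m n : ℕ}

def DeltaA (m n : ℕ) (A : Finset (ZMod (m+n))) (x : ℕ) : Prop :=
  ∃ j < m + n, ∃ k ≤ x, (x : ℤ) = sfun m n A j + k * (m + n)

open Classical in
noncomputable def diagOf (m n : ℕ) (A : Finset (ZMod (m+n))) : Finset ℕ :=
  (Finset.range (m*n)).filter (fun x => ¬ DeltaA m n A x)

lemma mem_diagOf {A : Finset (ZMod (m+n))} {x : ℕ} :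
    x ∈ diagOf m n A ↔ x < m * n ∧ ¬ DeltaA m n A x := by
  classical
  rw [diagOf, Finset.mem_filter, Finset.mem_range]

lemma delta_zero (hN : 0 < m + n) (A : Finset (ZMod (m+n))) : DeltaA m n A 0 :=
  ⟨0, hN, 0, le_rfl, by simp [sfun]⟩

lemma delta_add_n (hm : 0 < m) (hn : 0 < n) {A : Finset (ZMod (m+n))} (hcard : A.card = n)
    {x : ℕ} (hx : DeltaA m n A x) : DeltaA m n A (x + n) := by
  have hN : 0 < m + n := by omega
  obtain ⟨j, hj, k, hk, heq⟩ := hx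
  have hstep : sfun m n A (j+1) = sfun m n A j + wstep m n A j := Finset.sum_range_succ _ _
  by_cases hw : ((j : ℕ) : ZMod (m+n)) ∈ A
  · have hw' : wstep m n A j = -(m : ℤ) := if_pos hw
    have hkey : ((x + n : ℕ) : ℤ) = sfun m n A (j+1) + (k+1) * (m+n) := by
      push_cast
      linear_combination heq - hstep - hw'
    rcases lt_or_ge (j+1) (m+n) with hlt | hge
    · exact ⟨j+1, hlt, k+1, by omega, hkey⟩
    · have hj1 : j + 1 = m + n := by omega
      refine ⟨0, hN, k+1, by omega, ?_⟩
      rw [hj1, sum_period_zero hN hcard] at hkey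
      rw [show sfun m n A 0 = 0 by simp [sfun]]
      push_cast at hkey ⊢
      linarith
  · have hw' : wstep m n A j = (n : ℤ) := if_neg hw
    have hkey : ((x + n : ℕ) : ℤ) = sfun m n A (j+1) + k * (m+n) := by
      push_cast
      linear_combination heq - hstep - hw'
    rcases lt_or_ge (j+1) (m+n) with hlt | hge
    · exact ⟨j+1, hlt, k, by omega, hkey⟩
    · have hj1 : j + 1 = m + n := by omega
      refine ⟨0, hN, k, by omega, ?_⟩
      rw [hj1, sum_period_zero hN hcard] at hkey
      rw [show sfun m n A 0 = 0 by simp [sfun]]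
      push_cast at hkey ⊢
      linarith

lemma delta_add_m (hm : 0 < m) (hn : 0 < n) {A : Finset (ZMod (m+n))} (hcard : A.card = n)
    {x : ℕ} (hx : DeltaA m n A x) : DeltaA m n A (x + m) := by
  have hN : 0 < m + n := by omega
  obtain ⟨j, hj, k, hk, heq⟩ := hx
  have hx0 : ∃ j0, 1 ≤ j0 ∧ j0 ≤ m + n ∧ (x : ℤ) = sfun m n A j0 + k * (m+n) := by
    rcases Nat.eq_zero_or_pos j with rfl | hjpos
    · refine ⟨m + n, hN, le_rfl, ?_⟩
      rw [sum_period_zero hN hcard]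
      rw [show sfun m n A 0 = 0 by simp [sfun]] at heq
      linarith
    · exact ⟨j, hjpos, by omega, heq⟩
  obtain ⟨j0, hj01, hj0N, heq0⟩ := hx0
  set jp := j0 - 1 with hjp
  have hstep : sfun m n A j0 = sfun m n A jp + wstep m n A jp := by
    rw [show j0 = jp + 1 by omega]
    exact Finset.sum_range_succ _ _
  by_cases hw : ((jp : ℕ) : ZMod (m+n)) ∈ A
  · have hw' : wstep m n A jp = -(m : ℤ) := if_pos hw
    refine ⟨jp, by omega, k, by omega, ?_⟩
    push_cast
    linear_combination heq0 + hstep + hw'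
  · have hw' : wstep m n A jp = (n : ℤ) := if_neg hw
    refine ⟨jp, by omega, k+1, by omega, ?_⟩
    push_cast
    linear_combination heq0 + hstep + hw'

lemma delta_repr (hm : 0 < m) (hn : 0 < n) {A : Finset (ZMod (m+n))} (hcard : A.card = n)
    (a b : ℕ) : DeltaA m n A (a * m + b * n) := by
  have hN : 0 < m + n := by omega
  induction a with
  | zero =>
    induction b with
    | zero => simpa using delta_zero hN A
    | succ b ihb =>
      have := delta_add_n hm hn hcard ihb
      rwa [show 0 * m + b * n + n = 0 * m + (b+1) * n by ring] at this
  | succ a iha =>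
    have := delta_add_m hm hn hcard iha
    rwa [show a * m + b * n + m = (a+1) * m + b * n by ring] at this

lemma delta_big (hm : 0 < m) (hn : 0 < n) (hmn : Nat.Coprime m n)
    {A : Finset (ZMod (m+n))} (hcard : A.card = n) {x : ℕ} (hx : m * n ≤ x) :
    DeltaA m n A x := by
  obtain ⟨a, b, rfl⟩ := repr_lemma hm hn hmn hx
  exact delta_repr hm hn hcard a b

lemma corePair_diagOf (hm : 0 < m) (hn : 0 < n) {A : Finset (ZMod (m+n))}
    (hcard : A.card = n) : CorePair m n (diagOf m n A) := by
  have hN : 0 < m + n := by omega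
  refine ⟨?_, ⟨?_, ?_⟩, ⟨?_, ?_⟩⟩
  · rw [mem_diagOf]
    intro h
    exact h.2 (delta_zero hN A)
  · rw [mem_diagOf]
    intro h
    refine h.2 ?_
    have := delta_add_m hm hn hcard (delta_zero hN A)
    simpa using this
  · intro h hh hph
    rw [mem_diagOf] at hh ⊢
    refine ⟨by omega, fun hd => hh.2 ?_⟩
    have := delta_add_m hm hn hcard hd
    rwa [show h - m + m = h by omega] at this
  · rw [mem_diagOf]
    intro h
    refine h.2 ?_
    have := delta_add_n hm hn hcard (delta_zero hN A)
    simpa using this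
  · intro h hh hph
    rw [mem_diagOf] at hh ⊢
    refine ⟨by omega, fun hd => hh.2 ?_⟩
    have := delta_add_n hm hn hcard hd
    rwa [show h - n + n = h by omega] at this

end Bridge3

end Anderson

namespace Anderson

open Finset

section Bridge4

variable {m n : ℕ}

lemma diagOf_wordOf (hm : 0 < m) (hn : 0 < n) (hmn : Nat.Coprime m n) [NeZero (m+n)]
    {HH : Finset ℕ} (hHH : CorePair m n HH) :
    diagOf m n (wordOf m n HH) = HH := by
  have hN : 0 < m + n := by omega
  ext x
  rw [mem_diagOf]
  constructor
  · rintro ⟨hx, hnd⟩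
    by_contra hxH
    apply hnd
    have hcop : Nat.Coprime n (m+n) := (Nat.coprime_add_self_right).mpr hmn.symm
    set u := ZMod.unitOfCoprime n hcop with hu
    set j := ((x : ZMod (m+n)) * ((u⁻¹ : (ZMod (m+n))ˣ) : ZMod (m+n))).val with hj
    have hjlt : j < m + n := ZMod.val_lt _
    have hres : ((x : ℕ) : ZMod (m+n)) = ((j : ℕ) : ZMod (m+n)) * (n : ZMod (m+n)) := by
      rw [hj, ZMod.natCast_rightInverse]
      have hcoe : ((u : (ZMod (m+n))ˣ) : ZMod (m+n)) = (n : ZMod (m+n)) :=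
        ZMod.coe_unitOfCoprime n hcop
      calc (x : ZMod (m+n))
          = (x : ZMod (m+n)) * (((u⁻¹ : (ZMod (m+n))ˣ) : ZMod (m+n)) * u) := by
            rw [Units.inv_mul]; ring
        _ = _ := by rw [hcoe]; ring
    have ht := tmin_le (m := m) (n := n) hxH hres
    have hdvd : (m+n) ∣ (x - tmin m n HH j) := by
      rw [← ZMod.natCast_eq_zero_iff]
      rw [Nat.cast_sub ht, hres, tmin_res]
      ring
    obtain ⟨c, hc⟩ := hdvd
    have hcle : c ≤ x := by
      have h1 : c ≤ (m+n) * c := Nat.le_mul_of_pos_left c hN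
      omega
    refine ⟨j, hjlt, c, hcle, ?_⟩
    rw [sfun_wordOf hHH]
    have hxt : x = tmin m n HH j + (m+n) * c := by omega
    have hZ : (x : ℤ) = (tmin m n HH j : ℤ) + (((m+n) * c : ℕ) : ℤ) := by
      exact_mod_cast congrArg (fun t : ℕ => (t : ℤ)) hxt
    push_cast at hZ ⊢
    linarith
  · intro hxH
    refine ⟨bounded_of_corePair hHH hm hn hmn hxH, ?_⟩
    rintro ⟨j, hj, k, hk, heq⟩
    rw [sfun_wordOf hHH] at heq
    have hxe : x = tmin m n HH j + k * (m+n) := by exact_mod_cast heq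
    have hnm := not_mem_add_mul hHH (tmin_not_mem m n HH j) k
    rw [← hxe] at hnm
    exact hnm hxH

lemma tmin_diagOf (hm : 0 < m) (hn : 0 < n) (hmn : Nat.Coprime m n) [NeZero (m+n)]
    {A : Finset (ZMod (m+n))} (hcard : A.card = n) (hg : GoodW m n A)
    {j : ℕ} (hj : j ≤ m + n) :
    (tmin m n (diagOf m n A) j : ℤ) = sfun m n A j := by
  have hN : 0 < m + n := by omega
  have hnonneg : ∀ i : ℕ, 0 ≤ sfun m n A i := (goodW_iff_all hN hcard).mp hg
  have hdeltaself : DeltaA m n A ((sfun m n A j).toNat) := by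
    rcases lt_or_ge j (m+n) with hlt | hge
    · exact ⟨j, hlt, 0, by omega, by
        rw [Int.toNat_of_nonneg (hnonneg j)]; push_cast; ring⟩
    · have hjN : j = m + n := by omega
      refine ⟨0, hN, 0, by omega, ?_⟩
      rw [hjN, Int.toNat_of_nonneg (hnonneg (m+n)), sum_period_zero hN hcard]
      simp [sfun]
  have hresj : (((sfun m n A j).toNat : ℕ) : ZMod (m+n))
      = ((j : ℕ) : ZMod (m+n)) * (n : ZMod (m+n)) := by
    have h1 : (((sfun m n A j).toNat : ℕ) : ℤ) = sfun m n A j := Int.toNat_of_nonneg (hnonneg j)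
    have h2 : ((((sfun m n A j).toNat : ℕ) : ℤ) : ZMod (m+n))
        = ((sfun m n A j : ℤ) : ZMod (m+n)) := by rw [h1]
    rw [sfun_residue] at h2
    rwa [Int.cast_natCast] at h2
  have hnotmem : (sfun m n A j).toNat ∉ diagOf m n A := by
    rw [mem_diagOf]
    intro hmem
    exact hmem.2 hdeltaself
  have h1 : tmin m n (diagOf m n A) j ≤ (sfun m n A j).toNat := tmin_le hnotmem hresj
  -- lower bound
  have hdel : DeltaA m n A (tmin m n (diagOf m n A) j) := by
    have hnm := tmin_not_mem m n (diagOf m n A) j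
    rcases lt_or_ge (tmin m n (diagOf m n A) j) (m*n) with hlt | hge
    · by_contra hnd
      exact hnm (mem_diagOf.mpr ⟨hlt, hnd⟩)
    · exact delta_big hm hn hmn hcard hge
  obtain ⟨j', hj', k, hk, heq⟩ := hdel
  have hsame : sfun m n A j' = sfun m n A j := by
    have hres1 : ((tmin m n (diagOf m n A) j : ℕ) : ZMod (m+n))
        = ((j' : ℕ) : ZMod (m+n)) * (n : ZMod (m+n)) := by
      have := congrArg (fun t : ℤ => (t : ZMod (m+n))) heq
      rw [Int.cast_natCast] at this
      rw [this]
      push_cast [ZMod.natCast_self]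
      rw [sfun_residue]
      push_cast
      linear_combination ((k : ℕ) : ZMod (m+n)) * cast_add_zero (m := m) (n := n)
    have hres2 := tmin_res m n (diagOf m n A) j
    have hju : ((j' : ℕ) : ZMod (m+n)) = ((j : ℕ) : ZMod (m+n)) := by
      have hcop : Nat.Coprime n (m+n) := (Nat.coprime_add_self_right).mpr hmn.symm
      have hu : IsUnit ((n : ℕ) : ZMod (m+n)) :=
        ⟨ZMod.unitOfCoprime n hcop, ZMod.coe_unitOfCoprime n hcop⟩
      apply hu.mul_left_cancel
      rw [mul_comm, mul_comm (((n:ℕ) : ZMod (m+n)))]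
      rw [← hres1, hres2]
    rcases lt_or_ge j (m+n) with hlt | hge
    · have : j' = j := by
        have := congrArg ZMod.val hju
        rwa [ZMod.val_cast_of_lt hj', ZMod.val_cast_of_lt hlt] at this
      rw [this]
    · have hjN : j = m + n := by omega
      have hj'0 : j' = 0 := by
        have hcast : ((j' : ℕ) : ZMod (m+n)) = ((0 : ℕ) : ZMod (m+n)) := by
          rw [hju, hjN]
          simp [ZMod.natCast_self]
        have := congrArg ZMod.val hcast
        rwa [ZMod.val_cast_of_lt hj', ZMod.val_cast_of_lt hN] at this
      rw [hj'0, hjN, sum_period_zero hN hcard]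
      simp [sfun]
  have h2 : sfun m n A j ≤ (tmin m n (diagOf m n A) j : ℤ) := by
    rw [heq, hsame]
    have : (0 : ℤ) ≤ (k : ℤ) * ((m : ℤ) + n) := by positivity
    linarith
  have h1' : (tmin m n (diagOf m n A) j : ℤ) ≤ sfun m n A j := by
    have := Int.toNat_of_nonneg (hnonneg j)
    omega
  omega

lemma wordOf_diagOf (hm : 0 < m) (hn : 0 < n) (hmn : Nat.Coprime m n) [NeZero (m+n)]
    {A : Finset (ZMod (m+n))} (hcard : A.card = n) (hg : GoodW m n A) :
    wordOf m n (diagOf m n A) = A := by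
  have hN : 0 < m + n := by omega
  ext jz
  rw [wordOf, Finset.mem_filter]
  have hv : jz.val < m + n := ZMod.val_lt jz
  have hk1 : (tmin m n (diagOf m n A) (jz.val + 1) : ℤ) = sfun m n A (jz.val + 1) :=
    tmin_diagOf hm hn hmn hcard hg (by omega)
  have hk0 : (tmin m n (diagOf m n A) jz.val : ℤ) = sfun m n A jz.val :=
    tmin_diagOf hm hn hmn hcard hg (by omega)
  have hstep : sfun m n A (jz.val + 1) = sfun m n A jz.val + wstep m n A jz.val :=
    Finset.sum_range_succ _ _
  have hcast : ((jz.val : ℕ) : ZMod (m+n)) = jz := ZMod.natCast_rightInverse jz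
  constructor
  · rintro ⟨-, hcond⟩
    by_contra hmem
    have hw : wstep m n A jz.val = (n : ℤ) := by
      rw [wstep, hcast, if_neg hmem]
    have : (tmin m n (diagOf m n A) (jz.val + 1) : ℤ) + m
        = (tmin m n (diagOf m n A) jz.val : ℤ) := by exact_mod_cast congrArg (fun t : ℕ => (t : ℤ)) hcond
    rw [hk1, hk0, hstep, hw] at this
    have : (m : ℤ) + n = 0 := by linarith
    have : (m + n : ℕ) = 0 := by exact_mod_cast this
    omega
  · intro hmem
    refine ⟨Finset.mem_univ _, ?_⟩
    have hw : wstep m n A jz.val = -(m : ℤ) := by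
      rw [wstep, hcast, if_pos hmem]
    have hZ : (tmin m n (diagOf m n A) (jz.val + 1) : ℤ) + m
        = (tmin m n (diagOf m n A) jz.val : ℤ) := by
      rw [hk1, hk0, hstep, hw]
      ring
    exact_mod_cast hZ

end Bridge4

end Anderson

namespace Anderson

open Finset

lemma zero_not_mem_HB {D : Finset (ℕ × ℕ)} (hD : IsYoung D) : 0 ∉ HB D := by
  intro hmem
  obtain ⟨y, hy, heq⟩ := mem_HB.mp hmem
  have h0y : (0, y) ∈ D := (mem_iff_col hD).mpr hy
  have := (mem_iff_row hD).mp h0y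
  omega

end Anderson

open Anderson

/-- **Anderson's theorem.** For coprime positive `m, n`, the set of Young diagrams that
are simultaneously `m`-cores and `n`-cores is finite of cardinality
`(m+n choose n)/(m+n)`. -/
theorem card_mn_cores (m n : ℕ) (hm : 0 < m) (hn : 0 < n) (hmn : Nat.Coprime m n) :
    {D : Finset (ℕ × ℕ) | IsYoung D ∧ IsCore m D ∧ IsCore n D}.Finite ∧
      Nat.card {D : Finset (ℕ × ℕ) | IsYoung D ∧ IsCore m D ∧ IsCore n D} =
        (m + n).choose n / (m + n) := by
  classical
  have hN : 0 < m + n := by omega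
  haveI : NeZero (m+n) := ⟨by omega⟩
  set SF := ((Finset.range (m*n)).powerset).filter (CorePair m n) with hSF
  set GS := (((Finset.univ : Finset (ZMod (m+n))).powersetCard n).filter (GoodW m n)) with hGS
  have hmemSF : ∀ HH : Finset ℕ, HH ∈ SF ↔ (HH ⊆ Finset.range (m*n) ∧ CorePair m n HH) := by
    intro HH
    rw [hSF, Finset.mem_filter, Finset.mem_powerset]
  have hmemGS : ∀ A : Finset (ZMod (m+n)), A ∈ GS ↔ (A.card = n ∧ GoodW m n A) := by
    intro A
    rw [hGS, Finset.mem_filter, Finset.mem_powersetCard]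
    constructor
    · rintro ⟨⟨-, h1⟩, h2⟩; exact ⟨h1, h2⟩
    · rintro ⟨h1, h2⟩; exact ⟨⟨Finset.subset_univ _, h1⟩, h2⟩
  have hcardeq : SF.card = GS.card := by
    apply Finset.card_bij' (i := fun HH _ => wordOf m n HH) (j := fun A _ => diagOf m n A)
    · intro HH hHH
      have hcp := ((hmemSF HH).mp hHH).2
      exact (hmemGS _).mpr ⟨card_wordOf hN hcp, goodW_wordOf hcp⟩
    · intro A hA
      have h := (hmemGS A).mp hA
      refine (hmemSF _).mpr ⟨?_, corePair_diagOf hm hn h.1⟩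
      intro x hx
      rw [mem_diagOf] at hx
      exact Finset.mem_range.mpr hx.1
    · intro HH hHH
      exact diagOf_wordOf hm hn hmn ((hmemSF HH).mp hHH).2
    · intro A hA
      have h := (hmemGS A).mp hA
      exact wordOf_diagOf hm hn hmn h.1 h.2
  set DS := SF.image psi with hDS
  have hset : {D : Finset (ℕ × ℕ) | IsYoung D ∧ IsCore m D ∧ IsCore n D} = ↑DS := by
    ext D
    simp only [Set.mem_setOf_eq, hDS, Finset.coe_image, Set.mem_image, Finset.mem_coe]
    constructor
    · rintro ⟨hY, hCm, hCn⟩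
      have h0 : 0 ∉ HB D := zero_not_mem_HB hY
      have hcp : CorePair m n (HB D) :=
        ⟨h0, (isCore_iff hY hm).mp hCm, (isCore_iff hY hn).mp hCn⟩
      refine ⟨HB D, (hmemSF _).mpr ⟨?_, hcp⟩, psi_HB hY⟩
      intro x hx
      exact Finset.mem_range.mpr (bounded_of_corePair hcp hm hn hmn hx)
    · rintro ⟨HH, hHH, rfl⟩
      have h := (hmemSF _).mp hHH
      have h0 : 0 ∉ HH := h.2.1
      refine ⟨psi_young, ?_, ?_⟩
      · exact (isCore_iff psi_young hm).mpr (by rw [HB_psi h0]; exact h.2.2.1)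
      · exact (isCore_iff psi_young hn).mpr (by rw [HB_psi h0]; exact h.2.2.2)
  constructor
  · rw [hset]
    exact DS.finite_toSet
  · rw [hset]
    have hnc : Nat.card (↑DS : Set (Finset (ℕ × ℕ))) = DS.card := by
      rw [Nat.card_coe_set_eq, Set.ncard_coe_finset]
    rw [hnc]
    have hinj : DS.card = SF.card := by
      rw [hDS]
      apply Finset.card_image_of_injOn
      intro a ha b hb heq
      simp only [Finset.mem_coe] at ha hb
      have h0a : 0 ∉ a := ((hmemSF a).mp ha).2.1
      have h0b : 0 ∉ b := ((hmemSF b).mp hb).2.1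
      calc a = HB (psi a) := (HB_psi h0a).symm
        _ = HB (psi b) := by rw [heq]
        _ = b := HB_psi h0b
    have hgood : GS.card * (m+n) = (m+n).choose n := card_goodWS hm hn hmn
    rw [hinj, hcardeq, ← hgood, Nat.mul_div_cancel _ hN]
end

section
/- Let m and n be coprime positive integers. Then the set of 0-normalized Γ_{m,n}-semimodules is finite and has cardinality (m+n−1)!/(m!·n!) = binom(m+n, n)/(m+n). -/
namespace CardSM

@[ext] structure CSeq (m n : ℕ) where
  c : ℕ → ℤ
  zero : c 0 = 0
  nonneg : ∀ k, 0 ≤ c k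
  step : ∀ k, c (k+1) ≤ c k + n
  per : ∀ k, c (k + m) = c k
  dvd : ∀ k, (m:ℤ) ∣ c k - k * n

variable {m n : ℕ}

lemma CSeq.per' (x : CSeq m n) (k t : ℕ) : x.c (k + m * t) = x.c k := by
  induction t with
  | zero => simp
  | succ t ih => rw [Nat.mul_succ, ← Nat.add_assoc, x.per, ih]

lemma CSeq.congr_mod (x : CSeq m n) {i j : ℕ} (h : i ≡ j [MOD m]) : x.c i = x.c j := by
  rcases le_total i j with hle | hle
  · obtain ⟨t, ht⟩ := (Nat.modEq_iff_dvd' hle).mp h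
    have : j = i + m * t := by omega
    rw [this, x.per']
  · obtain ⟨t, ht⟩ := (Nat.modEq_iff_dvd' hle).mp h.symm
    have : i = j + m * t := by omega
    rw [this, x.per']

end CardSM

namespace CardSM
variable {m n : ℕ}

lemma exists_inv (hm : 0 < m) (hmn : Nat.Coprime m n) : ∃ n' : ℕ, n' * n ≡ 1 [MOD m] := by
  have hb : Nat.gcd m n = m * Nat.gcdA m n + n * Nat.gcdB m n := Nat.gcd_eq_gcd_ab m n
  rw [hmn] at hb
  have hm' : (m:ℤ) ≠ 0 := by exact_mod_cast hm.ne'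
  refine ⟨(Nat.gcdB m n % m).toNat, (Nat.modEq_iff_dvd).mpr ?_⟩
  have h0 : 0 ≤ Nat.gcdB m n % m := Int.emod_nonneg _ hm'
  push_cast [Int.toNat_of_nonneg h0]
  have h1 : (Nat.gcdB m n % m) * n ≡ Nat.gcdB m n * n [ZMOD m] :=
    Int.ModEq.mul_right n (Int.emod_emod_of_dvd _ dvd_rfl)
  have hb' : (1:ℤ) = m * Nat.gcdA m n + n * Nat.gcdB m n := by exact_mod_cast hb
  have h2 : Nat.gcdB m n * n ≡ 1 [ZMOD m] :=
    Int.modEq_iff_dvd.mpr ⟨Nat.gcdA m n, by linear_combination hb'⟩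
  exact Int.modEq_iff_dvd.mp (h1.trans h2)

end CardSM

namespace CardSM
variable {m n : ℕ}

lemma mem_add_nsmul_m {Δ : Set ℤ} (h : IsSemimodule m n Δ) {x : ℤ} (hx : x ∈ Δ) (t : ℕ) :
    x + t * (m:ℤ) ∈ Δ := by
  induction t with
  | zero => simpa using hx
  | succ t ih => have := h.2.2.1 _ ih; push_cast at this ⊢; convert this using 1; ring

lemma mul_n_mem {Δ : Set ℤ} (h : IsSemimodule m n Δ) (k : ℕ) : ((k:ℤ) * n) ∈ Δ := by
  induction k with
  | zero => simpa using h.2.1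
  | succ k ih => have := h.2.2.2 _ ih; push_cast at this ⊢; convert this using 1; ring

/-- the set of candidates for the minimum in residue class `k*n mod m`. -/
def SS (m n : ℕ) (Δ : Set ℤ) (k : ℕ) : Set ℕ := {t : ℕ | (t:ℤ) ∈ Δ ∧ t ≡ k*n [MOD m]}

lemma SS_nonempty {Δ : Set ℤ} (h : IsSemimodule m n Δ) (k : ℕ) : (SS m n Δ k).Nonempty :=
  ⟨k * n, by push_cast; exact mul_n_mem h k, Nat.ModEq.refl _⟩

noncomputable def toC {Δ : Set ℤ} (h : IsSemimodule m n Δ) (hn : 0 < n) : CSeq m n where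
  c k := ((sInf (SS m n Δ k) : ℕ) : ℤ)
  zero := by
    have h0 : 0 ∈ SS m n Δ 0 := ⟨by simpa using h.2.1, by simp [Nat.ModEq]⟩
    have := Nat.sInf_le h0
    simpa using Nat.le_antisymm this (Nat.zero_le _)
  nonneg k := by exact_mod_cast Nat.zero_le _
  step k := by
    obtain ⟨h1, h2⟩ := Nat.sInf_mem (SS_nonempty h k)
    have hmem : sInf (SS m n Δ k) + n ∈ SS m n Δ (k+1) := by
      refine ⟨by push_cast; exact h.2.2.2 _ h1, ?_⟩
      have := h2.add_right n
      simpa [Nat.succ_mul] using this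
    have := Nat.sInf_le hmem
    push_cast
    exact_mod_cast this
  per k := by
    have : SS m n Δ (k + m) = SS m n Δ k := by
      ext t
      constructor <;> intro ⟨h1, h2⟩ <;> refine ⟨h1, ?_⟩
      · exact h2.trans (by simp [Nat.add_mul, Nat.ModEq, Nat.add_mul_mod_self_left])
      · exact h2.trans (by simp [Nat.add_mul, Nat.ModEq, Nat.add_mul_mod_self_left])
    rw [this]
  dvd k := by
    obtain ⟨h1, h2⟩ := Nat.sInf_mem (SS_nonempty h k)
    have hd := (Nat.ModEq.dvd h2)
    push_cast at hd
    rw [show ((sInf (SS m n Δ k) : ℕ) : ℤ) - k*n = -((k:ℤ)*n - sInf (SS m n Δ k)) by ring]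
    exact dvd_neg.mpr hd

end CardSM

namespace CardSM
variable {m n n' : ℕ}

def ofC (n' : ℕ) (x : CSeq m n) : Set ℤ := {z : ℤ | 0 ≤ z ∧ x.c ((n' * z.toNat) % m) ≤ z}

lemma ofC_isSemimodule (hm : 0 < m) (hn' : n' * n ≡ 1 [MOD m]) (x : CSeq m n) :
    IsSemimodule m n (ofC n' x) := by
  refine ⟨fun z hz => hz.1, ⟨le_refl 0, ?_⟩, fun z hz => ⟨by linarith [hz.1, Int.natCast_nonneg m], ?_⟩,
    fun z hz => ⟨by linarith [hz.1, Int.natCast_nonneg n], ?_⟩⟩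
  · simpa using le_of_eq x.zero
  · -- z + m
    have h0 : (0:ℤ) ≤ z := hz.1
    have ht : (z + m).toNat = z.toNat + m := by omega
    rw [ht]
    have : x.c ((n' * (z.toNat + m)) % m) = x.c ((n' * z.toNat) % m) := by
      apply x.congr_mod
      simp [Nat.ModEq, Nat.mul_add, Nat.add_mul_mod_self_left]
    rw [this]
    have := hz.2
    omega
  · -- z + n
    have h0 : (0:ℤ) ≤ z := hz.1
    have ht : (z + n).toNat = z.toNat + n := by omega
    rw [ht]
    have h1 : x.c ((n' * (z.toNat + n)) % m) = x.c ((n' * z.toNat) % m + 1) := by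
      apply x.congr_mod
      calc (n' * (z.toNat + n)) % m ≡ n' * (z.toNat + n) [MOD m] := Nat.mod_modEq _ _
        _ = n' * z.toNat + n' * n := by ring
        _ ≡ n' * z.toNat % m + 1 [MOD m] := Nat.ModEq.add (Nat.mod_modEq _ _).symm hn'
    rw [h1]
    have := x.step ((n' * z.toNat) % m)
    have := hz.2
    omega

end CardSM

namespace CardSM
variable {m n n' : ℕ}

lemma idx_mod (hn' : n' * n ≡ 1 [MOD m]) (z : ℕ) : ((n' * z) % m) * n ≡ z [MOD m] :=
  calc ((n' * z) % m) * n ≡ (n' * z) * n [MOD m] := (Nat.mod_modEq _ _).mul_right n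
    _ = z * (n' * n) := by ring
    _ ≡ z * 1 [MOD m] := hn'.mul_left z
    _ = z := by ring

lemma ofC_toC (hm : 0 < m) (hn : 0 < n) (hn' : n' * n ≡ 1 [MOD m]) {Δ : Set ℤ}
    (h : IsSemimodule m n Δ) : ofC n' (toC h hn) = Δ := by
  ext z
  constructor
  · rintro ⟨h0, h1⟩
    set k := (n' * z.toNat) % m with hk
    obtain ⟨ht1, ht2⟩ := Nat.sInf_mem (SS_nonempty h k)
    have hmod : sInf (SS m n Δ k) ≡ z.toNat [MOD m] := ht2.trans (idx_mod hn' z.toNat)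
    have hle : sInf (SS m n Δ k) ≤ z.toNat := by
      have : ((sInf (SS m n Δ k) : ℕ) : ℤ) ≤ z := h1
      omega
    obtain ⟨s, hs⟩ := (Nat.modEq_iff_dvd' hle).mp hmod
    have h1' : z.toNat = sInf (SS m n Δ k) + m * s := by omega
    have hz : z = ((sInf (SS m n Δ k) : ℕ) : ℤ) + s * m := by
      have h2' := congrArg (Nat.cast : ℕ → ℤ) h1'
      push_cast at h2'
      rw [Int.toNat_of_nonneg h0] at h2'
      linarith [h2']
    rw [hz]
    exact mem_add_nsmul_m h ht1 s
  · intro hz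
    have h0 : 0 ≤ z := h.1 z hz
    refine ⟨h0, ?_⟩
    have hmem : z.toNat ∈ SS m n Δ ((n' * z.toNat) % m) := by
      refine ⟨by rwa [Int.toNat_of_nonneg h0], (idx_mod hn' z.toNat).symm⟩
    have := Nat.sInf_le hmem
    show ((sInf _ : ℕ) : ℤ) ≤ z
    omega

lemma toC_ofC (hm : 0 < m) (hn : 0 < n) (hn' : n' * n ≡ 1 [MOD m]) (x : CSeq m n) :
    toC (ofC_isSemimodule hm hn' x) hn = x := by
  ext k
  show ((sInf (SS m n (ofC n' x) k) : ℕ) : ℤ) = x.c k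
  have hmodk : (x.c k).toNat ≡ k * n [MOD m] := by
    have := x.dvd k
    have h0 := x.nonneg k
    rw [Nat.modEq_iff_dvd, Int.toNat_of_nonneg h0]
    have hd := (Int.dvd_neg).mpr (x.dvd k)
    rw [neg_sub] at hd
    exact_mod_cast hd
  have hidx : ∀ t : ℕ, t ≡ k * n [MOD m] → (n' * t) % m ≡ k [MOD m] := by
    intro t ht
    have h1 : (n' * t) % m ≡ n' * t [MOD m] := Nat.mod_modEq _ _
    have h2 : n' * t ≡ n' * (k * n) [MOD m] := ht.mul_left n'
    have h3 : n' * (k * n) = k * (n' * n) := by ring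
    have h4 : k * (n' * n) ≡ k [MOD m] := by simpa using hn'.mul_left k
    exact (h1.trans h2).trans (h3 ▸ h4)
  have hmem : (x.c k).toNat ∈ SS m n (ofC n' x) k := by
    refine ⟨⟨by positivity, ?_⟩, hmodk⟩
    rw [Int.toNat_natCast]
    rw [x.congr_mod (hidx _ hmodk)]
    rw [Int.toNat_of_nonneg (x.nonneg k)]
  have hlb : ∀ t ∈ SS m n (ofC n' x) k, (x.c k).toNat ≤ t := by
    rintro t ⟨⟨ht0, ht1⟩, ht2⟩
    rw [Int.toNat_natCast] at ht1
    rw [x.congr_mod (hidx _ ht2)] at ht1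
    omega
  have h1 := Nat.sInf_le hmem
  have h2 := hlb _ (Nat.sInf_mem ⟨_, hmem⟩)
  have : sInf (SS m n (ofC n' x) k) = (x.c k).toNat := le_antisymm h1 h2
  rw [this, Int.toNat_of_nonneg (x.nonneg k)]

noncomputable def equivC (hm : 0 < m) (hn : 0 < n) (hn' : n' * n ≡ 1 [MOD m]) :
    {Δ : Set ℤ // IsSemimodule m n Δ} ≃ CSeq m n where
  toFun Δ := toC Δ.2 hn
  invFun x := ⟨ofC n' x, ofC_isSemimodule hm hn' x⟩
  left_inv Δ := Subtype.ext (ofC_toC hm hn hn' Δ.2)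
  right_inv x := toC_ofC hm hn hn' x

end CardSM

namespace CardSM
variable {m n : ℕ}

/-- number of positions `i < j` (read cyclically) that are in `s`. -/
def Pcnt (m n : ℕ) (s : Finset (ZMod (m+n))) (j : ℕ) : ℕ :=
  ((Finset.range j).filter (fun i => ((i:ℕ) : ZMod (m+n)) ∈ s)).card

/-- the word associated to `s` stays weakly below the diagonal. -/
def GoodW (m n : ℕ) (s : Finset (ZMod (m+n))) : Prop :=
  ∀ j ≤ m + n, m * j ≤ (m+n) * Pcnt m n s j

def rotW (m n : ℕ) (r : ZMod (m+n)) (s : Finset (ZMod (m+n))) : Finset (ZMod (m+n)) :=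
  s.image (· + r)

lemma mem_rotW {r x : ZMod (m+n)} {s : Finset (ZMod (m+n))} :
    x ∈ rotW m n r s ↔ x - r ∈ s := by
  simp only [rotW, Finset.mem_image]
  constructor
  · rintro ⟨y, hy, rfl⟩; simpa using hy
  · intro h; exact ⟨x - r, h, by ring⟩

lemma card_rotW (r : ZMod (m+n)) (s : Finset (ZMod (m+n))) : (rotW m n r s).card = s.card :=
  Finset.card_image_of_injective _ (add_left_injective r)

lemma rotW_rotW (r r' : ZMod (m+n)) (s : Finset (ZMod (m+n))) :
    rotW m n r (rotW m n r' s) = rotW m n (r' + r) s := by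
  ext x
  simp only [mem_rotW, sub_sub]
  rw [add_comm r' r]

lemma rotW_zero (s : Finset (ZMod (m+n))) : rotW m n 0 s = s := by
  simp [rotW]

lemma Pcnt_succ (s : Finset (ZMod (m+n))) (j : ℕ) :
    Pcnt m n s (j+1) = Pcnt m n s j + (if ((j:ℕ) : ZMod (m+n)) ∈ s then 1 else 0) := by
  simp only [Pcnt, Finset.range_add_one, Finset.filter_insert]
  split <;> simp [Finset.card_insert_of_notMem, Finset.notMem_range_self, Finset.mem_filter]

lemma Pcnt_N (hN : 0 < m + n) (s : Finset (ZMod (m+n))) : Pcnt m n s (m+n) = s.card := by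
  haveI : NeZero (m+n) := ⟨hN.ne'⟩
  apply Finset.card_nbij (fun i => ((i:ℕ) : ZMod (m+n)))
  · intro i hi
    exact (Finset.mem_filter.mp hi).2
  · intro i hi i' hi' hii'
    simp only [Finset.coe_filter, Set.mem_setOf_eq, Finset.mem_range] at hi hi'
    have := congrArg ZMod.val hii'
    rwa [ZMod.val_cast_of_lt hi.1, ZMod.val_cast_of_lt hi'.1] at this
  · intro x hx
    refine ⟨x.val, ?_, ZMod.natCast_zmod_val x⟩
    simp only [Finset.coe_filter, Set.mem_setOf_eq, Finset.mem_range]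
    exact ⟨ZMod.val_lt x, by rwa [ZMod.natCast_zmod_val]⟩

lemma Pcnt_add_N (hN : 0 < m + n) (s : Finset (ZMod (m+n))) (j : ℕ) :
    Pcnt m n s (j + (m+n)) = Pcnt m n s j + s.card := by
  induction j with
  | zero =>
    have := Pcnt_N hN s
    simp only [Nat.zero_add]
    simpa [Pcnt] using this
  | succ j ih =>
    have h1 : j + 1 + (m+n) = (j + (m+n)) + 1 := by ring
    rw [h1, Pcnt_succ, ih, Pcnt_succ]
    have : (((j + (m+n) :ℕ)) : ZMod (m+n)) = ((j:ℕ) : ZMod (m+n)) := by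
      rw [Nat.cast_add, ZMod.natCast_self, add_zero]
    rw [this]
    ring

def Fw (m n : ℕ) (s : Finset (ZMod (m+n))) (j : ℕ) : ℤ :=
  (m+n : ℤ) * Pcnt m n s j - m * j

lemma Fw_add_N (hN : 0 < m + n) {s : Finset (ZMod (m+n))} (hcard : s.card = m) (j : ℕ) :
    Fw m n s (j + (m+n)) = Fw m n s j := by
  simp only [Fw, Pcnt_add_N hN s j, hcard]
  push_cast
  ring

lemma Fw_mod (hN : 0 < m + n) {s : Finset (ZMod (m+n))} (hcard : s.card = m) (j : ℕ) :
    Fw m n s j = Fw m n s (j % (m+n)) := by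
  induction j using Nat.strong_induction_on with
  | _ j ih =>
    rcases lt_or_ge j (m+n) with h | h
    · rw [Nat.mod_eq_of_lt h]
    · obtain ⟨j', rfl⟩ : ∃ j', j = j' + (m+n) := ⟨j - (m+n), by omega⟩
      rw [Fw_add_N hN hcard, ih j' (by omega), Nat.add_mod_right]

lemma Fw_inj (hmn : Nat.Coprime m n) (hN : 0 < m + n) {s : Finset (ZMod (m+n))}
    {r r' : ℕ} (hr : r < m + n) (hr' : r' < m + n) (h : Fw m n s r = Fw m n s r') : r = r' := by
  have key : (m+n : ℤ) * Pcnt m n s r + m * r' = (m+n : ℤ) * Pcnt m n s r' + m * r := by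
    simp only [Fw] at h; linarith
  have keyN : (m+n) * Pcnt m n s r + m * r' = (m+n) * Pcnt m n s r' + m * r := by
    exact_mod_cast key
  have z1 : (m+n) * Pcnt m n s r ≡ 0 [MOD m+n] := Nat.modEq_zero_iff_dvd.mpr (Dvd.intro _ rfl)
  have z2 : (m+n) * Pcnt m n s r' ≡ 0 [MOD m+n] := Nat.modEq_zero_iff_dvd.mpr (Dvd.intro _ rfl)
  have h1 : m * r' ≡ m * r [MOD m+n] :=
    calc m * r' = 0 + m * r' := (zero_add _).symm
      _ ≡ (m+n) * Pcnt m n s r + m * r' [MOD m+n] := (z1.add_right _).symm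
      _ = (m+n) * Pcnt m n s r' + m * r := keyN
      _ ≡ 0 + m * r [MOD m+n] := z2.add_right _
      _ = m * r := zero_add _
  have hc : Nat.Coprime m (m+n) := by
    rw [Nat.add_comm]
    exact Nat.coprime_add_self_right.mpr hmn
  have h2 : r' ≡ r [MOD m+n] := Nat.ModEq.cancel_left_of_coprime hc.symm h1
  have h3 := h2
  unfold Nat.ModEq at h3
  rw [Nat.mod_eq_of_lt hr', Nat.mod_eq_of_lt hr] at h3
  omega

end CardSM

namespace CardSM
variable {m n : ℕ}

lemma Pcnt_rot (t : ℕ) (s : Finset (ZMod (m+n))) (j : ℕ) :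
    Pcnt m n s (t + j) = Pcnt m n s t + Pcnt m n (rotW m n (-(t : ZMod (m+n))) s) j := by
  induction j with
  | zero => simp [Pcnt]
  | succ j ih =>
    rw [← Nat.add_assoc, Pcnt_succ, Pcnt_succ, ih]
    have : (((t + j : ℕ)) : ZMod (m+n)) ∈ s ↔ ((j:ℕ) : ZMod (m+n)) ∈ rotW m n (-(t : ZMod (m+n))) s := by
      rw [mem_rotW, sub_neg_eq_add]
      push_cast
      rw [add_comm (t:ZMod (m+n))]
    rw [if_congr this rfl rfl]
    ring

lemma goodW_rot_iff (hN : 0 < m + n) {s : Finset (ZMod (m+n))} (hcard : s.card = m)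
    (t : ℕ) :
    GoodW m n (rotW m n (-(t : ZMod (m+n))) s) ↔ ∀ j ≤ m + n, Fw m n s t ≤ Fw m n s (t + j) := by
  have key : ∀ j : ℕ, ((m:ℤ) * j ≤ (m+n) * Pcnt m n (rotW m n (-(t : ZMod (m+n))) s) j)
      ↔ Fw m n s t ≤ Fw m n s (t + j) := by
    intro j
    have h1 : ((Pcnt m n s (t+j) : ℤ)) = Pcnt m n s t + Pcnt m n (rotW m n (-(t : ZMod (m+n))) s) j := by
      exact_mod_cast Pcnt_rot t s j
    simp only [Fw]
    push_cast
    constructor <;> intro h <;> nlinarith [h1]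
  constructor
  · intro hg j hj
    exact (key j).mp (by exact_mod_cast hg j hj)
  · intro hg j hj
    exact_mod_cast (key j).mpr (hg j hj)

lemma exists_unique_goodW (hm : 0 < m) (hn : 0 < n) (hmn : Nat.Coprime m n)
    {s : Finset (ZMod (m+n))} (hcard : s.card = m) :
    ∃! r : ZMod (m+n), GoodW m n (rotW m n r s) := by
  have hN : 0 < m + n := by omega
  haveI : NeZero (m+n) := ⟨hN.ne'⟩
  -- pick the argmin of Fw over range (m+n)
  obtain ⟨t0, ht0r, ht0min⟩ := Finset.exists_min_image (Finset.range (m+n)) (Fw m n s)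
    ⟨0, Finset.mem_range.mpr hN⟩
  rw [Finset.mem_range] at ht0r
  have hglobal : ∀ j : ℕ, Fw m n s t0 ≤ Fw m n s j := by
    intro j
    rw [Fw_mod hN hcard j]
    exact ht0min _ (Finset.mem_range.mpr (Nat.mod_lt _ hN))
  refine ⟨-(t0 : ZMod (m+n)), ?_, ?_⟩
  · exact (goodW_rot_iff hN hcard t0).mpr (fun j _ => hglobal (t0 + j))
  · intro r hr
    set t := (-r).val with htdef
    have htr : r = -(t : ZMod (m+n)) := by rw [htdef, ZMod.natCast_zmod_val, neg_neg]
    have htlt : t < m + n := ZMod.val_lt _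
    rw [htr] at hr
    have hloc := (goodW_rot_iff hN hcard t).mp hr
    -- t is also a global minimizer among [0, m+n)
    have hmin' : ∀ j, j < m + n → Fw m n s t ≤ Fw m n s j := by
      intro j hj
      rcases le_or_gt t j with h | h
      · have := hloc (j - t) (by omega)
        rwa [show t + (j - t) = j by omega] at this
      · have := hloc (j + (m+n) - t) (by omega)
        rw [show t + (j + (m+n) - t) = j + (m+n) by omega, Fw_add_N hN hcard] at this
        exact this
    have heq : Fw m n s t = Fw m n s t0 :=
      le_antisymm (hmin' t0 ht0r) (hglobal t)
    rw [htr, Fw_inj hmn hN htlt ht0r heq]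
end CardSM

namespace CardSM
variable {m n : ℕ}

noncomputable def equivRot (hm : 0 < m) (hn : 0 < n) (hmn : Nat.Coprime m n) :
    ({s : Finset (ZMod (m+n)) // s.card = m ∧ GoodW m n s} × ZMod (m+n)) ≃
      {s : Finset (ZMod (m+n)) // s.card = m} where
  toFun p := ⟨rotW m n p.2 p.1.1, by rw [card_rotW]; exact p.1.2.1⟩
  invFun s :=
    let r := (exists_unique_goodW hm hn hmn s.2).exists.choose
    (⟨rotW m n r s.1, by rw [card_rotW]; exact s.2,
      (exists_unique_goodW hm hn hmn s.2).exists.choose_spec⟩, -r)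
  left_inv := by
    rintro ⟨⟨g, hgc, hgw⟩, r⟩
    have hcard : (rotW m n r g).card = m := by rw [card_rotW]; exact hgc
    have hGood : GoodW m n (rotW m n (-r) (rotW m n r g)) := by
      rw [rotW_rotW, add_neg_cancel, rotW_zero]; exact hgw
    have hu := (exists_unique_goodW hm hn hmn hcard)
    have hch := hu.exists.choose_spec
    have : hu.exists.choose = -r := hu.unique hch hGood
    simp only [Prod.mk.injEq, Subtype.mk.injEq]
    constructor
    · rw [this, rotW_rotW, add_neg_cancel, rotW_zero]
    · rw [this, neg_neg]
  right_inv := by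
    rintro ⟨s, hs⟩
    simp only [Subtype.mk.injEq]
    rw [rotW_rotW, add_neg_cancel, rotW_zero]

lemma card_goodW (hm : 0 < m) (hn : 0 < n) (hmn : Nat.Coprime m n) :
    Nat.card {s : Finset (ZMod (m+n)) // s.card = m ∧ GoodW m n s} * (m + n)
      = (m+n).choose m := by
  have hN : 0 < m + n := by omega
  haveI : NeZero (m+n) := ⟨hN.ne'⟩
  have h1 := Nat.card_congr (equivRot hm hn hmn)
  rw [Nat.card_prod] at h1
  have h2 : Nat.card (ZMod (m+n)) = m + n := by rw [Nat.card_eq_fintype_card, ZMod.card]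
  have h3 : Nat.card {s : Finset (ZMod (m+n)) // s.card = m} = (m+n).choose m := by
    rw [Nat.card_eq_fintype_card]
    have := Fintype.card_finset_len (α := ZMod (m+n)) m
    rw [Fintype.card_finset_len, ZMod.card]
  rw [h2, h3] at h1
  exact h1

end CardSM

namespace CardSM
variable {m n : ℕ}

noncomputable def dZ (x : CSeq m n) (k : ℕ) : ℤ := ((k:ℤ) * n - x.c k) / m

lemma dZ_spec (hm : 0 < m) (x : CSeq m n) (k : ℕ) : (m:ℤ) * dZ x k = (k:ℤ) * n - x.c k := by
  exact Int.mul_ediv_cancel' (dvd_sub_comm.mp (x.dvd k))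

lemma dZ_zero (hm : 0 < m) (x : CSeq m n) : dZ x 0 = 0 := by
  have := dZ_spec hm x 0
  rw [x.zero] at this
  have hm' : (m:ℤ) ≠ 0 := by exact_mod_cast hm.ne'
  simp only [Nat.cast_zero, zero_mul, sub_zero] at this
  exact (mul_eq_zero.mp this).resolve_left hm'

lemma dZ_mono (hm : 0 < m) (x : CSeq m n) : Monotone (dZ x) := by
  apply monotone_nat_of_le_succ
  intro k
  have h1 := dZ_spec hm x k
  have h2 := dZ_spec hm x (k+1)
  have h3 := x.step k
  have hm' : (0:ℤ) < m := by exact_mod_cast hm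
  have : (m:ℤ) * dZ x k ≤ (m:ℤ) * dZ x (k+1) := by push_cast at h1 h2 ⊢; linarith
  exact le_of_mul_le_mul_left this hm'

lemma dZ_nonneg (hm : 0 < m) (x : CSeq m n) (k : ℕ) : 0 ≤ dZ x k := by
  have := dZ_mono hm x (Nat.zero_le k)
  rwa [dZ_zero hm x] at this

lemma dZ_lt (hm : 0 < m) (hn : 0 < n) (x : CSeq m n) {k : ℕ} (hk : k < m) : dZ x k < n := by
  have h1 := dZ_spec hm x k
  have h2 := x.nonneg k
  have hm' : (0:ℤ) < m := by exact_mod_cast hm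
  have : (m:ℤ) * dZ x k < (m:ℤ) * n := by
    have hkm : (k:ℤ) + 1 ≤ (m:ℤ) := by exact_mod_cast hk
    have hn' : (0:ℤ) < n := by exact_mod_cast hn
    nlinarith
  exact lt_of_mul_lt_mul_left this (le_of_lt hm')

/-- the position (in `[0, m+n)`) of the `k`-th right-step of the path of `x`. -/
noncomputable def vN (x : CSeq m n) (k : ℕ) : ℕ := k + (dZ x k).toNat

lemma vN_strictMono (hm : 0 < m) (x : CSeq m n) : StrictMono (vN x) := by
  intro k l hkl
  have h1 := dZ_mono hm x (le_of_lt hkl)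
  have h2 := dZ_nonneg hm x k
  simp only [vN]
  omega

lemma vN_lt (hm : 0 < m) (hn : 0 < n) (x : CSeq m n) {k : ℕ} (hk : k < m) : vN x k < m + n := by
  have h1 := dZ_lt hm hn x hk
  have h2 := dZ_nonneg hm x k
  simp only [vN]
  omega

lemma vN_spec (hm : 0 < m) (x : CSeq m n) (k : ℕ) :
    (m:ℤ) * vN x k = (k:ℤ) * (m+n) - x.c k := by
  have h1 := dZ_spec hm x k
  have h2 := dZ_nonneg hm x k
  simp only [vN]
  push_cast [Int.toNat_of_nonneg h2]
  linarith

noncomputable def wordOf (m n : ℕ) (x : CSeq m n) : Finset (ZMod (m+n)) :=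
  (Finset.range m).image (fun k => ((vN x k : ℕ) : ZMod (m+n)))

lemma card_wordOf (hm : 0 < m) (hn : 0 < n) (x : CSeq m n) : (wordOf m n x).card = m := by
  have hN : 0 < m + n := by omega
  haveI : NeZero (m+n) := ⟨hN.ne'⟩
  rw [wordOf, Finset.card_image_of_injOn, Finset.card_range]
  intro k hk l hl hkl
  rw [Finset.mem_coe, Finset.mem_range] at hk hl
  have e1 := congrArg ZMod.val hkl
  rw [ZMod.val_cast_of_lt (vN_lt hm hn x hk), ZMod.val_cast_of_lt (vN_lt hm hn x hl)] at e1
  exact (vN_strictMono hm x).injective e1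

lemma Pcnt_wordOf (hm : 0 < m) (hn : 0 < n) (x : CSeq m n) {j : ℕ} (hj : j ≤ m + n) :
    Pcnt m n (wordOf m n x) j = ((Finset.range m).filter (fun k => vN x k < j)).card := by
  have hN : 0 < m + n := by omega
  haveI : NeZero (m+n) := ⟨hN.ne'⟩
  rw [Pcnt]
  apply Finset.card_nbij' (fun i => sInf {k | vN x k = i}) (fun k => vN x k)
  · -- maps filter(range j) into filter(range m)
    intro i hi
    simp only [Finset.mem_coe, Finset.mem_filter, Finset.mem_range] at hi ⊢
    obtain ⟨hij, his⟩ := hi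
    have hiN : i < m + n := lt_of_lt_of_le hij hj
    rw [wordOf, Finset.mem_image] at his
    obtain ⟨k, hk, hki⟩ := his
    rw [Finset.mem_range] at hk
    have e1 := congrArg ZMod.val hki
    rw [ZMod.val_cast_of_lt (vN_lt hm hn x hk), ZMod.val_cast_of_lt hiN] at e1
    have hne : {l | vN x l = i}.Nonempty := ⟨k, e1⟩
    have hmem := Nat.sInf_mem hne
    have hle : sInf {l | vN x l = i} ≤ k := Nat.sInf_le e1
    exact ⟨by omega, by rw [hmem]; omega⟩
  · -- other direction
    intro k hk
    simp only [Finset.mem_coe, Finset.mem_filter, Finset.mem_range] at hk ⊢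
    refine ⟨hk.2, ?_⟩
    rw [wordOf, Finset.mem_image]
    exact ⟨k, Finset.mem_range.mpr hk.1, rfl⟩
  · -- left inverse
    intro i hi
    simp only [Finset.mem_coe, Finset.mem_filter, Finset.mem_range] at hi
    obtain ⟨hij, his⟩ := hi
    have hiN : i < m + n := lt_of_lt_of_le hij hj
    rw [wordOf, Finset.mem_image] at his
    obtain ⟨k, hk, hki⟩ := his
    rw [Finset.mem_range] at hk
    have e1 := congrArg ZMod.val hki
    rw [ZMod.val_cast_of_lt (vN_lt hm hn x hk), ZMod.val_cast_of_lt hiN] at e1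
    exact Nat.sInf_mem (⟨k, Set.mem_setOf.mpr e1⟩ : {l | vN x l = i}.Nonempty)
  · -- right inverse
    intro k hk
    simp only [Finset.mem_coe, Finset.mem_filter, Finset.mem_range] at hk
    have h1 := Nat.sInf_mem (⟨k, Set.mem_setOf.mpr rfl⟩ : {l | vN x l = vN x k}.Nonempty)
    exact (vN_strictMono hm x).injective h1

lemma goodW_wordOf (hm : 0 < m) (hn : 0 < n) (x : CSeq m n) : GoodW m n (wordOf m n x) := by
  intro j hj
  rw [Pcnt_wordOf hm hn x hj]
  set q := ((Finset.range m).filter (fun k => vN x k < j)).card with hq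
  rcases lt_or_ge q m with hqm | hqm
  · -- vN x q ≥ j
    have hvq : j ≤ vN x q := by
      by_contra hcon
      push_neg at hcon
      have hsub : Finset.range (q+1) ⊆ (Finset.range m).filter (fun k => vN x k < j) := by
        intro k hk
        rw [Finset.mem_range] at hk
        rw [Finset.mem_filter, Finset.mem_range]
        have h1 : vN x k ≤ vN x q := (vN_strictMono hm x).monotone (by omega)
        exact ⟨by omega, by omega⟩
      have := Finset.card_le_card hsub
      rw [Finset.card_range] at this
      omega
    -- m * j ≤ m * vN x q = q*(m+n) - c q ≤ q * (m+n)
    have h1 := vN_spec hm x q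
    have h2 := x.nonneg q
    have key : (m:ℤ) * j ≤ (m+n : ℤ) * q := by
      have : (m:ℤ) * j ≤ (m:ℤ) * vN x q := by
        apply mul_le_mul_of_nonneg_left _ (by positivity)
        exact_mod_cast hvq
      linarith
    exact_mod_cast key
  · -- q = m (or ≥): m * j ≤ (m+n)*m ≤ (m+n)*q
    calc m * j ≤ m * (m+n) := Nat.mul_le_mul_left m hj
      _ = (m+n) * m := Nat.mul_comm _ _
      _ ≤ (m+n) * q := Nat.mul_le_mul_left _ hqm

end CardSM

namespace CardSM
variable {m n : ℕ}

def tN (m n : ℕ) (s : Finset (ZMod (m+n))) : Finset ℕ := s.image ZMod.val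

lemma card_tN (hm : 0 < m) (hn : 0 < n) {s : Finset (ZMod (m+n))} (hcard : s.card = m) :
    (tN m n s).card = m := by
  haveI : NeZero (m+n) := ⟨by omega⟩
  rw [tN, Finset.card_image_of_injective _ (ZMod.val_injective (m+n)), hcard]

lemma tN_lt (hm : 0 < m) (hn : 0 < n) {s : Finset (ZMod (m+n))} {i : ℕ} (hi : i ∈ tN m n s) :
    i < m + n := by
  haveI : NeZero (m+n) := ⟨by omega⟩
  rw [tN, Finset.mem_image] at hi
  obtain ⟨a, _, rfl⟩ := hi
  exact ZMod.val_lt a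

lemma mem_tN (hm : 0 < m) (hn : 0 < n) {s : Finset (ZMod (m+n))} {i : ℕ} (hi : i < m + n) :
    i ∈ tN m n s ↔ ((i:ℕ) : ZMod (m+n)) ∈ s := by
  haveI : NeZero (m+n) := ⟨by omega⟩
  rw [tN, Finset.mem_image]
  constructor
  · rintro ⟨a, ha, rfl⟩
    rwa [ZMod.natCast_zmod_val]
  · intro h
    exact ⟨_, h, ZMod.val_cast_of_lt hi⟩

noncomputable def uN (hm : 0 < m) (hn : 0 < n) (s : Finset (ZMod (m+n))) (hcard : s.card = m)
    (j : ℕ) : ℕ :=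
  (tN m n s).orderEmbOfFin (card_tN hm hn hcard) ⟨j % m, Nat.mod_lt _ hm⟩

lemma uN_mem (hm : 0 < m) (hn : 0 < n) {s : Finset (ZMod (m+n))} (hcard : s.card = m) (j : ℕ) :
    uN hm hn s hcard j ∈ tN m n s :=
  Finset.orderEmbOfFin_mem _ _ _

lemma uN_lt_N (hm : 0 < m) (hn : 0 < n) {s : Finset (ZMod (m+n))} (hcard : s.card = m) (j : ℕ) :
    uN hm hn s hcard j < m + n :=
  tN_lt hm hn (uN_mem hm hn hcard j)

lemma uN_per (hm : 0 < m) (hn : 0 < n) {s : Finset (ZMod (m+n))} (hcard : s.card = m) (j : ℕ) :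
    uN hm hn s hcard (j + m) = uN hm hn s hcard j := by
  simp [uN, Nat.add_mod_right]

lemma uN_strictMonoOn (hm : 0 < m) (hn : 0 < n) {s : Finset (ZMod (m+n))} (hcard : s.card = m)
    {a b : ℕ} (hab : a < b) (hb : b < m) : uN hm hn s hcard a < uN hm hn s hcard b := by
  apply ((tN m n s).orderEmbOfFin (card_tN hm hn hcard)).strictMono
  have ha : a % m = a := Nat.mod_eq_of_lt (by omega)
  have hb' : b % m = b := Nat.mod_eq_of_lt hb
  simp [Fin.lt_def, ha, hb', hab]

lemma mem_tN_iff_uN (hm : 0 < m) (hn : 0 < n) {s : Finset (ZMod (m+n))} (hcard : s.card = m)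
    {i : ℕ} : i ∈ tN m n s ↔ ∃ l < m, uN hm hn s hcard l = i := by
  constructor
  · intro hi
    have : i ∈ Set.range ((tN m n s).orderEmbOfFin (card_tN hm hn hcard)) := by
      rw [Finset.range_orderEmbOfFin]
      exact hi
    obtain ⟨⟨l, hl⟩, hli⟩ := this
    exact ⟨l, hl, by simpa [uN, Nat.mod_eq_of_lt hl] using hli⟩
  · rintro ⟨l, hl, rfl⟩
    exact uN_mem hm hn hcard l

lemma Pcnt_uN (hm : 0 < m) (hn : 0 < n) {s : Finset (ZMod (m+n))} (hcard : s.card = m)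
    {j : ℕ} (hj : j < m) : Pcnt m n s (uN hm hn s hcard j) = j := by
  haveI : NeZero (m+n) := ⟨by omega⟩
  set u := uN hm hn s hcard with hu
  have key : ((Finset.range (u j)).filter (fun i => ((i:ℕ) : ZMod (m+n)) ∈ s)).card
      = (Finset.range j).card := by
    apply Finset.card_nbij' (fun i => sInf {l | u l = i}) u
    · intro i hi
      simp only [Finset.mem_coe, Finset.mem_filter, Finset.mem_range] at hi ⊢
      obtain ⟨hij, his⟩ := hi
      have hiN : i < m + n := lt_trans hij (uN_lt_N hm hn hcard j)
      have hit : i ∈ tN m n s := (mem_tN hm hn hiN).mpr his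
      obtain ⟨l, hl, hli⟩ := (mem_tN_iff_uN hm hn hcard).mp hit
      have hmem := Nat.sInf_mem (⟨l, Set.mem_setOf.mpr hli⟩ : {l' | u l' = i}.Nonempty)
      have hle : sInf {l' | u l' = i} ≤ l := Nat.sInf_le (Set.mem_setOf.mpr hli)
      -- sInf < j since u (sInf) = i < u j
      by_contra hcon
      push_neg at hcon
      set l0 := sInf {l' | u l' = i}
      have hl0m : l0 < m := by omega
      have : u j ≤ u l0 := by
        rcases Nat.eq_or_lt_of_le hcon with h | h
        · rw [← h]
        · exact le_of_lt (uN_strictMonoOn hm hn hcard h hl0m)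
      rw [hmem] at this
      omega
    · intro l hl
      simp only [Finset.mem_coe, Finset.mem_range] at hl
      simp only [Finset.mem_coe, Finset.mem_filter, Finset.mem_range]
      have h1 : u l < u j := uN_strictMonoOn hm hn hcard hl hj
      refine ⟨h1, ?_⟩
      rw [← mem_tN hm hn (tN_lt hm hn (uN_mem hm hn hcard l))]
      exact uN_mem hm hn hcard l
    · intro i hi
      simp only [Finset.mem_coe, Finset.mem_filter, Finset.mem_range] at hi
      obtain ⟨hij, his⟩ := hi
      have hiN : i < m + n := lt_trans hij (uN_lt_N hm hn hcard j)
      have hit : i ∈ tN m n s := (mem_tN hm hn hiN).mpr his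
      obtain ⟨l, hl, hli⟩ := (mem_tN_iff_uN hm hn hcard).mp hit
      exact Nat.sInf_mem (⟨l, Set.mem_setOf.mpr hli⟩ : {l' | u l' = i}.Nonempty)
    · intro l hl
      simp only [Finset.mem_coe, Finset.mem_range] at hl
      have hmem := Nat.sInf_mem (⟨l, Set.mem_setOf.mpr rfl⟩ : {l' | u l' = u l}.Nonempty)
      have hle : sInf {l' | u l' = u l} ≤ l := Nat.sInf_le (Set.mem_setOf.mpr rfl)
      set l0 := sInf {l' | u l' = u l}
      rcases Nat.eq_or_lt_of_le hle with h | h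
      · exact h
      · exfalso
        have h2 : u l0 < u l := uN_strictMonoOn hm hn hcard h (by omega)
        have h3 : u l0 = u l := hmem
        omega
  rw [Pcnt, key, Finset.card_range]

lemma uN_zero (hm : 0 < m) (hn : 0 < n) {s : Finset (ZMod (m+n))} (hcard : s.card = m)
    (hgood : GoodW m n s) : uN hm hn s hcard 0 = 0 := by
  have h1 := hgood (uN hm hn s hcard 0) (le_of_lt (uN_lt_N hm hn hcard 0))
  rw [Pcnt_uN hm hn hcard hm] at h1
  simp only [Nat.mul_zero] at h1
  rcases Nat.mul_eq_zero.mp (Nat.le_zero.mp h1) with h | h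
  · omega
  · exact h

lemma uN_bound (hm : 0 < m) (hn : 0 < n) {s : Finset (ZMod (m+n))} (hcard : s.card = m)
    (hgood : GoodW m n s) {j : ℕ} (hj : j < m) : m * uN hm hn s hcard j ≤ (m+n) * j := by
  have h1 := hgood (uN hm hn s hcard j) (le_of_lt (uN_lt_N hm hn hcard j))
  rwa [Pcnt_uN hm hn hcard hj] at h1

end CardSM

namespace CardSM
variable {m n : ℕ}

noncomputable def cOf (hm : 0 < m) (hn : 0 < n) (s : Finset (ZMod (m+n))) (hcard : s.card = m)
    (hgood : GoodW m n s) : CSeq m n where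
  c k := ((k % m : ℕ) : ℤ) * (m+n) - m * uN hm hn s hcard (k % m)
  zero := by
    simp [Nat.zero_mod, uN_zero hm hn hcard hgood]
  nonneg k := by
    show (0:ℤ) ≤ ((k % m : ℕ) : ℤ) * (m+n) - m * uN hm hn s hcard (k % m)
    have h1 := uN_bound hm hn hcard hgood (Nat.mod_lt k hm)
    have h2 : ((m:ℤ)) * uN hm hn s hcard (k % m) ≤ ((k % m : ℕ) : ℤ) * (m+n) := by
      push_cast
      push_cast at h1
      linarith
    linarith
  step k := by
    show (((k+1) % m : ℕ) : ℤ) * (m+n) - m * uN hm hn s hcard ((k+1) % m)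
      ≤ ((k % m : ℕ) : ℤ) * (m+n) - m * uN hm hn s hcard (k % m) + n
    rcases Nat.lt_or_ge (k % m + 1) m with hlt | hge
    · have h1m : 1 % m = 1 := Nat.mod_eq_of_lt (by omega)
      have e1 : (k+1) % m = k % m + 1 := by
        rw [Nat.add_mod, h1m, Nat.mod_eq_of_lt hlt]
      rw [e1]
      have hmono : uN hm hn s hcard (k % m) < uN hm hn s hcard (k % m + 1) :=
        uN_strictMonoOn hm hn hcard (Nat.lt_succ_self _) hlt
      have h3 : (uN hm hn s hcard (k % m) : ℤ) + 1 ≤ uN hm hn s hcard (k % m + 1) := by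
        exact_mod_cast hmono
      push_cast
      nlinarith [h3]
    · -- k % m = m - 1, wrap around
      have hkm : k % m = m - 1 := by have := Nat.mod_lt k hm; omega
      have e1 : (k+1) % m = 0 := by
        rcases Nat.eq_or_lt_of_le hm with h1 | h1
        · rw [← h1, Nat.mod_one]
        · rw [Nat.add_mod, Nat.mod_eq_of_lt h1, hkm,
            show m - 1 + 1 = m by omega, Nat.mod_self]
      rw [e1]
      simp only [Nat.zero_mod, uN_zero hm hn hcard hgood, Nat.cast_zero, zero_mul, mul_zero,
        sub_zero]
      -- 0 ≤ c k + n, uses nonneg-type bound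
      have h1 := uN_bound hm hn hcard hgood (Nat.mod_lt k hm)
      have h2 : ((m:ℤ)) * uN hm hn s hcard (k % m) ≤ ((k % m : ℕ) : ℤ) * (m+n) := by
        push_cast; push_cast at h1; linarith
      have hn' : (0:ℤ) ≤ n := by positivity
      linarith
  per k := by
    show (((k+m) % m : ℕ) : ℤ) * (m+n) - m * uN hm hn s hcard ((k+m) % m)
      = ((k % m : ℕ) : ℤ) * (m+n) - m * uN hm hn s hcard (k % m)
    rw [Nat.add_mod_right]
  dvd k := by
    show (m:ℤ) ∣ ((k % m : ℕ) : ℤ) * (m+n) - m * uN hm hn s hcard (k % m) - k * n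
    refine ⟨((k % m : ℕ) : ℤ) - uN hm hn s hcard (k % m) - (k / m : ℕ) * n, ?_⟩
    have hk : (k : ℤ) = ((k % m : ℕ) : ℤ) + ((m:ℤ)) * ((k / m : ℕ) : ℤ) := by
      exact_mod_cast (Nat.mod_add_div k m).symm
    linear_combination (-(n:ℤ)) * hk

lemma vN_cOf (hm : 0 < m) (hn : 0 < n) (s : Finset (ZMod (m+n))) (hcard : s.card = m)
    (hgood : GoodW m n s) {k : ℕ} (hk : k < m) :
    vN (cOf hm hn s hcard hgood) k = uN hm hn s hcard k := by
  have h1 := vN_spec hm (cOf hm hn s hcard hgood) k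
  have e1 : (cOf hm hn s hcard hgood).c k = ((k % m : ℕ) : ℤ) * (m+n) - m * uN hm hn s hcard (k % m) := rfl
  rw [e1, Nat.mod_eq_of_lt hk] at h1
  have hm' : (m:ℤ) ≠ 0 := by positivity
  have : (m:ℤ) * vN (cOf hm hn s hcard hgood) k = (m:ℤ) * uN hm hn s hcard k := by
    push_cast at h1 ⊢
    linarith
  exact_mod_cast mul_left_cancel₀ hm' this

lemma wordOf_cOf (hm : 0 < m) (hn : 0 < n) (s : Finset (ZMod (m+n))) (hcard : s.card = m)
    (hgood : GoodW m n s) : wordOf m n (cOf hm hn s hcard hgood) = s := by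
  haveI : NeZero (m+n) := ⟨by omega⟩
  apply Finset.eq_of_subset_of_card_le
  · intro a ha
    rw [wordOf, Finset.mem_image] at ha
    obtain ⟨k, hk, hka⟩ := ha
    rw [Finset.mem_range] at hk
    rw [vN_cOf hm hn s hcard hgood hk] at hka
    rw [← hka, ← mem_tN hm hn (uN_lt_N hm hn hcard k)]
    exact uN_mem hm hn hcard k
  · rw [hcard, card_wordOf hm hn]

lemma cOf_wordOf (hm : 0 < m) (hn : 0 < n) (x : CSeq m n) :
    cOf hm hn (wordOf m n x) (card_wordOf hm hn x) (goodW_wordOf hm hn x) = x := by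
  haveI : NeZero (m+n) := ⟨by omega⟩
  have hfs : ∀ j : Fin m, vN x (j:ℕ) ∈ tN m n (wordOf m n x) := by
    intro j
    rw [mem_tN hm hn (vN_lt hm hn x j.2)]
    rw [wordOf, Finset.mem_image]
    exact ⟨j, Finset.mem_range.mpr j.2, rfl⟩
  have hmono : StrictMono (fun j : Fin m => vN x (j:ℕ)) := by
    intro a b hab
    exact vN_strictMono hm x (by exact_mod_cast hab)
  have huniq := Finset.orderEmbOfFin_unique
    (card_tN hm hn (card_wordOf hm hn x)) hfs hmono
  have huN : ∀ j : ℕ, uN hm hn (wordOf m n x) (card_wordOf hm hn x) j = vN x (j % m) := by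
    intro j
    rw [uN, ← huniq]
  ext k
  show ((k % m : ℕ) : ℤ) * (m+n) - m * uN hm hn (wordOf m n x) (card_wordOf hm hn x) (k % m) = x.c k
  rw [huN, Nat.mod_mod_of_dvd k (dvd_refl m)]
  have h1 := vN_spec hm x (k % m)
  have h2 : x.c (k % m) = x.c k := x.congr_mod (Nat.mod_modEq k m)
  push_cast at h1 ⊢
  linarith
end CardSM

namespace CardSM
variable {m n : ℕ}

noncomputable def equivWord (hm : 0 < m) (hn : 0 < n) :
    CSeq m n ≃ {s : Finset (ZMod (m+n)) // s.card = m ∧ GoodW m n s} where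
  toFun x := ⟨wordOf m n x, card_wordOf hm hn x, goodW_wordOf hm hn x⟩
  invFun s := cOf hm hn s.1 s.2.1 s.2.2
  left_inv x := cOf_wordOf hm hn x
  right_inv s := Subtype.ext (wordOf_cOf hm hn s.1 s.2.1 s.2.2)

end CardSM


/-- **Counting semimodules.** For coprime positive `m, n`, there are finitely many
0-normalized `Γ_{m,n}`-semimodules, and their number is the rational Catalan number
`(m+n-1)!/(m!·n!) = (m+n choose n)/(m+n)`. -/
theorem card_semimodules (m n : ℕ) (hm : 0 < m) (hn : 0 < n) (hmn : Nat.Coprime m n) :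
    {Δ : Set ℤ | IsSemimodule m n Δ}.Finite ∧
      Nat.card {Δ : Set ℤ | IsSemimodule m n Δ} =
        (m + n - 1).factorial / (m.factorial * n.factorial) ∧
      Nat.card {Δ : Set ℤ | IsSemimodule m n Δ} = (m + n).choose n / (m + n) := by

  classical
  obtain ⟨n', hn'⟩ := CardSM.exists_inv hm hmn
  haveI : NeZero (m+n) := ⟨by omega⟩
  have E : {Δ : Set ℤ // IsSemimodule m n Δ} ≃
      {s : Finset (ZMod (m+n)) // s.card = m ∧ CardSM.GoodW m n s} :=
    (CardSM.equivC hm hn hn').trans (CardSM.equivWord hm hn)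
  have hfin : {Δ : Set ℤ | IsSemimodule m n Δ}.Finite := by
    rw [← Set.finite_coe_iff]
    exact Finite.of_equiv _ E.symm
  set C := Nat.card {Δ : Set ℤ | IsSemimodule m n Δ} with hC
  have hcard1 : C = Nat.card {s : Finset (ZMod (m+n)) // s.card = m ∧ CardSM.GoodW m n s} :=
    Nat.card_congr E
  have hkey : C * (m + n) = (m+n).choose m := by
    rw [hcard1]
    exact CardSM.card_goodW hm hn hmn
  have hsymm : (m+n).choose m = (m+n).choose n := by
    have := Nat.choose_symm (Nat.le_add_left n m)
    rwa [Nat.add_sub_cancel] at this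
  have hkeyn : C * (m + n) = (m+n).choose n := hsymm ▸ hkey
  have hN : 0 < m + n := by omega
  refine ⟨hfin, ?_, ?_⟩
  · -- factorial form
    have hF : (m+n).choose n * n.factorial * (m+n-n).factorial = (m+n).factorial :=
      Nat.choose_mul_factorial_mul_factorial (Nat.le_add_left n m)
    rw [Nat.add_sub_cancel] at hF
    have hP : (m+n) * (m+n-1).factorial = (m+n).factorial := Nat.mul_factorial_pred hN.ne'
    have hmain : (m+n) * (C * (m.factorial * n.factorial)) = (m+n) * (m+n-1).factorial := by
      calc (m+n) * (C * (m.factorial * n.factorial))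
          = (C * (m+n)) * (n.factorial * m.factorial) := by ring
        _ = ((m+n).choose n) * (n.factorial * m.factorial) := by rw [hkeyn]
        _ = (m+n).choose n * n.factorial * m.factorial := by ring
        _ = (m+n).factorial := hF
        _ = (m+n) * (m+n-1).factorial := hP.symm
    have hcc : C * (m.factorial * n.factorial) = (m+n-1).factorial :=
      Nat.eq_of_mul_eq_mul_left hN hmain
    have hpos : 0 < m.factorial * n.factorial := by positivity
    rw [← hcc, Nat.mul_div_cancel _ hpos]
  · exact (Nat.div_eq_of_eq_mul_left hN hkeyn.symm).symm
end

section
/- Let n and k be positive integers, m = kn + 1, and let Δ be a 0-normalized Γ_{m,n}-semimodule. If a is a (kn+1)-generator of Δ (a ∈ Δ, a − (kn+1) ∉ Δ), then for every integer l ≥ 1 the interval [a − l(kn+1), a − lkn − 1] has empty intersection with Δ. -/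
lemma semimodule_add (m n : ℕ) (Δ : Set ℤ) (h : IsSemimodule m n Δ) :
    ∀ (u v : ℕ) (x : ℤ), x ∈ Δ → x + u * m + v * n ∈ Δ := by
  obtain ⟨-, -, hm, hn⟩ := h
  intro u
  induction u with
  | zero =>
      intro v
      induction v with
      | zero => intro x hx; simpa using hx
      | succ v ih =>
          intro x hx
          have := hn _ (ih x hx)
          convert this using 1
          push_cast; ring
  | succ u ih =>
      intro v x hx
      have := hm _ (ih v x hx)
      convert this using 1
      push_cast; ring

/-- For `m = kn+1`: if `a` is a `(kn+1)`-generator of `Δ`, then for every `l ≥ 1` the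
interval `[a - l(kn+1), a - lkn - 1]` is disjoint from `Δ`. -/
theorem gaps_knp1 (n k : ℕ) (hn : 0 < n) (hk : 0 < k)
    (Δ : Set ℤ) (hΔ : IsSemimodule (k * n + 1) n Δ)
    (a : ℤ) (ha : a ∈ Δ) (ha' : a - (k * n + 1) ∉ Δ)
    (l : ℕ) (hl : 1 ≤ l) (y : ℤ)
    (hy₁ : a - l * (k * n + 1) ≤ y) (hy₂ : y ≤ a - l * (k * n) - 1) :
    y ∉ Δ := by
  intro hy
  set j : ℤ := y - (a - l * (k * n + 1)) with hj
  have hj0 : 0 ≤ j := by omega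
  have hjl : j ≤ (l : ℤ) - 1 := by
    have : (1:ℤ) ≤ l := by exact_mod_cast hl
    nlinarith
  set u : ℕ := ((l : ℤ) - 1 - j).toNat with hu
  set v : ℕ := j.toNat * k with hv
  have huval : (u : ℤ) = (l : ℤ) - 1 - j := Int.toNat_of_nonneg (by omega)
  have hvval : (v : ℤ) = j * k := by
    have : ((j.toNat : ℤ)) = j := Int.toNat_of_nonneg hj0
    push_cast [hv]
    rw [this]
  have hmem := semimodule_add (k * n + 1) n Δ hΔ u v y hy
  have heq : y + u * ((k * n + 1 : ℕ) : ℤ) + v * n = a - (k * n + 1) := by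
    push_cast
    rw [huval, hvval]
    have : y = a - l * (k * n + 1) + j := by omega
    rw [this]; ring
  rw [heq] at hmem
  exact ha' hmem
end

section
/- Let n and k be positive integers, m = kn + 1, and let Δ be a 0-normalized Γ_{m,n}-semimodule. If a and a′ are (kn+1)-generators of Δ with a ≤ a′, then ⌈(a′ − a)/(kn+1)⌉ = ⌈(⌈(a′ − a)/n⌉)/k⌉. -/
/-- Closure of a semimodule under adding `u*M + v*N`. -/
lemma semimodule_mem_add {Δ : Set ℤ} {M N : ℕ}
    (hM : ∀ x ∈ Δ, x + M ∈ Δ) (hN : ∀ x ∈ Δ, x + N ∈ Δ) :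
    ∀ (u v : ℕ) (x : ℤ), x ∈ Δ → x + u * M + v * N ∈ Δ := by
  have h1 : ∀ (u : ℕ) (x : ℤ), x ∈ Δ → x + u * M ∈ Δ := by
    intro u
    induction u with
    | zero => intro x hx; simpa using hx
    | succ w ih =>
      intro x hx
      have h := hM _ (ih x hx)
      have e : x + ((w : ℤ) + 1) * M = x + w * M + (M : ℤ) := by ring
      push_cast
      rw [e]
      exact h
  have h2 : ∀ (v : ℕ) (x : ℤ), x ∈ Δ → x + v * N ∈ Δ := by
    intro v
    induction v with
    | zero => intro x hx; simpa using hx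
    | succ w ih =>
      intro x hx
      have h := hN _ (ih x hx)
      have e : x + ((w : ℤ) + 1) * N = x + w * N + (N : ℤ) := by ring
      push_cast
      rw [e]
      exact h
  intro u v x hx
  exact h2 v _ (h1 u x hx)

/-- Key arithmetic lemma: if `q*(kn+1)+r - (kn+1)` is not in the semigroup
generated by `kn+1` and `n`, then `q + r ≤ kn`. -/
lemma key_arith (n k q r : ℤ) (hn : 0 < n) (hk : 0 < k) (hq : 0 ≤ q)
    (hr1 : 1 ≤ r) (hr2 : r ≤ k * n)
    (hnot : ∀ u v : ℤ, 0 ≤ u → 0 ≤ v →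
      q * (k * n + 1) + r - (k * n + 1) ≠ u * (k * n + 1) + v * n) :
    q + r ≤ k * n := by
  by_contra hcon
  push_neg at hcon
  set s : ℤ := (-r) % n with hs
  have hs0 : 0 ≤ s := Int.emod_nonneg _ (by omega)
  have hsn : s < n := Int.emod_lt_of_pos _ hn
  have hdvd1 : n ∣ s + r := by
    refine ⟨-((-r) / n), ?_⟩
    have h1 := Int.emod_add_mul_ediv (-r) n
    linear_combination h1
  have hs_le : s ≤ q - 1 := by
    obtain ⟨w, hw⟩ := hdvd1
    obtain ⟨t, ht⟩ : n ∣ (k * n - r - s) := ⟨k - w, by linear_combination -hw⟩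
    have ht0 : 0 ≤ t := by
      by_contra htc
      push_neg at htc
      have : t ≤ -1 := by omega
      nlinarith
    nlinarith
  have hdvd2 : n ∣ s * (k * n + 1) + r := by
    obtain ⟨w, hw⟩ := hdvd1
    exact ⟨s * k + w, by linear_combination hw⟩
  obtain ⟨v, hv⟩ := hdvd2
  have hv0 : 0 ≤ v := by
    by_contra hvc
    push_neg at hvc
    have : v ≤ -1 := by omega
    nlinarith
  exact hnot (q - 1 - s) v (by omega) hv0 (by linear_combination hv)

/-- For `m = kn+1` and `(kn+1)`-generators `a ≤ a'` of `Δ`: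
`⌈(a'-a)/(kn+1)⌉ = ⌈⌈(a'-a)/n⌉/k⌉`. -/
theorem ceil_div_generators_knp1 (n k : ℕ) (hn : 0 < n) (hk : 0 < k)
    (Δ : Set ℤ) (hΔ : IsSemimodule (k * n + 1) n Δ)
    (a a' : ℤ) (ha : a ∈ Δ) (ha' : a - (k * n + 1) ∉ Δ)
    (hb : a' ∈ Δ) (hb' : a' - (k * n + 1) ∉ Δ) (hle : a ≤ a') :
    ⌈((a' - a : ℚ)) / (k * n + 1)⌉ = ⌈((⌈((a' - a : ℚ)) / n⌉ : ℚ)) / k⌉ := by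
  obtain ⟨hpos, h0, hmc, hnc⟩ := hΔ
  set M : ℤ := (k : ℤ) * n + 1 with hM
  have hMpos : 0 < M := by positivity
  set q : ℤ := (a' - a) / M with hqdef
  set r : ℤ := (a' - a) % M with hrdef
  have hqr : a' - a = M * q + r := (Int.mul_ediv_add_emod _ _).symm
  have hr0 : 0 ≤ r := Int.emod_nonneg _ (ne_of_gt hMpos)
  have hrM : r < M := Int.emod_lt_of_pos _ hMpos
  have hq0 : 0 ≤ q := Int.ediv_nonneg (by linarith) (le_of_lt hMpos)
  -- a' - a - M is not in the semigroup
  have hnot : ∀ u v : ℤ, 0 ≤ u → 0 ≤ v → a' - a - M ≠ u * M + v * n := by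
    intro u v hu hv heq
    apply hb'
    have hmem := semimodule_mem_add hmc hnc u.toNat v.toNat a ha
    have hcast : a' - ((k : ℤ) * n + 1) =
        a + (u.toNat : ℤ) * ((k * n + 1 : ℕ) : ℤ) + (v.toNat : ℤ) * (n : ℤ) := by
      rw [Int.toNat_of_nonneg hu, Int.toNat_of_nonneg hv]
      push_cast
      simp only [hM] at heq
      linarith [heq]
    rw [hcast]
    exact hmem
  by_cases hr : r = 0
  · -- then q = 0, so a' = a and both sides are 0
    have hq : q = 0 := by
      by_contra hqne
      have hq1 : 1 ≤ q := by omega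
      exact hnot (q - 1) 0 (by omega) le_rfl (by rw [hqr, hr]; ring)
    have hda : a' - a = 0 := by rw [hqr, hq, hr]; ring
    have hdQ : (a' : ℚ) - a = 0 := by exact_mod_cast hda
    rw [hdQ]
    simp
  · have hr1 : 1 ≤ r := by omega
    have hsum : q + r ≤ (k : ℤ) * n := by
      apply key_arith (n : ℤ) (k : ℤ) q r (by exact_mod_cast hn) (by exact_mod_cast hk)
        hq0 hr1 (by omega)
      intro u v hu hv heq
      exact hnot u v hu hv (by rw [hqr]; simp only [hM]; linarith [heq])
    -- rational facts
    have hnQ : (0 : ℚ) < (n : ℚ) := by exact_mod_cast hn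
    have hkQ : (0 : ℚ) < (k : ℚ) := by exact_mod_cast hk
    have hMQ : (0 : ℚ) < (k : ℚ) * n + 1 := by positivity
    have hcast : (a' : ℚ) - a = ((k : ℚ) * n + 1) * q + r := by
      have hqr2 : a' - a = ((k : ℤ) * n + 1) * q + r := by
        simp only [hM] at hqr; linarith [hqr]
      have h := congrArg (fun z : ℤ => (z : ℚ)) hqr2
      push_cast at h
      linear_combination h
    have hr1Q : (1 : ℚ) ≤ (r : ℚ) := by exact_mod_cast hr1
    have hrMQ : (r : ℚ) < (k : ℚ) * n + 1 := by exact_mod_cast hrM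
    have hq0Q : (0 : ℚ) ≤ (q : ℚ) := by exact_mod_cast hq0
    have hsumQ : (q : ℚ) + r ≤ (k : ℚ) * n := by exact_mod_cast hsum
    -- LHS = q + 1
    have hL : ⌈((a' : ℚ) - a) / ((k : ℚ) * n + 1)⌉ = q + 1 := by
      rw [Int.ceil_eq_iff]
      constructor
      · rw [lt_div_iff₀ hMQ]
        push_cast
        nlinarith [hcast, hr1Q]
      · rw [div_le_iff₀ hMQ]
        push_cast
        nlinarith [hcast, hrMQ]
    -- inner ceiling
    set c : ℤ := ⌈((q : ℚ) + r) / n⌉ with hcdef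
    have hc1 : 1 ≤ c := by
      have hp : (0 : ℚ) < ((q : ℚ) + r) / n := by
        apply div_pos (by linarith) hnQ
      have := Int.ceil_pos.mpr hp
      omega
    have hck : c ≤ k := by
      rw [hcdef]
      rw [Int.ceil_le, div_le_iff₀ hnQ]
      push_cast
      linarith
    have hInner : ⌈((a' : ℚ) - a) / n⌉ = c + q * k := by
      have hsplit : ((a' : ℚ) - a) / n = ((q : ℚ) + r) / n + ((q * k : ℤ) : ℚ) := by
        field_simp
        push_cast
        linear_combination hcast
      rw [hsplit, Int.ceil_add_intCast, hcdef]
    rw [hL, hInner]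
    have hsplit2 : ((c + q * k : ℤ) : ℚ) / k = ((c : ℚ)) / k + ((q : ℤ) : ℚ) := by
      push_cast
      field_simp
    rw [hsplit2, Int.ceil_add_intCast]
    have hcc : ⌈((c : ℚ)) / (k : ℚ)⌉ = 1 := by
      rw [Int.ceil_eq_iff]
      constructor
      · push_cast
        have hcp : (0 : ℚ) < (c : ℚ) := by exact_mod_cast (show (0:ℤ) < c by omega)
        have := div_pos hcp hkQ
        linarith
      · rw [div_le_iff₀ hkQ]
        push_cast
        have hckQ : (c : ℚ) ≤ (k : ℚ) := by exact_mod_cast hck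
        linarith
    rw [hcc]
    ring
end

section
/- Let n and k be positive integers with kn ≥ 2, m = kn − 1, and let Δ be a 0-normalized Γ_{m,n}-semimodule. If x ∈ Δ and x − αn + 1 ∉ Δ for some α ∈ {0, 1, …, k}, then x − (kn−1) ∉ Δ, i.e. x is a (kn−1)-generator of Δ. -/
lemma add_mul_n_mem (n : ℕ) (Δ : Set ℤ) (hn : ∀ x ∈ Δ, x + n ∈ Δ)
    (y : ℤ) (hy : y ∈ Δ) (j : ℕ) : y + j * n ∈ Δ := by
  induction j with
  | zero => simpa using hy
  | succ j ih =>
    have := hn _ ih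
    have heq : y + (j + 1 : ℕ) * n = y + j * n + n := by push_cast; ring
    rwa [heq]

/-- For `m = kn-1`: if `x ∈ Δ` and `x - αn + 1 ∉ Δ` for some `0 ≤ α ≤ k`, then `x` is a
`(kn-1)`-generator of `Δ`. -/
theorem generator_of_gap_knm1 (n k : ℕ) (hn : 0 < n) (hk : 0 < k) (hkn : 2 ≤ k * n)
    (Δ : Set ℤ) (hΔ : IsSemimodule (k * n - 1) n Δ)
    (x : ℤ) (hx : x ∈ Δ) (α : ℕ) (hα : α ≤ k) (hgap : x - α * n + 1 ∉ Δ) :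
    x - ((k * n : ℤ) - 1) ∉ Δ := by
  intro h
  obtain ⟨-, -, -, hclosen⟩ := hΔ
  have := add_mul_n_mem n Δ hclosen _ h (k - α)
  have heq : x - ((k * n : ℤ) - 1) + ((k - α : ℕ) : ℤ) * n = x - α * n + 1 := by
    have : ((k - α : ℕ) : ℤ) = (k : ℤ) - α := by
      exact_mod_cast Int.ofNat_sub hα
    rw [this]; ring
  rw [heq] at this
  exact hgap this
end

section
/- Let n and k be positive integers with kn ≥ 2, m = kn − 1, and let Δ be a 0-normalized Γ_{m,n}-semimodule. If a is a (kn−1)-generator of Δ (a ∈ Δ, a − (kn−1) ∉ Δ), then for every integer l ≥ 1 the interval [a − lkn + 1, a − l(kn−1)] has empty intersection with Δ. -/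
lemma semimodule_closure (m n : ℕ) (Δ : Set ℤ) (h : IsSemimodule m n Δ)
    (x : ℤ) (hx : x ∈ Δ) (u v : ℕ) : x + u * m + v * n ∈ Δ := by
  obtain ⟨-, -, hm, hn⟩ := h
  induction v with
  | zero =>
    simp only [Nat.cast_zero, zero_mul, add_zero]
    induction u with
    | zero => simpa using hx
    | succ u ih =>
      have := hm _ ih
      convert this using 1
      push_cast; ring
  | succ v ih =>
    have := hn _ ih
    convert this using 1
    push_cast; ring

/-- For `m = kn-1`: if `a` is a `(kn-1)`-generator of `Δ`, then for every `l ≥ 1` the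
interval `[a - lkn + 1, a - l(kn-1)]` is disjoint from `Δ`. -/
theorem gaps_knm1 (n k : ℕ) (hn : 0 < n) (hk : 0 < k) (hkn : 2 ≤ k * n)
    (Δ : Set ℤ) (hΔ : IsSemimodule (k * n - 1) n Δ)
    (a : ℤ) (ha : a ∈ Δ) (ha' : a - ((k * n : ℤ) - 1) ∉ Δ)
    (l : ℕ) (hl : 1 ≤ l) (y : ℤ)
    (hy₁ : a - l * (k * n) + 1 ≤ y) (hy₂ : y ≤ a - l * ((k * n : ℤ) - 1)) :
    y ∉ Δ := by
  intro hyΔ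
  set j : ℤ := y - a + l * (k * n) with hj_def
  have hj1 : 1 ≤ j := by omega
  have hj2 : j ≤ l := by nlinarith [hy₂]
  set u : ℕ := (j - 1).toNat with hu_def
  set v : ℕ := ((k : ℤ) * (l - j)).toNat with hv_def
  have hu : (u : ℤ) = j - 1 := Int.toNat_of_nonneg (by omega)
  have hv : (v : ℤ) = (k : ℤ) * (l - j) :=
    Int.toNat_of_nonneg (mul_nonneg (by positivity) (by omega))
  have hmcast : ((k * n - 1 : ℕ) : ℤ) = (k * n : ℤ) - 1 := by
    push_cast [Nat.cast_sub (by omega : 1 ≤ k * n)]; ring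
  have key : a - ((k * n : ℤ) - 1) = y + u * ((k * n - 1 : ℕ) : ℤ) + v * n := by
    rw [hmcast, hu, hv, hj_def]; push_cast; ring
  have := semimodule_closure _ _ _ hΔ y hyΔ u v
  rw [← key] at this
  exact ha' this
end
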